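/- arXiv:1411.7739 — 4 statements merged into one kernel-verified Lean document; each statement's English description precedes it below -/
import Mathlib

section
/- (Reflection positivity of the torus Gibbs measure.) Let L₁, L₂ be positive integers, J > 0, h > 0, N ≥ 2 even, and β ≥ 0. Fix i ∈ {1,2} and an integer n, set c = 2nL_i + L_i − 1, let ϑ : 𝕋_N → 𝕋_N be the reflection replacing the i-th coordinate t_i by (c − t_i) mod NL_i and leaving the other coordinate unchanged (ϑ is an involution and satisfies h(ϑt) = h(t)), and let 𝕋ˡ = {t ∈ 𝕋_N : (2t_i − c) mod 2NL_i ≤ NL_i}. Then for all functions f, g : {−1,+1}^{𝕋_N} → ℝ that depend only on the restriction of the configuration to 𝕋ˡ: (i) Σ_σ f(σ)·g(σ∘ϑ)·e^{−βH_N(σ)} = Σ_σ g(σ)·f(σ∘ϑ)·e^{−βH_N(σ)}, and (ii) Σ_σ f(σ)·f(σ∘ϑ)·e^{−βH_N(σ)} ≥ 0, where (σ∘ϑ)(t) = σ(ϑ(t)). -/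
/-- The ±1 spin value of a Boolean spin configuration on the torus `(ℤ/aℤ) × (ℤ/bℤ)`. -/
noncomputable def spin {a b : ℕ} (σ : ZMod a × ZMod b → Bool) (t : ZMod a × ZMod b) : ℝ :=
  if σ t then 1 else -1

/-- Torus Hamiltonian with coupling `J` and external field `hf`:
`H(σ) = −J Σ_t [σ(t)σ(t+e₁) + σ(t)σ(t+e₂)] − Σ_t hf(t)σ(t)`. -/
noncomputable def ham {a b : ℕ} [NeZero a] [NeZero b] (J : ℝ)
    (hf : ZMod a × ZMod b → ℝ) (σ : ZMod a × ZMod b → Bool) : ℝ :=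
  -J * ∑ t, (spin σ t * spin σ (t + (1, 0)) + spin σ t * spin σ (t + (0, 1)))
    - ∑ t, hf t * spin σ t

/-- Cell-board external field on the torus, via canonical representatives:
`+h` if `⌊t₁/L₁⌋ + ⌊t₂/L₂⌋` is even, `−h` otherwise. -/
noncomputable def cellField {a b : ℕ} (L1 L2 : ℕ) (h : ℝ) (t : ZMod a × ZMod b) : ℝ :=
  if Even (t.1.val / L1 + t.2.val / L2) then h else -h

/-- Partition function `Z(β) = Σ_σ e^{−βH(σ)}`. -/
noncomputable def Zfun {a b : ℕ} [NeZero a] [NeZero b] (β J : ℝ)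
    (hf : ZMod a × ZMod b → ℝ) : ℝ :=
  ∑ σ : ZMod a × ZMod b → Bool, Real.exp (-β * ham J hf σ)

/-- Gibbs probability of a (finite) set of configurations. -/
noncomputable def gibbs {a b : ℕ} [NeZero a] [NeZero b] (β J : ℝ)
    (hf : ZMod a × ZMod b → ℝ) (E : Finset (ZMod a × ZMod b → Bool)) : ℝ :=
  (∑ σ ∈ E, Real.exp (-β * ham J hf σ)) / Zfun β J hf

/-- The reflection `ϑ` of the torus `𝕋_N = (ℤ/NL₁ℤ) × (ℤ/NL₂ℤ)` with respect to the
line `t_i = n·L_i + (L_i−1)/2` (`i ∈ {1,2}`, `n ∈ ℤ`): the `i`-th coordinate `t_i` is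
replaced by `(2nL_i + L_i − 1) − t_i` (mod `N·L_i`) and the other one is unchanged. -/
def reflMap (L1 L2 N : ℕ) (i : Fin 2) (n : ℤ) :
    ZMod (N * L1) × ZMod (N * L2) → ZMod (N * L1) × ZMod (N * L2) :=
  fun t =>
    if i = 0 then (((2 * n * L1 + L1 - 1 : ℤ) : ZMod (N * L1)) - t.1, t.2)
    else (t.1, ((2 * n * L2 + L2 - 1 : ℤ) : ZMod (N * L2)) - t.2)

/-- The left half `𝕋ˡ = {t ∈ 𝕋_N : (2t_i − c) mod 2NL_i ≤ NL_i}`, `c = 2nL_i + L_i − 1`. -/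
def leftHalf (L1 L2 N : ℕ) (i : Fin 2) (n : ℤ) : Set (ZMod (N * L1) × ZMod (N * L2)) :=
  {t | if i = 0
    then (2 * (t.1.val : ℤ) - (2 * n * L1 + L1 - 1)) % (2 * ((N : ℤ) * L1)) ≤ (N : ℤ) * L1
    else (2 * (t.2.val : ℤ) - (2 * n * L2 + L2 - 1)) % (2 * ((N : ℤ) * L2)) ≤ (N : ℤ) * L2}


namespace RP
set_option linter.unusedSectionVars false
set_option linter.unusedVariables false

set_option linter.unusedSectionVars false

/-- integer "position" of `x` relative to the reflection center, in `[0, 2a)`. -/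
def mfun (a : ℕ) (c : ℤ) (x : ZMod a) : ℤ := (2 * (x.val : ℤ) - c) % (2 * a)

/-- 1D reflection. -/
def rr (a : ℕ) (c : ℤ) (x : ZMod a) : ZMod a := (c : ZMod a) - x

lemma int_eq_zero_of_dvd_of_bounds {A s : ℤ} (hA : 0 < A) (h : 2*A ∣ s)
    (h0 : -(2*A) < s) (h1 : s < 2*A) : s = 0 := by
  obtain ⟨k, hk⟩ := h
  have hk0 : 0 ≤ k := by nlinarith
  have hk1 : k < 1 := by nlinarith
  have : k = 0 := by omega
  simp [this] at hk; omega

lemma int_dvd_sum_bound {A s : ℤ} (hA : 0 < A) (h : 2*A ∣ s) (h0 : 0 ≤ s)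
    (h1 : s < 4*A) : s = 0 ∨ s = 2*A := by
  obtain ⟨k, hk⟩ := h
  have hk0 : 0 ≤ k := by nlinarith
  have hk1 : k < 2 := by nlinarith
  have : k = 0 ∨ k = 1 := by omega
  rcases this with h | h <;> simp [h] at hk <;> omega

variable {a : ℕ} [NeZero a] (c : ℤ)

lemma apos : 0 < (a : ℤ) := by exact_mod_cast Nat.pos_of_ne_zero (NeZero.ne a)

lemma mfun_nonneg (x : ZMod a) : 0 ≤ mfun a c x :=
  Int.emod_nonneg _ (by have := apos (a := a); positivity)

lemma mfun_lt (x : ZMod a) : mfun a c x < 2 * a :=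
  Int.emod_lt_of_pos _ (by have := apos (a := a); positivity)

lemma mfun_modeq (x : ZMod a) : mfun a c x ≡ 2 * (x.val : ℤ) - c [ZMOD (2 * a)] := by
  unfold mfun
  exact Int.emod_emod_of_dvd _ dvd_rfl

lemma eq_of_modeq_of_bounds {p q : ℤ} (hp0 : 0 ≤ p) (hp1 : p < 2 * a)
    (hq0 : 0 ≤ q) (hq1 : q < 2 * a) (h : p ≡ q [ZMOD (2 * a)]) : p = q := by
  have h' : (2 * (a : ℤ)) ∣ (p - q) := Int.ModEq.dvd h.symm
  have := int_eq_zero_of_dvd_of_bounds (apos (a := a)) h' (by omega) (by omega)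
  omega

lemma rr_invol (x : ZMod a) : rr a c (rr a c x) = x := by
  unfold rr; ring

lemma val_intCast_eq (z : ℤ) : ((( z : ZMod a)).val : ℤ) = z % a := ZMod.val_intCast z

lemma natCast_val_self (x : ZMod a) : (((x.val : ℕ) : ZMod a)) = x :=
  ZMod.natCast_rightInverse x

lemma intCast_val (x : ZMod a) : (((x.val : ℤ) : ZMod a)) = x := by
  push_cast
  exact natCast_val_self x

lemma rr_val_modeq (x : ZMod a) :
    ((rr a c x).val : ℤ) ≡ c - x.val [ZMOD (a : ℤ)] := by
  have : rr a c x = ((c - (x.val : ℤ) : ℤ) : ZMod a) := by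
    unfold rr
    push_cast
    rw [natCast_val_self]
  rw [this, val_intCast_eq]
  exact Int.emod_emod_of_dvd _ dvd_rfl

lemma mfun_rr_modeq (x : ZMod a) :
    mfun a c (rr a c x) ≡ - mfun a c x [ZMOD (2 * a)] := by
  have h1 := mfun_modeq c (rr a c x)
  have h2 : (2:ℤ) * ((rr a c x).val : ℤ) ≡ 2 * (c - x.val) [ZMOD (2 * (a:ℤ))] :=
    (rr_val_modeq c x).mul_left'
  have h3 : (2 : ℤ) * ((rr a c x).val : ℤ) - c ≡ 2 * (c - x.val) - c [ZMOD (2*(a:ℤ))] :=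
    Int.ModEq.sub h2 (Int.ModEq.refl c)
  have h4 : (2 : ℤ) * (c - x.val) - c = -(2 * x.val - c) := by ring
  have h5 := (mfun_modeq c x).neg
  exact h1.trans (h3.trans (h4 ▸ (h5.symm)))

lemma mfun_add_one_modeq (x : ZMod a) :
    mfun a c (x + 1) ≡ mfun a c x + 2 [ZMOD (2 * a)] := by
  have hv : ((x + 1 : ZMod a)) = (((x.val : ℤ) + 1 : ℤ) : ZMod a) := by
    push_cast; rw [natCast_val_self]
  have h1 := mfun_modeq c (x + 1)
  have hval : (((x+1 : ZMod a)).val : ℤ) ≡ (x.val : ℤ) + 1 [ZMOD (a:ℤ)] := by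
    rw [hv, val_intCast_eq]
    exact Int.emod_emod_of_dvd _ dvd_rfl
  have h2 : (2:ℤ) * (((x+1 : ZMod a)).val : ℤ) ≡ 2 * ((x.val:ℤ) + 1) [ZMOD (2 * (a:ℤ))] :=
    hval.mul_left'
  have h3 : (2:ℤ) * (((x+1 : ZMod a)).val : ℤ) - c ≡ 2 * ((x.val:ℤ)+1) - c [ZMOD (2*(a:ℤ))] :=
    Int.ModEq.sub h2 (Int.ModEq.refl c)
  have h4 : (2:ℤ) * ((x.val:ℤ)+1) - c = (2*(x.val:ℤ) - c) + 2 := by ring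
  have h5 := (mfun_modeq c x).add (Int.ModEq.refl 2)
  exact h1.trans (h3.trans (h4 ▸ h5.symm))

/-- if `a ∣ mfun x` then `x` is a fixed point of the reflection. -/
lemma rr_eq_self (x : ZMod a) (h : (a : ℤ) ∣ mfun a c x) : rr a c x = x := by
  have h1 : (2 * (a:ℤ)) ∣ (mfun a c x - (2 * x.val - c)) := Int.ModEq.dvd (mfun_modeq c x).symm
  have ha2 : (a:ℤ) ∣ 2*(a:ℤ) := ⟨2, by ring⟩
  have h1' := dvd_trans ha2 h1
  have h2 : (a : ℤ) ∣ c - 2 * x.val := by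
    obtain ⟨u, hu⟩ := h
    obtain ⟨w, hw⟩ := h1'
    exact ⟨w - u, by linear_combination hw - hu⟩
  have hz : (((c - 2 * (x.val:ℤ) : ℤ)) : ZMod a) = 0 :=
    (ZMod.intCast_zmod_eq_zero_iff_dvd _ a).mpr h2
  push_cast at hz
  rw [natCast_val_self] at hz
  unfold rr
  linear_combination hz

lemma rr_eq_add_one (x : ZMod a) (h : mfun a c x = a - 1 ∨ mfun a c x = 2*a - 1) :
    rr a c x = x + 1 := by
  obtain ⟨k, hk⟩ := Int.ModEq.dvd (mfun_modeq c x).symm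
  have h2 : (a : ℤ) ∣ c - 2 * x.val - 1 := by
    rcases h with h | h
    · exact ⟨2*k - 1, by rw [h] at hk; linear_combination hk⟩
    · exact ⟨2*k - 2, by rw [h] at hk; linear_combination hk⟩
  have hz : (((c - 2 * (x.val:ℤ) - 1 : ℤ)) : ZMod a) = 0 :=
    (ZMod.intCast_zmod_eq_zero_iff_dvd _ a).mpr h2
  push_cast at hz
  rw [natCast_val_self] at hz
  unfold rr
  linear_combination hz

lemma rr_eq_sub_one (x : ZMod a) (h : mfun a c x = 1) : rr a c x = x - 1 := by
  obtain ⟨k, hk⟩ := Int.ModEq.dvd (mfun_modeq c x).symm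
  have h2 : (a : ℤ) ∣ c - 2 * x.val + 1 := by
    exact ⟨2*k, by rw [h] at hk; linear_combination hk⟩
  have hz : (((c - 2 * (x.val:ℤ) + 1 : ℤ)) : ZMod a) = 0 :=
    (ZMod.intCast_zmod_eq_zero_iff_dvd _ a).mpr h2
  push_cast at hz
  rw [natCast_val_self] at hz
  unfold rr
  linear_combination hz

lemma mfun_rr_add (x : ZMod a) :
    mfun a c x + mfun a c (rr a c x) = 0 ∨ mfun a c x + mfun a c (rr a c x) = 2*a := by
  have h1 := mfun_rr_modeq c x
  have h2 : (2*(a:ℤ)) ∣ (mfun a c (rr a c x) + mfun a c x) := by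
    have hd := Int.ModEq.dvd h1.symm
    rw [sub_neg_eq_add] at hd
    exact hd
  have b1 := mfun_nonneg c x; have b2 := mfun_lt c x
  have b3 := mfun_nonneg c (rr a c x); have b4 := mfun_lt c (rr a c x)
  have := int_dvd_sum_bound (apos (a := a)) h2 (by omega) (by omega)
  omega

/-- cover -/
lemma mfun_cover (x : ZMod a) : mfun a c x ≤ a ∨ mfun a c (rr a c x) ≤ a := by
  have := mfun_rr_add c x
  have b1 := mfun_nonneg c x
  have b3 := mfun_nonneg c (rr a c x)
  omega

/-- separation -/
lemma rr_sep (x : ZMod a) (h1 : mfun a c x ≤ a) (h2 : mfun a c (rr a c x) ≤ a) :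
    rr a c x = x := by
  have hs := mfun_rr_add c x
  have b1 := mfun_nonneg c x
  have b3 := mfun_nonneg c (rr a c x)
  apply rr_eq_self
  rcases hs with hs | hs
  · exact ⟨0, by omega⟩
  · exact ⟨1, by omega⟩


section Abstract
variable {X : Type*} [Fintype X] [DecidableEq X]

/-- reconstruction of a configuration from its pieces -/
def recon (ϑ : X → X) (Lp : X → Prop) [DecidablePred Lp]
    (u : {t : X // Lp t ∧ ϑ t ≠ t} → Bool) (w : {t : X // ϑ t = t} → Bool)
    (v : {t : X // ¬ Lp t} → Bool) : X → Bool :=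
  fun t => if h2 : ϑ t = t then w ⟨t, h2⟩
    else if h : Lp t then u ⟨t, h, h2⟩ else v ⟨t, h⟩

lemma abstract_rp (ϑ : X → X) (hinv : ∀ t, ϑ (ϑ t) = t)
    (Lp : X → Prop) [DecidablePred Lp]
    (hcov : ∀ t, Lp t ∨ Lp (ϑ t))
    (hsep : ∀ t, Lp t → Lp (ϑ t) → ϑ t = t)
    (G : (X → Bool) → ℝ)
    (hG : ∀ σ σ', (∀ t, Lp t → σ t = σ' t) → G σ = G σ') :
    0 ≤ ∑ σ : X → Bool, G σ * G (σ ∘ ϑ) := by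
  classical
  set A := {t : X // Lp t ∧ ϑ t ≠ t} with hA
  set F := {t : X // ϑ t = t} with hF
  set B := {t : X // ¬ Lp t} with hB
  have hLpF : ∀ t : X, ϑ t = t → Lp t := by
    intro t ht
    rcases hcov t with h | h
    · exact h
    · rwa [ht] at h
  have hnotLp : ∀ t : X, Lp t → ϑ t ≠ t → ¬ Lp (ϑ t) := by
    intro t h1 h2 h3
    exact h2 (hsep t h1 h3)
  have hBA : ∀ t : X, ¬ Lp t → (Lp (ϑ t) ∧ ϑ (ϑ t) ≠ ϑ t) := by
    intro t ht
    have h1 : Lp (ϑ t) := (hcov t).resolve_left ht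
    refine ⟨h1, ?_⟩
    intro hfix
    rw [hinv t] at hfix
    exact ht (hfix ▸ h1)
  -- the equivalence between configurations and triples
  let e : (X → Bool) ≃ ((A → Bool) × (F → Bool) × (B → Bool)) :=
  { toFun := fun σ => (fun p => σ p.1, fun p => σ p.1, fun p => σ p.1)
    invFun := fun z => recon ϑ Lp z.1 z.2.1 z.2.2
    left_inv := by
      intro σ; funext t
      simp only [recon]
      split_ifs <;> rfl
    right_inv := by
      rintro ⟨u, w, v⟩
      refine Prod.ext ?_ (Prod.ext ?_ ?_) <;> funext p <;> rcases p with ⟨t, ht⟩ <;>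
        simp only [recon] <;> [skip; skip; skip]
      · rw [dif_neg ht.2, dif_pos ht.1]
      · rw [dif_pos ht]
      · rw [dif_neg (fun h2 => ht (hLpF t h2)), dif_neg ht] }
  let ebij : A ≃ B :=
  { toFun := fun p => ⟨ϑ p.1, hnotLp p.1 p.2.1 p.2.2⟩
    invFun := fun p => ⟨ϑ p.1, (hBA p.1 p.2)⟩
    left_inv := by rintro ⟨t, ht⟩; exact Subtype.ext (hinv t)
    right_inv := by rintro ⟨t, ht⟩; exact Subtype.ext (hinv t) }
  let pull : (B → Bool) → (A → Bool) := fun v p => v (ebij p)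
  let g : (F → Bool) → (A → Bool) → ℝ := fun w u => G (recon ϑ Lp u w (fun _ => false))
  have claim1 : ∀ u w v, G (recon ϑ Lp u w v) = g w u := by
    intro u w v
    apply hG
    intro t ht
    unfold recon
    split_ifs <;> rfl
  have claim2 : ∀ u w v, G ((recon ϑ Lp u w v) ∘ ϑ) = g w (pull v) := by
    intro u w v
    apply hG
    intro t ht
    by_cases h2 : ϑ t = t
    · show recon ϑ Lp u w v (ϑ t) = _
      rw [h2]
      unfold recon
      rw [dif_pos h2, dif_pos h2]
    · show recon ϑ Lp u w v (ϑ t) = _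
      unfold recon
      have hfix2 : ϑ (ϑ t) ≠ ϑ t := by
        intro hh; rw [hinv t] at hh; exact h2 hh.symm
      rw [dif_neg hfix2, dif_neg (hnotLp t ht h2), dif_neg h2, dif_pos ht]
      rfl
  -- rewrite the sum over the triple decomposition
  have hsum : ∑ σ : X → Bool, G σ * G (σ ∘ ϑ)
      = ∑ z : ((A → Bool) × (F → Bool) × (B → Bool)),
          g z.2.1 z.1 * g z.2.1 (pull z.2.2) := by
    rw [← Equiv.sum_comp e.symm (fun σ => G σ * G (σ ∘ ϑ))]
    refine Finset.sum_congr rfl ?_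
    rintro ⟨u, w, v⟩ -
    show G (recon ϑ Lp u w v) * G ((recon ϑ Lp u w v) ∘ ϑ) = _
    rw [claim1, claim2]
  rw [hsum]
  rw [Fintype.sum_prod_type]
  have hswap : ∀ w : F → Bool, ∑ v : B → Bool, g w (pull v) = ∑ u : A → Bool, g w u := by
    intro w
    let epull : (B → Bool) ≃ (A → Bool) := Equiv.arrowCongr ebij.symm (Equiv.refl Bool)
    have : ∀ v : B → Bool, g w (pull v) = (g w) (epull v) := by
      intro v; rfl
    rw [Finset.sum_congr rfl (fun v _ => this v)]
    exact Equiv.sum_comp epull (g w)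
  calc ∑ u : A → Bool, ∑ z : (F → Bool) × (B → Bool), g z.1 u * g z.1 (pull z.2)
      = ∑ w : F → Bool, (∑ u : A → Bool, g w u) * (∑ u : A → Bool, g w u) := by
        simp_rw [Fintype.sum_prod_type]
        rw [Finset.sum_comm]
        refine Finset.sum_congr rfl (fun w _ => ?_)
        rw [Finset.sum_mul]
        refine Finset.sum_congr rfl (fun u _ => ?_)
        rw [← Finset.mul_sum, hswap w]
    _ ≥ 0 := Finset.sum_nonneg (fun w _ => mul_self_nonneg _)

end Abstract

section OneD
variable {a : ℕ} [NeZero a] (c : ℤ)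
lemma int_offset_cases {A s : ℤ} (hA : 0 < A) (h : 2*A ∣ s) (h0 : -(4*A) < s)
    (h1 : s < 4*A) : s = -(2*A) ∨ s = 0 ∨ s = 2*A := by
  obtain ⟨k, hk⟩ := h
  have hk0 : -2 < k := by nlinarith
  have hk1 : k < 2 := by nlinarith
  have : k = -1 ∨ k = 0 ∨ k = 1 := by omega
  rcases this with h | h | h <;> rw [h] at hk <;> omega

lemma mfun_add_one_cases (x : ZMod a) :
    mfun a c (x + 1) = mfun a c x + 2 ∨ mfun a c (x + 1) = mfun a c x + 2 - 2*a := by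
  have h := Int.ModEq.dvd (mfun_add_one_modeq c x).symm
  have b1 := mfun_nonneg c x; have b2 := mfun_lt c x
  have b3 := mfun_nonneg c (x+1); have b4 := mfun_lt c (x+1)
  have := int_offset_cases (apos (a := a)) h (by omega) (by omega)
  omega

/-- 1D weights -/
noncomputable def wfun (a : ℕ) (c : ℤ) (x : ZMod a) : ℝ :=
  if mfun a c x = 0 ∨ mfun a c x = a then 1/2 else if mfun a c x ≤ a then 1 else 0

noncomputable def ufun (a : ℕ) (c : ℤ) (x : ZMod a) : ℝ :=
  if mfun a c x ≤ (a:ℤ) - 2 then 1 else 0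

noncomputable def dcoef (a : ℕ) (c : ℤ) (x : ZMod a) : ℝ :=
  (if mfun a c x = 1 then 1 else 0) + (if mfun a c x = (a:ℤ) - 1 then 1 else 0)

noncomputable def crossfun (a : ℕ) (c : ℤ) (x : ZMod a) : ℝ :=
  if mfun a c x = (a:ℤ) - 1 ∨ mfun a c x = 2*a - 1 then 1 else 0

lemma wfun_add (x : ZMod a) : wfun a c x + wfun a c (rr a c x) = 1 := by
  have hs := mfun_rr_add c x
  have b1 := mfun_nonneg c x; have b2 := mfun_lt c x
  have b3 := mfun_nonneg c (rr a c x); have b4 := mfun_lt c (rr a c x)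
  have ha := apos (a := a)
  unfold wfun
  split_ifs <;> first | (exfalso; omega) | norm_num

lemma ufun_add (x : ZMod a) :
    crossfun a c x + ufun a c x + ufun a c (rr a c (x + 1)) = 1 := by
  have hs := mfun_rr_add c (x + 1)
  have hc := mfun_add_one_cases c x
  have b1 := mfun_nonneg c x; have b2 := mfun_lt c x
  have b3 := mfun_nonneg c (rr a c (x+1)); have b4 := mfun_lt c (rr a c (x+1))
  have b5 := mfun_nonneg c (x+1); have b6 := mfun_lt c (x+1)
  have ha := apos (a := a)
  unfold crossfun ufun
  split_ifs <;> first | (exfalso; omega) | norm_num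

lemma crossfun_split (x : ZMod a) :
    crossfun a c x = (if mfun a c x = (a:ℤ) - 1 then (1:ℝ) else 0)
      + (if mfun a c x = 2*(a:ℤ) - 1 then 1 else 0) := by
  have ha := apos (a := a)
  unfold crossfun
  split_ifs <;> first | (exfalso; omega) | norm_num

lemma mfun_add_one_eq_one (x : ZMod a) :
    (mfun a c (x + 1) = 1) ↔ (mfun a c x = 2*(a:ℤ) - 1) := by
  have hc := mfun_add_one_cases c x
  have b1 := mfun_nonneg c x; have b2 := mfun_lt c x
  have b5 := mfun_nonneg c (x+1); have b6 := mfun_lt c (x+1)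
  have ha := apos (a := a)
  omega

lemma ufun_ne_zero (x : ZMod a) (h : ufun a c x ≠ 0) :
    mfun a c x ≤ a ∧ mfun a c (x + 1) ≤ a := by
  have hc := mfun_add_one_cases c x
  have b5 := mfun_nonneg c (x+1)
  have ha := apos (a := a)
  unfold ufun at h
  split_ifs at h with h1
  · omega
  · exact absurd rfl h

lemma wfun_ne_zero (x : ZMod a) (h : wfun a c x ≠ 0) : mfun a c x ≤ a := by
  have b1 := mfun_nonneg c x
  have ha := apos (a := a)
  unfold wfun at h
  split_ifs at h with h1 h2
  · omega
  · omega
  · exact absurd rfl h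

lemma dcoef_ne_zero (x : ZMod a) (h : dcoef a c x ≠ 0) : mfun a c x ≤ a := by
  have ha := apos (a := a)
  unfold dcoef at h
  split_ifs at h with h1 h2 <;> first | omega | (exfalso; exact h (by norm_num))

lemma dcoef_nonneg (x : ZMod a) : 0 ≤ dcoef a c x := by
  unfold dcoef
  split_ifs <;> norm_num

end OneD


section TwoD
variable {a b : ℕ} [NeZero a] [NeZero b] (c : ℤ)

def th (a b : ℕ) (c : ℤ) (t : ZMod a × ZMod b) : ZMod a × ZMod b := (rr a c t.1, t.2)

lemma th_invol : Function.Involutive (th a b c) := by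
  intro t
  show (rr a c (rr a c t.1), t.2) = t
  rw [rr_invol]

lemma add_e1 (t : ZMod a × ZMod b) : t + (1, 0) = (t.1 + 1, t.2) :=
  Prod.ext_iff.mpr ⟨rfl, add_zero _⟩

lemma add_e2 (t : ZMod a × ZMod b) : t + (0, 1) = (t.1, t.2 + 1) :=
  Prod.ext_iff.mpr ⟨add_zero _, rfl⟩

lemma sub_e1 (t : ZMod a × ZMod b) : t - (1, 0) = (t.1 - 1, t.2) :=
  Prod.ext_iff.mpr ⟨rfl, sub_zero _⟩

lemma th_add_e2 (t : ZMod a × ZMod b) : th a b c (t + (0,1)) = th a b c t + (0,1) := by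
  rw [add_e2, add_e2]
  rfl

lemma th_add_e1 (t : ZMod a × ZMod b) : th a b c (t + (1,0)) = (rr a c (t.1 + 1), t.2) := by
  rw [add_e1]; rfl

lemma rr_rho (x : ZMod a) : rr a c (rr a c (x + 1) + 1) = x := by
  unfold rr; ring

lemma rr_add_one_add_one (x : ZMod a) : rr a c (x + 1) + 1 = rr a c x := by
  unfold rr; ring

lemma th_e1_cancel (t : ZMod a × ZMod b) : th a b c (t + (1,0)) + (1,0) = th a b c t := by
  rw [th_add_e1, add_e1]
  show ((rr a c (t.1+1) + 1 : ZMod a), t.2) = _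
  rw [rr_add_one_add_one]
  rfl

lemma rho_invol : Function.Involutive (fun t : ZMod a × ZMod b => (rr a c (t.1 + 1), t.2)) := by
  intro t
  show (rr a c (rr a c (t.1 + 1) + 1), t.2) = t
  rw [rr_rho]

lemma spin_congr (σ σ' : ZMod a × ZMod b → Bool) (t : ZMod a × ZMod b) (h : σ t = σ' t) :
    spin σ t = spin σ' t := by unfold spin; rw [h]

lemma spin_sq (σ σ' : ZMod a × ZMod b → Bool) (t : ZMod a × ZMod b) :
    spin σ t * spin σ' t = 1 ∨ spin σ t * spin σ' t = -1 := by
  unfold spin; split_ifs <;> norm_num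

lemma field_decomp (hf : ZMod a × ZMod b → ℝ)
    (hsym : ∀ t, hf (th a b c t) = hf t) (σ : ZMod a × ZMod b → Bool) :
    ∑ t, hf t * spin σ t
      = ∑ t, wfun a c t.1 * (hf t * spin σ t)
        + ∑ t, wfun a c t.1 * (hf t * spin (σ ∘ th a b c) t) := by
  have h2 : ∑ t, wfun a c t.1 * (hf t * spin (σ ∘ th a b c) t)
      = ∑ t, wfun a c (rr a c t.1) * (hf t * spin σ t) := by
    rw [← Equiv.sum_comp (Function.Involutive.toPerm _ (th_invol (a := a) (b := b) c))
        (fun t => wfun a c (rr a c t.1) * (hf t * spin σ t))]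
    refine Finset.sum_congr rfl (fun t _ => ?_)
    simp only [Function.Involutive.coe_toPerm]
    rw [hsym, show rr a c (th a b c t).1 = t.1 from rr_invol c t.1]
    rfl
  rw [h2, ← Finset.sum_add_distrib]
  refine Finset.sum_congr rfl (fun t _ => ?_)
  rw [← add_mul, wfun_add, one_mul]

lemma vert_decomp (σ : ZMod a × ZMod b → Bool) :
    ∑ t, spin σ t * spin σ (t + (0,1))
      = ∑ t, wfun a c t.1 * (spin σ t * spin σ (t + (0,1)))
        + ∑ t, wfun a c t.1 * (spin (σ ∘ th a b c) t * spin (σ ∘ th a b c) (t + (0,1))) := by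
  have h2 : ∑ t, wfun a c t.1 * (spin (σ ∘ th a b c) t * spin (σ ∘ th a b c) (t + (0,1)))
      = ∑ t, wfun a c (rr a c t.1) * (spin σ t * spin σ (t + (0,1))) := by
    rw [← Equiv.sum_comp (Function.Involutive.toPerm _ (th_invol (a := a) (b := b) c))
        (fun t => wfun a c (rr a c t.1) * (spin σ t * spin σ (t + (0,1))))]
    refine Finset.sum_congr rfl (fun t _ => ?_)
    simp only [Function.Involutive.coe_toPerm]
    rw [show rr a c (th a b c t).1 = t.1 from rr_invol c t.1, ← th_add_e2]
    rfl
  rw [h2, ← Finset.sum_add_distrib]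
  refine Finset.sum_congr rfl (fun t _ => ?_)
  rw [← add_mul, wfun_add, one_mul]

lemma horiz_decomp (σ : ZMod a × ZMod b → Bool) :
    ∑ t, spin σ t * spin σ (t + (1,0))
      = ∑ t, ufun a c t.1 * (spin σ t * spin σ (t + (1,0)))
        + ∑ t, ufun a c t.1 * (spin (σ ∘ th a b c) t * spin (σ ∘ th a b c) (t + (1,0)))
        + ∑ t, dcoef a c t.1 * (spin σ t * spin (σ ∘ th a b c) t) := by
  have hmirror : ∑ t, ufun a c t.1 * (spin (σ ∘ th a b c) t * spin (σ ∘ th a b c) (t + (1,0)))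
      = ∑ t, ufun a c (rr a c (t.1 + 1)) * (spin σ t * spin σ (t + (1,0))) := by
    rw [← Equiv.sum_comp (Function.Involutive.toPerm _ (rho_invol (a := a) (b := b) c))
        (fun t => ufun a c (rr a c (t.1 + 1)) * (spin σ t * spin σ (t + (1,0))))]
    refine Finset.sum_congr rfl (fun t _ => ?_)
    simp only [Function.Involutive.coe_toPerm]
    show ufun a c t.1 * (spin (σ ∘ th a b c) t * spin (σ ∘ th a b c) (t + (1,0)))
      = ufun a c (rr a c (rr a c (t.1 + 1) + 1))
        * (spin σ (rr a c (t.1+1), t.2) * spin σ ((rr a c (t.1+1), t.2) + (1,0)))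
    rw [rr_rho c t.1, ← th_add_e1 c t, th_e1_cancel c t]
    show ufun a c t.1 * (spin (σ ∘ th a b c) t * spin (σ ∘ th a b c) (t + (1,0)))
      = ufun a c t.1 * (spin (σ ∘ th a b c) (t + (1,0)) * spin (σ ∘ th a b c) t)
    ring
  have hcross : ∑ t, dcoef a c t.1 * (spin σ t * spin (σ ∘ th a b c) t)
      = ∑ t, crossfun a c t.1 * (spin σ t * spin σ (t + (1,0))) := by
    have hsplit : ∑ t, dcoef a c t.1 * (spin σ t * spin (σ ∘ th a b c) t)
        = ∑ t, (if mfun a c t.1 = 1 then (1:ℝ) else 0) * (spin σ t * spin (σ ∘ th a b c) t)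
          + ∑ t, (if mfun a c t.1 = (a:ℤ) - 1 then (1:ℝ) else 0) * (spin σ t * spin (σ ∘ th a b c) t) := by
      rw [← Finset.sum_add_distrib]
      refine Finset.sum_congr rfl (fun t _ => ?_)
      unfold dcoef
      ring
    have hA : ∑ t, (if mfun a c t.1 = (a:ℤ) - 1 then (1:ℝ) else 0) * (spin σ t * spin (σ ∘ th a b c) t)
        = ∑ t, (if mfun a c t.1 = (a:ℤ) - 1 then (1:ℝ) else 0) * (spin σ t * spin σ (t + (1,0))) := by
      refine Finset.sum_congr rfl (fun t _ => ?_)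
      by_cases h : mfun a c t.1 = (a:ℤ) - 1
      · rw [if_pos h]
        have : th a b c t = t + (1,0) := by
          show (rr a c t.1, t.2) = _
          rw [rr_eq_add_one c t.1 (Or.inl h), add_e1]
        show (1:ℝ) * (spin σ t * spin σ (th a b c t)) = _
        rw [this]
      · rw [if_neg h, zero_mul, zero_mul]
    have hB : ∑ t, (if mfun a c t.1 = 1 then (1:ℝ) else 0) * (spin σ t * spin (σ ∘ th a b c) t)
        = ∑ t, (if mfun a c t.1 = 2*(a:ℤ) - 1 then (1:ℝ) else 0) * (spin σ t * spin σ (t + (1,0))) := by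
      have hB1 : ∑ t, (if mfun a c t.1 = 1 then (1:ℝ) else 0) * (spin σ t * spin (σ ∘ th a b c) t)
          = ∑ t, (if mfun a c t.1 = 1 then (1:ℝ) else 0) * (spin σ t * spin σ (t - (1,0))) := by
        refine Finset.sum_congr rfl (fun t _ => ?_)
        by_cases h : mfun a c t.1 = 1
        · rw [if_pos h]
          have : th a b c t = t - (1,0) := by
            show (rr a c t.1, t.2) = _
            rw [rr_eq_sub_one c t.1 h, sub_e1]
          show (1:ℝ) * (spin σ t * spin σ (th a b c t)) = _
          rw [this]
        · rw [if_neg h, zero_mul, zero_mul]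
      rw [hB1]
      rw [← Equiv.sum_comp (Equiv.addRight ((1,0) : ZMod a × ZMod b))
          (fun t => (if mfun a c t.1 = 1 then (1:ℝ) else 0) * (spin σ t * spin σ (t - (1,0))))]
      refine Finset.sum_congr rfl (fun t _ => ?_)
      simp only [Equiv.coe_addRight]
      rw [add_sub_cancel_right]
      simp only [add_e1]
      rw [if_congr (mfun_add_one_eq_one c t.1) rfl rfl]
      ring
    rw [hsplit, hA, hB, ← Finset.sum_add_distrib]
    refine Finset.sum_congr rfl (fun t _ => ?_)
    rw [crossfun_split]
    ring
  rw [hmirror, hcross]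
  rw [← Finset.sum_add_distrib, ← Finset.sum_add_distrib]
  refine Finset.sum_congr rfl (fun t _ => ?_)
  linear_combination (-(spin σ t * spin σ (t + ((1,0) : ZMod a × ZMod b)))) * (ufun_add c t.1)

noncomputable def Kfun (a b : ℕ) [NeZero a] [NeZero b] (c : ℤ) (J β : ℝ)
    (hf : ZMod a × ZMod b → ℝ) (σ : ZMod a × ZMod b → Bool) : ℝ :=
  β * J * ∑ t, ufun a c t.1 * (spin σ t * spin σ (t + (1,0)))
  + β * J * ∑ t, wfun a c t.1 * (spin σ t * spin σ (t + (0,1)))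
  + β * ∑ t, wfun a c t.1 * (hf t * spin σ t)

lemma ham_decomp (J β : ℝ) (hf : ZMod a × ZMod b → ℝ)
    (hsym : ∀ t, hf (th a b c t) = hf t) (σ : ZMod a × ZMod b → Bool) :
    -β * ham J hf σ = Kfun a b c J β hf σ + Kfun a b c J β hf (σ ∘ th a b c)
      + β * J * ∑ t, dcoef a c t.1 * (spin σ t * spin (σ ∘ th a b c) t) := by
  unfold ham Kfun
  rw [Finset.sum_add_distrib]
  rw [horiz_decomp c σ, vert_decomp c σ, field_decomp c hf hsym σ]
  ring

lemma exp_pm (y p : ℝ) (hp : p = 1 ∨ p = -1) :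
    Real.exp (y * p) = Real.cosh y + Real.sinh y * p := by
  rcases hp with h | h <;> rw [h]
  · rw [mul_one, mul_one, Real.cosh_add_sinh]
  · rw [mul_neg_one, mul_neg_one, ← Real.cosh_sub_sinh]; ring

lemma exp_decomp (J β : ℝ) (hf : ZMod a × ZMod b → ℝ)
    (hsym : ∀ t, hf (th a b c t) = hf t) (σ : ZMod a × ZMod b → Bool) :
    Real.exp (-β * ham J hf σ)
      = Real.exp (Kfun a b c J β hf σ) * Real.exp (Kfun a b c J β hf (σ ∘ th a b c))
        * ∏ t, (Real.cosh (β * J * dcoef a c t.1)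
            + Real.sinh (β * J * dcoef a c t.1) * (spin σ t * spin (σ ∘ th a b c) t)) := by
  rw [ham_decomp c J β hf hsym σ, Real.exp_add, Real.exp_add]
  congr 1
  rw [Finset.mul_sum, Real.exp_sum]
  refine Finset.prod_congr rfl (fun t _ => ?_)
  rw [show β * J * (dcoef a c t.1 * (spin σ t * spin (σ ∘ th a b c) t))
      = (β * J * dcoef a c t.1) * (spin σ t * spin (σ ∘ th a b c) t) from by ring]
  exact exp_pm _ _ (spin_sq σ (σ ∘ th a b c) t)

lemma Kfun_local (J β : ℝ) (hf : ZMod a × ZMod b → ℝ) (σ σ' : ZMod a × ZMod b → Bool)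
    (hagree : ∀ t : ZMod a × ZMod b, mfun a c t.1 ≤ (a:ℤ) → σ t = σ' t) :
    Kfun a b c J β hf σ = Kfun a b c J β hf σ' := by
  unfold Kfun
  have h1 : ∑ t, ufun a c t.1 * (spin σ t * spin σ (t + (1,0)))
      = ∑ t, ufun a c t.1 * (spin σ' t * spin σ' (t + (1,0))) := by
    refine Finset.sum_congr rfl (fun t _ => ?_)
    by_cases hu : ufun a c t.1 = 0
    · rw [hu, zero_mul, zero_mul]
    · obtain ⟨ha1, ha2⟩ := ufun_ne_zero c t.1 hu
      rw [spin_congr σ σ' t (hagree t ha1),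
        spin_congr σ σ' (t + (1,0)) (hagree (t + (1,0)) (by rw [add_e1]; exact ha2))]
  have h2 : ∑ t, wfun a c t.1 * (spin σ t * spin σ (t + (0,1)))
      = ∑ t, wfun a c t.1 * (spin σ' t * spin σ' (t + (0,1))) := by
    refine Finset.sum_congr rfl (fun t _ => ?_)
    by_cases hu : wfun a c t.1 = 0
    · rw [hu, zero_mul, zero_mul]
    · have ha1 := wfun_ne_zero c t.1 hu
      rw [spin_congr σ σ' t (hagree t ha1),
        spin_congr σ σ' (t + (0,1)) (hagree (t + (0,1)) (by rw [add_e2]; exact ha1))]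
  have h3 : ∑ t, wfun a c t.1 * (hf t * spin σ t)
      = ∑ t, wfun a c t.1 * (hf t * spin σ' t) := by
    refine Finset.sum_congr rfl (fun t _ => ?_)
    by_cases hu : wfun a c t.1 = 0
    · rw [hu, zero_mul, zero_mul]
    · rw [spin_congr σ σ' t (hagree t (wfun_ne_zero c t.1 hu))]
  rw [h1, h2, h3]

theorem core (J β : ℝ) (hJ : 0 ≤ J) (hβ : 0 ≤ β)
    (hf : ZMod a × ZMod b → ℝ) (hsym : ∀ t, hf (th a b c t) = hf t)
    (f g : (ZMod a × ZMod b → Bool) → ℝ)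
    (hfloc : ∀ σ σ', (∀ t : ZMod a × ZMod b, mfun a c t.1 ≤ (a:ℤ) → σ t = σ' t) → f σ = f σ')
    (hgloc : ∀ σ σ', (∀ t : ZMod a × ZMod b, mfun a c t.1 ≤ (a:ℤ) → σ t = σ' t) → g σ = g σ') :
    (∑ σ : ZMod a × ZMod b → Bool,
        f σ * g (σ ∘ th a b c) * Real.exp (-β * ham J hf σ)
      = ∑ σ : ZMod a × ZMod b → Bool,
        g σ * f (σ ∘ th a b c) * Real.exp (-β * ham J hf σ))
    ∧ 0 ≤ ∑ σ : ZMod a × ZMod b → Bool,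
        f σ * f (σ ∘ th a b c) * Real.exp (-β * ham J hf σ) := by
  classical
  have hcomp : Function.Involutive (fun σ : ZMod a × ZMod b → Bool => σ ∘ th a b c) :=
    fun σ => funext (fun t => congrArg σ (th_invol c t))
  have hcomp2 : ∀ σ : ZMod a × ZMod b → Bool, (σ ∘ th a b c) ∘ th a b c = σ :=
    fun σ => funext (fun t => congrArg σ (th_invol c t))
  have hE : ∀ σ : ZMod a × ZMod b → Bool,
      Real.exp (-β * ham J hf (σ ∘ th a b c)) = Real.exp (-β * ham J hf σ) := by
    intro σ
    rw [exp_decomp c J β hf hsym (σ ∘ th a b c), exp_decomp c J β hf hsym σ, hcomp2 σ]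
    have hprod : ∏ t, (Real.cosh (β * J * dcoef a c t.1)
          + Real.sinh (β * J * dcoef a c t.1) * (spin (σ ∘ th a b c) t * spin σ t))
        = ∏ t, (Real.cosh (β * J * dcoef a c t.1)
          + Real.sinh (β * J * dcoef a c t.1) * (spin σ t * spin (σ ∘ th a b c) t)) := by
      refine Finset.prod_congr rfl (fun t _ => ?_)
      ring
    rw [hprod]
    ring
  constructor
  · rw [show (∑ σ : ZMod a × ZMod b → Bool,
        g σ * f (σ ∘ th a b c) * Real.exp (-β * ham J hf σ))
      = ∑ σ : ZMod a × ZMod b → Bool,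
        g ((Function.Involutive.toPerm _ hcomp) σ)
          * f (((Function.Involutive.toPerm _ hcomp) σ) ∘ th a b c)
          * Real.exp (-β * ham J hf ((Function.Involutive.toPerm _ hcomp) σ))
      from (Equiv.sum_comp (Function.Involutive.toPerm _ hcomp)
        (fun σ => g σ * f (σ ∘ th a b c) * Real.exp (-β * ham J hf σ))).symm]
    refine Finset.sum_congr rfl (fun σ _ => ?_)
    simp only [Function.Involutive.coe_toPerm]
    rw [hcomp2 σ, hE σ]
    ring
  · have key : ∀ σ : ZMod a × ZMod b → Bool,
        f σ * f (σ ∘ th a b c) * Real.exp (-β * ham J hf σ)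
        = ∑ P ∈ (Finset.univ : Finset (ZMod a × ZMod b)).powerset,
            ((∏ t ∈ P, Real.sinh (β * J * dcoef a c t.1))
              * (∏ t ∈ Finset.univ \ P, Real.cosh (β * J * dcoef a c t.1)))
            * ((f σ * Real.exp (Kfun a b c J β hf σ) * ∏ t ∈ P, spin σ t)
              * (f (σ ∘ th a b c) * Real.exp (Kfun a b c J β hf (σ ∘ th a b c))
                  * ∏ t ∈ P, spin (σ ∘ th a b c) t)) := by
      intro σ
      rw [exp_decomp c J β hf hsym σ]
      rw [Finset.prod_congr rfl (fun (t : ZMod a × ZMod b) _ => add_comm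
        (Real.cosh (β * J * dcoef a c t.1))
        (Real.sinh (β * J * dcoef a c t.1) * (spin σ t * spin (σ ∘ th a b c) t)))]
      rw [Finset.prod_add, Finset.mul_sum, Finset.mul_sum]
      refine Finset.sum_congr rfl (fun P hP => ?_)
      rw [Finset.prod_mul_distrib, Finset.prod_mul_distrib]
      ring
    rw [Finset.sum_congr rfl (fun σ _ => key σ), Finset.sum_comm]
    apply Finset.sum_nonneg
    intro P hP
    rw [← Finset.mul_sum]
    by_cases hz : ∃ t ∈ P, dcoef a c t.1 = 0
    · obtain ⟨t0, ht0, hd0⟩ := hz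
      have hs0 : (∏ t ∈ P, Real.sinh (β * J * dcoef a c t.1)) = 0 :=
        Finset.prod_eq_zero ht0 (by rw [hd0, mul_zero, Real.sinh_zero])
      rw [hs0, zero_mul, zero_mul]
    · push_neg at hz
      have hGloc : ∀ σ σ' : ZMod a × ZMod b → Bool,
          (∀ t : ZMod a × ZMod b, mfun a c t.1 ≤ (a:ℤ) → σ t = σ' t) →
          f σ * Real.exp (Kfun a b c J β hf σ) * ∏ t ∈ P, spin σ t
            = f σ' * Real.exp (Kfun a b c J β hf σ') * ∏ t ∈ P, spin σ' t := by
        intro σ σ' hagree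
        rw [hfloc σ σ' hagree, Kfun_local c J β hf σ σ' hagree,
          Finset.prod_congr rfl (fun t ht => spin_congr σ σ' t
            (hagree t (dcoef_ne_zero c t.1 (hz t ht))))]
      have pos := abstract_rp (th a b c) (th_invol c)
        (fun t : ZMod a × ZMod b => mfun a c t.1 ≤ (a:ℤ))
        (fun t => mfun_cover c t.1)
        (fun t h1 h2 => by
          show (rr a c t.1, t.2) = t
          rw [rr_sep c t.1 h1 h2])
        (fun σ => f σ * Real.exp (Kfun a b c J β hf σ) * ∏ t ∈ P, spin σ t)
        hGloc
      refine mul_nonneg (mul_nonneg ?_ ?_) pos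
      · refine Finset.prod_nonneg (fun t _ => ?_)
        rw [← Real.sinh_zero]
        exact Real.sinh_le_sinh.mpr (mul_nonneg (mul_nonneg hβ hJ) (dcoef_nonneg c t.1))
      · exact Finset.prod_nonneg (fun t _ => (Real.cosh_pos _).le)

end TwoD

lemma int_div_small {L r : ℤ} (h0 : 0 ≤ r) (h1 : r < L) : r / L = 0 :=
  Int.ediv_eq_zero_of_lt h0 h1

lemma reflect_div {L v : ℤ} (hL : 0 < L) (hv : 0 ≤ v) : (L - 1 - v) / L = -(v / L) := by
  have hdm := Int.mul_ediv_add_emod v L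
  have h0 : 0 ≤ v % L := Int.emod_nonneg v hL.ne'
  have h1 : v % L < L := Int.emod_lt_of_pos v hL
  have he : L - 1 - v = (L - 1 - v % L) + (-(v / L)) * L := by linarith [hdm]
  rw [he, Int.add_mul_ediv_right _ _ hL.ne', int_div_small (by omega) (by omega), zero_add]

/-- key parity fact: reflection across `c = 2nL + L - 1` preserves cell parity when `N` even -/
lemma refl_parity (L N : ℕ) (hL : 0 < L) (hN : Even N) [NeZero (N * L)] (n : ℤ)
    (x : ZMod (N * L)) :
    Even ((rr (N * L) (2 * n * L + L - 1) x).val / L + x.val / L) := by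
  set c : ℤ := 2 * n * L + L - 1 with hc
  set v : ℤ := (x.val : ℤ) with hv
  have hL' : (0:ℤ) < L := by exact_mod_cast hL
  have hv0 : 0 ≤ v := Int.natCast_nonneg _
  have hN0 : 0 < N := by
    rcases Nat.eq_zero_or_pos N with h | h
    · exact absurd (by simp [h] : N * L = 0) (NeZero.ne _)
    · exact h
  have hNL : (0:ℤ) < (N:ℤ) * L := by positivity
  have hrr : rr (N * L) c x = ((c - v : ℤ) : ZMod (N * L)) := by
    unfold rr
    rw [hv]
    push_cast
    rw [natCast_val_self]
  have hw : ((rr (N * L) c x).val : ℤ) = (c - v) % ((N : ℤ) * L) := by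
    rw [hrr, val_intCast_eq]
    push_cast
    ring_nf
  set w : ℤ := ((rr (N * L) c x).val : ℤ) with hwdef
  set q : ℤ := -((c - v) / ((N:ℤ) * L)) with hqdef
  have hq : w = (c - v) + q * ((N:ℤ) * L) := by
    rw [hw, hqdef]
    have := Int.mul_ediv_add_emod (c - v) ((N:ℤ) * L)
    linarith
  have key : w / (L:ℤ) + v / L = 2 * n + q * N := by
    have h1 : w = ((L - 1 - v) + (2*n) * L) + (q * N) * L := by rw [hq, hc]; ring
    have h2 : w / (L:ℤ) = ((L - 1 - v) + (2*n) * L) / L + q * N := by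
      rw [h1]; exact Int.add_mul_ediv_right _ _ hL'.ne'
    have h3 : ((L - 1 - v) + (2*n) * L) / (L:ℤ) = (L - 1 - v) / L + 2*n :=
      Int.add_mul_ediv_right _ _ hL'.ne'
    rw [h2, h3, reflect_div hL' hv0]
    ring
  have hcast : (((rr (N * L) c x).val / L + x.val / L : ℕ) : ℤ) = w / L + v / L := by
    push_cast [Int.natCast_ediv]
    rfl
  rw [← Int.even_coe_nat, hcast, key]
  obtain ⟨m, hm⟩ := hN
  exact ⟨n + q * m, by rw [hm]; push_cast; ring⟩

/-- the cell field is symmetric under the reflection -/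
lemma cell_sym (L1 L2 N : ℕ) (hL1 : 0 < L1) (hN : Even N) [NeZero (N * L1)]
    (h : ℝ) (n : ℤ) (t : ZMod (N * L1) × ZMod (N * L2)) :
    cellField L1 L2 h (th (N * L1) (N * L2) (2 * n * L1 + L1 - 1) t)
      = cellField L1 L2 h t := by
  have hp := refl_parity L1 N hL1 hN n t.1
  have hiff := Nat.even_add.mp hp
  show (if Even ((rr (N * L1) (2 * n * L1 + L1 - 1) t.1).val / L1 + t.2.val / L2)
      then h else -h) = _
  unfold cellField
  refine if_congr ?_ rfl rfl
  rw [Nat.even_add, Nat.even_add, hiff]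



section Assemble
variable (L1 L2 N : ℕ)

/-- swap symmetry of the cell field -/
lemma cell_swap {a b : ℕ} (h : ℝ) (u : ZMod b × ZMod a) :
    cellField L1 L2 h (Prod.swap u) = (cellField L2 L1 h u : ℝ) := by
  unfold cellField
  refine if_congr ?_ rfl rfl
  rw [Prod.fst_swap, Prod.snd_swap, Nat.add_comm]

/-- swap symmetry of the Hamiltonian -/
lemma ham_swap {a b : ℕ} [NeZero a] [NeZero b] (J : ℝ) (hf : ZMod a × ZMod b → ℝ)
    (σ : ZMod a × ZMod b → Bool) :
    ham J (fun u : ZMod b × ZMod a => hf (Prod.swap u)) (fun u => σ (Prod.swap u))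
      = ham J hf σ := by
  unfold ham
  congr 1
  · congr 1
    rw [← Equiv.sum_comp (Equiv.prodComm (ZMod a) (ZMod b))
      (fun u : ZMod b × ZMod a =>
        spin (fun u => σ (Prod.swap u)) u * spin (fun u => σ (Prod.swap u)) (u + (1, 0))
        + spin (fun u => σ (Prod.swap u)) u * spin (fun u => σ (Prod.swap u)) (u + (0, 1)))]
    refine Finset.sum_congr rfl (fun t _ => ?_)
    simp only [Equiv.coe_prodComm]
    show spin σ t * spin σ (t + (0,1)) + spin σ t * spin σ (t + (1,0)) = _
    ring
  · rw [← Equiv.sum_comp (Equiv.prodComm (ZMod a) (ZMod b))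
      (fun u : ZMod b × ZMod a => hf (Prod.swap u) * spin (fun u => σ (Prod.swap u)) u)]
    refine Finset.sum_congr rfl (fun t _ => ?_)
    simp only [Equiv.coe_prodComm]
    rfl

end Assemble
end RP

/-- Reflection positivity of the torus Gibbs measure: for all functions
`f, g` on configuration space depending only on the restriction to the left half `𝕋ˡ`,
(i) `Σ_σ f(σ)·g(σ∘ϑ)·e^{−βH_N(σ)} = Σ_σ g(σ)·f(σ∘ϑ)·e^{−βH_N(σ)}` and
(ii) `Σ_σ f(σ)·f(σ∘ϑ)·e^{−βH_N(σ)} ≥ 0`. -/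
theorem reflection_positivity (L1 L2 N : ℕ) (hL1 : 0 < L1) (hL2 : 0 < L2)
    (hN : 2 ≤ N) (hNeven : Even N) [NeZero (N * L1)] [NeZero (N * L2)]
    (J h β : ℝ) (hJ : 0 < J) (hh : 0 < h) (hβ : 0 ≤ β) (i : Fin 2) (n : ℤ)
    (f g : (ZMod (N * L1) × ZMod (N * L2) → Bool) → ℝ)
    (hf : ∀ σ σ', (∀ t ∈ leftHalf L1 L2 N i n, σ t = σ' t) → f σ = f σ')
    (hg : ∀ σ σ', (∀ t ∈ leftHalf L1 L2 N i n, σ t = σ' t) → g σ = g σ') :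
    (∑ σ : ZMod (N * L1) × ZMod (N * L2) → Bool,
        f σ * g (σ ∘ reflMap L1 L2 N i n) * Real.exp (-β * ham J (cellField L1 L2 h) σ)
      = ∑ σ : ZMod (N * L1) × ZMod (N * L2) → Bool,
        g σ * f (σ ∘ reflMap L1 L2 N i n) * Real.exp (-β * ham J (cellField L1 L2 h) σ)) ∧
    0 ≤ ∑ σ : ZMod (N * L1) × ZMod (N * L2) → Bool,
        f σ * f (σ ∘ reflMap L1 L2 N i n) * Real.exp (-β * ham J (cellField L1 L2 h) σ) := by
  classical
  have hi : i = 0 ∨ i = 1 := by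
    rcases i with ⟨iv, hiv⟩
    interval_cases iv
    · exact Or.inl rfl
    · exact Or.inr rfl
  rcases hi with rfl | rfl
  · -- reflection in the first coordinate
    set c : ℤ := 2 * n * L1 + L1 - 1 with hc
    have hrm : reflMap L1 L2 N 0 n = RP.th (N*L1) (N*L2) c := by
      funext t
      simp only [reflMap, if_pos rfl]
      rfl
    have hLH : ∀ t : ZMod (N*L1) × ZMod (N*L2),
        t ∈ leftHalf L1 L2 N 0 n ↔ RP.mfun (N*L1) c t.1 ≤ ((N*L1 : ℕ) : ℤ) := by
      intro t
      have e1 : ((N*L1 : ℕ) : ℤ) = (N:ℤ)*L1 := by push_cast; ring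
      have e2 : RP.mfun (N*L1) c t.1
          = (2*(t.1.val:ℤ) - (2*n*L1+L1-1)) % (2*((N:ℤ)*L1)) := by
        unfold RP.mfun
        rw [e1]
      have hmem : t ∈ leftHalf L1 L2 N 0 n ↔
          (2 * (t.1.val : ℤ) - (2 * n * L1 + L1 - 1)) % (2 * ((N : ℤ) * L1)) ≤ (N : ℤ) * L1 := by
        unfold leftHalf
        rw [Set.mem_setOf_eq, if_pos rfl]
      rw [hmem, e2, e1]
    have hmain := RP.core (a := N*L1) (b := N*L2) c J β hJ.le hβ (cellField L1 L2 h)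
      (RP.cell_sym L1 L2 N hL1 hNeven h n) f g
      (fun σ σ' hag => hf σ σ' (fun t ht => hag t ((hLH t).mp ht)))
      (fun σ σ' hag => hg σ σ' (fun t ht => hag t ((hLH t).mp ht)))
    rw [hrm]
    exact hmain
  · -- reflection in the second coordinate: transport via coordinate swap
    set c : ℤ := 2 * n * L2 + L2 - 1 with hc
    set F : (ZMod (N*L2) × ZMod (N*L1) → Bool) → ℝ :=
      fun τ => f (fun t => τ (Prod.swap t)) with hF
    set G : (ZMod (N*L2) × ZMod (N*L1) → Bool) → ℝ :=
      fun τ => g (fun t => τ (Prod.swap t)) with hG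
    have hLH : ∀ t : ZMod (N*L1) × ZMod (N*L2),
        t ∈ leftHalf L1 L2 N 1 n ↔ RP.mfun (N*L2) c t.2 ≤ ((N*L2 : ℕ) : ℤ) := by
      intro t
      have e1 : ((N*L2 : ℕ) : ℤ) = (N:ℤ)*L2 := by push_cast; ring
      have e2 : RP.mfun (N*L2) c t.2
          = (2*(t.2.val:ℤ) - (2*n*L2+L2-1)) % (2*((N:ℤ)*L2)) := by
        unfold RP.mfun
        rw [e1]
      have hmem : t ∈ leftHalf L1 L2 N 1 n ↔
          (2 * (t.2.val : ℤ) - (2 * n * L2 + L2 - 1)) % (2 * ((N : ℤ) * L2)) ≤ (N : ℤ) * L2 := by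
        unfold leftHalf
        rw [Set.mem_setOf_eq, if_neg (by decide : ¬ (1 : Fin 2) = 0)]
      rw [hmem, e2, e1]
    have hFloc : ∀ τ τ' : ZMod (N*L2) × ZMod (N*L1) → Bool,
        (∀ u : ZMod (N*L2) × ZMod (N*L1),
          RP.mfun (N*L2) c u.1 ≤ ((N*L2 : ℕ) : ℤ) → τ u = τ' u) → F τ = F τ' := by
      intro τ τ' hag
      exact hf _ _ (fun t ht => hag (Prod.swap t) ((hLH t).mp ht))
    have hGloc : ∀ τ τ' : ZMod (N*L2) × ZMod (N*L1) → Bool,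
        (∀ u : ZMod (N*L2) × ZMod (N*L1),
          RP.mfun (N*L2) c u.1 ≤ ((N*L2 : ℕ) : ℤ) → τ u = τ' u) → G τ = G τ' := by
      intro τ τ' hag
      exact hg _ _ (fun t ht => hag (Prod.swap t) ((hLH t).mp ht))
    have hmain := RP.core (a := N*L2) (b := N*L1) c J β hJ.le hβ (cellField L2 L1 h)
      (RP.cell_sym L2 L1 N hL2 hNeven h n) F G hFloc hGloc
    -- transport the three sums
    have hham : ∀ τ : ZMod (N*L2) × ZMod (N*L1) → Bool,
        ham J (cellField L2 L1 h) τ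
          = ham J (cellField L1 L2 h) (fun t => τ (Prod.swap t)) := by
      intro τ
      have h1 : (fun u : ZMod (N*L2) × ZMod (N*L1) => cellField L1 L2 h (Prod.swap u))
          = (cellField L2 L1 h : ZMod (N*L2) × ZMod (N*L1) → ℝ) :=
        funext (fun u => RP.cell_swap L1 L2 h u)
      have h2 := RP.ham_swap J (cellField L1 L2 h) (fun t => τ (Prod.swap t))
      rw [h1] at h2
      exact h2
    have hth : ∀ (σ : ZMod (N*L1) × ZMod (N*L2) → Bool),
        (fun t => ((fun u => σ (Prod.swap u)) ∘ RP.th (N*L2) (N*L1) c) (Prod.swap t))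
          = σ ∘ reflMap L1 L2 N 1 n := by
      intro σ
      funext t
      show σ (Prod.swap (RP.th (N*L2) (N*L1) c (Prod.swap t))) = σ (reflMap L1 L2 N 1 n t)
      congr 1
    have htrans : ∀ Φ : (ZMod (N*L1) × ZMod (N*L2) → Bool) → ℝ,
        ∑ σ : ZMod (N*L1) × ZMod (N*L2) → Bool, Φ σ
          = ∑ τ : ZMod (N*L2) × ZMod (N*L1) → Bool, Φ (fun t => τ (Prod.swap t)) := by
      intro Φ
      rw [← Equiv.sum_comp (⟨fun σ u => σ (Prod.swap u), fun τ t => τ (Prod.swap t),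
          fun σ => rfl, fun τ => rfl⟩ :
          (ZMod (N*L1) × ZMod (N*L2) → Bool) ≃ (ZMod (N*L2) × ZMod (N*L1) → Bool))
        (fun τ : ZMod (N*L2) × ZMod (N*L1) → Bool => Φ (fun t => τ (Prod.swap t)))]
      exact Finset.sum_congr rfl (fun σ _ => rfl)
    have hstepg : ∀ τ : ZMod (N*L2) × ZMod (N*L1) → Bool,
        g ((fun t => τ (Prod.swap t)) ∘ reflMap L1 L2 N 1 n)
          = G (τ ∘ RP.th (N*L2) (N*L1) c) := by
      intro τ
      rw [← hth (fun t => τ (Prod.swap t))]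
      rfl
    have hstepf : ∀ τ : ZMod (N*L2) × ZMod (N*L1) → Bool,
        f ((fun t => τ (Prod.swap t)) ∘ reflMap L1 L2 N 1 n)
          = F (τ ∘ RP.th (N*L2) (N*L1) c) := by
      intro τ
      rw [← hth (fun t => τ (Prod.swap t))]
      rfl
    constructor
    · rw [htrans (fun σ => f σ * g (σ ∘ reflMap L1 L2 N 1 n)
          * Real.exp (-β * ham J (cellField L1 L2 h) σ)),
        htrans (fun σ => g σ * f (σ ∘ reflMap L1 L2 N 1 n)
          * Real.exp (-β * ham J (cellField L1 L2 h) σ))]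
      calc ∑ τ : ZMod (N*L2) × ZMod (N*L1) → Bool,
            F τ * g ((fun t => τ (Prod.swap t)) ∘ reflMap L1 L2 N 1 n)
              * Real.exp (-β * ham J (cellField L1 L2 h) (fun t => τ (Prod.swap t)))
          = ∑ τ : ZMod (N*L2) × ZMod (N*L1) → Bool,
            F τ * G (τ ∘ RP.th (N*L2) (N*L1) c)
              * Real.exp (-β * ham J (cellField L2 L1 h) τ) := by
            refine Finset.sum_congr rfl (fun τ _ => ?_)
            rw [hstepg τ, ← hham τ]
        _ = ∑ τ : ZMod (N*L2) × ZMod (N*L1) → Bool,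
            G τ * F (τ ∘ RP.th (N*L2) (N*L1) c)
              * Real.exp (-β * ham J (cellField L2 L1 h) τ) := hmain.1
        _ = ∑ τ : ZMod (N*L2) × ZMod (N*L1) → Bool,
            G τ * f ((fun t => τ (Prod.swap t)) ∘ reflMap L1 L2 N 1 n)
              * Real.exp (-β * ham J (cellField L1 L2 h) (fun t => τ (Prod.swap t))) := by
            refine Finset.sum_congr rfl (fun τ _ => ?_)
            rw [hstepf τ, ← hham τ]
    · rw [htrans (fun σ => f σ * f (σ ∘ reflMap L1 L2 N 1 n)
          * Real.exp (-β * ham J (cellField L1 L2 h) σ))]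
      have h2 : ∑ τ : ZMod (N*L2) × ZMod (N*L1) → Bool,
          F τ * f ((fun t => τ (Prod.swap t)) ∘ reflMap L1 L2 N 1 n)
            * Real.exp (-β * ham J (cellField L1 L2 h) (fun t => τ (Prod.swap t)))
          = ∑ τ : ZMod (N*L2) × ZMod (N*L1) → Bool,
            F τ * F (τ ∘ RP.th (N*L2) (N*L1) c)
              * Real.exp (-β * ham J (cellField L2 L1 h) τ) := by
        refine Finset.sum_congr rfl (fun τ _ => ?_)
        rw [hstepf τ, ← hham τ]
      rw [h2]
      exact hmain.2
end

section
/- (Cauchy–Schwarz inequality from reflection positivity.) In the setting of the reflection positivity of the torus Gibbs measure — L₁, L₂ positive integers, J > 0, h > 0, N ≥ 2 even, β ≥ 0, i ∈ {1,2}, n an integer, c = 2nL_i + L_i − 1, ϑ the reflection of 𝕋_N replacing t_i by (c − t_i) mod NL_i, and 𝕋ˡ = {t ∈ 𝕋_N : (2t_i − c) mod 2NL_i ≤ NL_i} — for all functions f, g : {−1,+1}^{𝕋_N} → ℝ depending only on the restriction of the configuration to 𝕋ˡ: [Σ_σ f(σ)·g(σ∘ϑ)·e^{−βH_N(σ)}]²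 ≤ [Σ_σ f(σ)·f(σ∘ϑ)·e^{−βH_N(σ)}]·[Σ_σ g(σ)·g(σ∘ϑ)·e^{−βH_N(σ)}]. -/
open Finset

section OneD

/-- 1D reflection. -/
def thm (M : ℕ) (c : ℤ) (x : ZMod M) : ZMod M := (c : ZMod M) - x

/-- 1D "y-coordinate" `(2x − c) mod 2M`. -/
def yv (M : ℕ) (c : ℤ) (x : ZMod M) : ℤ := (2 * (x.val : ℤ) - c) % (2 * (M : ℤ))

/-- 1D left-half predicate. -/
def lh (M : ℕ) (c : ℤ) (x : ZMod M) : Prop := yv M c x ≤ (M : ℤ)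

variable {M : ℕ} {c : ℤ}

lemma thm_invol (x : ZMod M) : thm M c (thm M c x) = x := by
  simp [thm]

lemma hMpos (hM : 2 ≤ M) : (0:ℤ) < 2 * (M:ℤ) := by positivity

lemma yv_nonneg (hM : 2 ≤ M) (x : ZMod M) : 0 ≤ yv M c x :=
  Int.emod_nonneg _ (by positivity)

lemma yv_lt (hM : 2 ≤ M) (x : ZMod M) : yv M c x < 2 * M :=
  Int.emod_lt_of_pos _ (hMpos hM)

lemma negmod {m y : ℤ} (h0 : 0 ≤ y) (h1 : y < m) :
    (-y) % m = if y = 0 then 0 else m - y := by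
  split_ifs with h
  · simp [h]
  · rw [Int.neg_emod, Int.emod_eq_of_lt (by omega) (by omega)]
    rw [if_neg (fun hd => h (by have := Int.emod_eq_zero_of_dvd hd; rwa [Int.emod_eq_of_lt h0 h1] at this))]
    omega

lemma succmod {m y : ℤ} (hm : 2 ≤ m) (h0 : 0 ≤ y) (h1 : y < m) :
    (y + 2) % m = if y + 2 < m then y + 2 else y + 2 - m := by
  split_ifs with h
  · exact Int.emod_eq_of_lt (by omega) h
  · have h2 : (y + 2) % m = (y + 2 - m) % m := by
      have : y + 2 - m = y + 2 + m * (-1) := by ring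
      rw [this, Int.add_mul_emod_self_left]
    rw [h2, Int.emod_eq_of_lt (by omega) (by omega)]

lemma thm_val [NeZero M] (x : ZMod M) : ((thm M c x).val : ℤ) = (c - (x.val:ℤ)) % (M:ℤ) := by
  have h : thm M c x = ((c - (x.val:ℤ) : ℤ) : ZMod M) := by
    push_cast
    simp [thm, ZMod.natCast_val, ZMod.cast_id]
  rw [h, ZMod.val_intCast]

lemma succ_val [NeZero M] (x : ZMod M) : (((x + 1 : ZMod M)).val : ℤ) = ((x.val:ℤ) + 1) % (M:ℤ) := by
  have h : (x + 1 : ZMod M) = (((x.val:ℤ) + 1 : ℤ) : ZMod M) := by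
    push_cast
    simp [ZMod.natCast_val, ZMod.cast_id]
  rw [h, ZMod.val_intCast]

lemma yv_thm (hM : 2 ≤ M) (x : ZMod M) :
    yv M c (thm M c x) = (-(yv M c x)) % (2 * M) := by
  haveI : NeZero M := ⟨by omega⟩
  unfold yv
  rw [thm_val]
  have h1 : (c - (x.val:ℤ)) % (M:ℤ) ≡ c - (x.val:ℤ) [ZMOD (M:ℤ)] :=
    Int.emod_emod_of_dvd _ dvd_rfl
  have h2 : 2 * ((c - (x.val:ℤ)) % (M:ℤ)) ≡ 2 * (c - (x.val:ℤ)) [ZMOD 2 * (M:ℤ)] :=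
    h1.mul_left' (c := 2)
  have h3 : 2 * ((c - (x.val:ℤ)) % (M:ℤ)) - c ≡ 2 * (c - (x.val:ℤ)) - c [ZMOD 2 * (M:ℤ)] :=
    h2.sub_right c
  have h0 : (2 * (x.val:ℤ) - c) % (2*(M:ℤ)) ≡ (2 * (x.val:ℤ) - c) [ZMOD 2*(M:ℤ)] :=
    Int.emod_emod_of_dvd _ dvd_rfl
  have h4 : -(2 * (x.val:ℤ) - c) ≡ -((2 * (x.val:ℤ) - c) % (2 * (M:ℤ))) [ZMOD 2 * (M:ℤ)] :=
    h0.symm.neg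
  calc (2 * ((c - (x.val:ℤ)) % (M:ℤ)) - c) % (2 * (M:ℤ))
      = (2 * (c - (x.val:ℤ)) - c) % (2 * (M:ℤ)) := h3
    _ = (-(2 * (x.val:ℤ) - c)) % (2 * (M:ℤ)) := by ring_nf
    _ = (-((2 * (x.val:ℤ) - c) % (2 * (M:ℤ)))) % (2 * (M:ℤ)) := h4

lemma yv_succ (hM : 2 ≤ M) (x : ZMod M) :
    yv M c (x + 1) = (yv M c x + 2) % (2 * M) := by
  haveI : NeZero M := ⟨by omega⟩
  unfold yv
  rw [succ_val]
  have h1 : ((x.val:ℤ) + 1) % (M:ℤ) ≡ (x.val:ℤ) + 1 [ZMOD (M:ℤ)] :=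
    Int.emod_emod_of_dvd _ dvd_rfl
  have h3 : 2 * (((x.val:ℤ) + 1) % (M:ℤ)) - c ≡ 2 * ((x.val:ℤ) + 1) - c [ZMOD 2 * (M:ℤ)] :=
    (h1.mul_left' (c := 2)).sub_right c
  have h0 : (2 * (x.val:ℤ) - c) % (2*(M:ℤ)) ≡ (2 * (x.val:ℤ) - c) [ZMOD 2*(M:ℤ)] :=
    Int.emod_emod_of_dvd _ dvd_rfl
  have h4 : (2 * (x.val:ℤ) - c) + 2 ≡ ((2 * (x.val:ℤ) - c) % (2 * (M:ℤ))) + 2 [ZMOD 2 * (M:ℤ)] :=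
    h0.symm.add_right 2
  calc (2 * (((x.val:ℤ) + 1) % (M:ℤ)) - c) % (2 * (M:ℤ))
      = (2 * ((x.val:ℤ) + 1) - c) % (2 * (M:ℤ)) := h3
    _ = ((2 * (x.val:ℤ) - c) + 2) % (2 * (M:ℤ)) := by ring_nf
    _ = (((2 * (x.val:ℤ) - c) % (2 * (M:ℤ))) + 2) % (2 * (M:ℤ)) := h4

end OneD

section OneD2
variable {M : ℕ} {c : ℤ}

lemma thm_cast [NeZero M] (x : ZMod M) : thm M c x = ((c - (x.val:ℤ) : ℤ) : ZMod M) := by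
  push_cast
  simp [thm, ZMod.natCast_val, ZMod.cast_id]

lemma succ_cast [NeZero M] (x : ZMod M) : x + 1 = (((x.val:ℤ) + 1 : ℤ) : ZMod M) := by
  push_cast
  simp [ZMod.natCast_val, ZMod.cast_id]

lemma self_cast [NeZero M] (x : ZMod M) : x = (((x.val:ℤ) : ℤ) : ZMod M) := by
  push_cast
  simp [ZMod.natCast_val, ZMod.cast_id]

lemma yv_decomp (hM : 2 ≤ M) (x : ZMod M) :
    ∃ q : ℤ, 2 * (x.val:ℤ) - c = yv M c x + 2 * (M:ℤ) * q := by
  exact ⟨(2 * (x.val:ℤ) - c) / (2 * (M:ℤ)), by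
    have := Int.emod_add_mul_ediv (2 * (x.val:ℤ) - c) (2 * (M:ℤ))
    unfold yv; linarith⟩

lemma thm_eq_succ_iff (hM : 2 ≤ M) (x : ZMod M) :
    thm M c x = x + 1 ↔ (yv M c x = M - 1 ∨ yv M c x = 2 * M - 1) := by
  haveI : NeZero M := ⟨by omega⟩
  obtain ⟨q, hq⟩ := yv_decomp (c := c) hM x
  have hb0 := yv_nonneg (c := c) hM x
  have hb1 := yv_lt (c := c) hM x
  rw [thm_cast, succ_cast (M := M) x, ZMod.intCast_eq_intCast_iff, Int.modEq_iff_dvd]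
  have harg : (x.val:ℤ) + 1 - (c - (x.val:ℤ)) = 2 * (x.val:ℤ) - c + 1 := by ring
  rw [harg]
  constructor
  · rintro ⟨k, hk⟩
    set y := yv M c x with hy
    have hjk : y + 1 = (M:ℤ) * (k - 2 * q) := by rw [mul_sub]; linarith
    set j := k - 2 * q with hj
    have h1 : 1 ≤ j := by
      by_contra h
      push_neg at h
      have : (M:ℤ) * j ≤ (M:ℤ) * 0 := by
        apply mul_le_mul_of_nonneg_left (by omega) (by positivity)
      omega
    have h2 : j ≤ 2 := by
      by_contra h
      push_neg at h
      have : (M:ℤ) * 3 ≤ (M:ℤ) * j := by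
        apply mul_le_mul_of_nonneg_left (by omega) (by positivity)
      omega
    interval_cases j <;> omega
  · rintro (h | h)
    · exact ⟨1 + 2 * q, by rw [mul_add]; linarith⟩
    · exact ⟨2 + 2 * q, by rw [mul_add]; linarith⟩

lemma thm_fix (hM : 2 ≤ M) (x : ZMod M) (h1 : lh M c x) (h2 : lh M c (thm M c x)) :
    thm M c x = x := by
  haveI : NeZero M := ⟨by omega⟩
  obtain ⟨q, hq⟩ := yv_decomp (c := c) hM x
  have hb0 := yv_nonneg (c := c) hM x
  have hb1 := yv_lt (c := c) hM x
  unfold lh at h1 h2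
  rw [yv_thm hM, negmod hb0 hb1] at h2
  have hy : yv M c x = 0 ∨ yv M c x = M := by split_ifs at h2 <;> omega
  rw [thm_cast]
  conv_rhs => rw [self_cast (M := M) x]
  rw [ZMod.intCast_eq_intCast_iff, Int.modEq_iff_dvd]
  have harg : (x.val:ℤ) - (c - (x.val:ℤ)) = 2 * (x.val:ℤ) - c := by ring
  rw [harg]
  rcases hy with h | h
  · exact ⟨2 * q, by rw [h] at hq; rw [hq]; ring⟩
  · exact ⟨1 + 2 * q, by rw [h] at hq; rw [hq]; ring⟩

lemma lh_cov (hM : 2 ≤ M) (x : ZMod M) : lh M c x ∨ lh M c (thm M c x) := by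
  have hb0 := yv_nonneg (c := c) hM x
  have hb1 := yv_lt (c := c) hM x
  unfold lh
  rw [yv_thm hM, negmod hb0 hb1]
  split_ifs <;> omega

lemma lh_p1 (hM : 2 ≤ M) (x : ZMod M) (h : thm M c x = x + 1) :
    ¬(lh M c x ∧ lh M c (x + 1)) := by
  have hb0 := yv_nonneg (c := c) hM x
  have hb1 := yv_lt (c := c) hM x
  rw [thm_eq_succ_iff hM] at h
  unfold lh
  rw [yv_succ hM, succmod (by omega) hb0 hb1]
  split_ifs <;> omega

lemma lh_p2 (hM : 2 ≤ M) (x : ZMod M) (h : thm M c x ≠ x + 1) :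
    (lh M c x ∧ lh M c (x + 1)) ∨ (lh M c (thm M c (x + 1)) ∧ lh M c (thm M c x)) := by
  have hb0 := yv_nonneg (c := c) hM x
  have hb1 := yv_lt (c := c) hM x
  have hb0' := yv_nonneg (c := c) hM (x + 1)
  have hb1' := yv_lt (c := c) hM (x + 1)
  rw [Ne, thm_eq_succ_iff hM] at h
  push_neg at h
  unfold lh
  rw [yv_thm hM, yv_thm hM, negmod hb0 hb1, negmod hb0' hb1']
  rw [yv_succ hM, succmod (by omega) hb0 hb1] at hb0' hb1' ⊢
  split_ifs <;> omega

end OneD2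

section FieldLem

lemma field_parity {N L : ℕ} (hL : 0 < L) (hN2 : 2 ≤ N) (hNe : Even N) (n : ℤ)
    (x : ZMod (N * L)) :
    Even ((thm (N * L) (2 * n * L + L - 1) x).val / L + x.val / L) := by
  haveI : NeZero (N * L) := ⟨by positivity⟩
  set c : ℤ := 2 * n * L + L - 1 with hc
  set v : ℤ := (x.val : ℤ) with hvdef
  have hval : ((thm (N * L) c x).val : ℤ) = (c - v) % ((N * L : ℕ) : ℤ) := thm_val x
  set v' : ℤ := ((thm (N * L) c x).val : ℤ) with hv'def
  set k : ℤ := (c - v) / ((N * L : ℕ) : ℤ) with hk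
  have hdecomp : ((N * L : ℕ) : ℤ) * k + v' = c - v := by
    rw [hval, hk]; exact Int.mul_ediv_add_emod _ _
  set a : ℤ := v / L with ha
  set b : ℤ := v % L with hb
  have hv : (L : ℤ) * a + b = v := Int.mul_ediv_add_emod _ _
  have hbb : 0 ≤ b ∧ b < L := ⟨Int.emod_nonneg _ (by positivity), Int.emod_lt_of_pos _ (by positivity)⟩
  have h1 : v' = (L : ℤ) * (2 * n - (N : ℤ) * k - a) + (L - 1 - b) := by
    have hNL : ((N * L : ℕ) : ℤ) = (N : ℤ) * L := by push_cast; ring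
    rw [hNL] at hdecomp
    have : v' = c - v - (N : ℤ) * L * k := by linarith
    rw [this, hc, ← hv]; ring
  have h2 : v' / L = 2 * n - (N : ℤ) * k - a := by
    rw [h1, add_comm, mul_comm]
    rw [Int.add_mul_ediv_right _ _ (by positivity : (L:ℤ) ≠ 0)]
    rw [Int.ediv_eq_zero_of_lt (by omega) (by omega)]
    ring
  -- now conclude parity
  have hcast : (((thm (N * L) c x).val / L + x.val / L : ℕ) : ℤ) = v' / L + a := by
    push_cast [Int.natCast_ediv]
    rfl
  rw [← Int.even_coe_nat, hcast, h2]
  obtain ⟨m, hm⟩ := hNe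
  exact ⟨n - m * k, by push_cast [hm]; ring⟩

end FieldLem

/-- Generic ±1 spin. -/
noncomputable def spinA {T : Type*} (σ : T → Bool) (t : T) : ℝ := if σ t then 1 else -1

lemma spinA_comp {T : Type*} (σ : T → Bool) (ϑ : T → T) (t : T) :
    spinA (σ ∘ ϑ) t = spinA σ (ϑ t) := rfl

section Decomp
variable {T : Type*} [Fintype T] [DecidableEq T]

theorem site_decomp (ϑ : T → T) (L : T → Prop) [DecidablePred L]
    (hϑ : Function.Involutive ϑ)
    (hcov : ∀ t, L t ∨ L (ϑ t)) (hfix : ∀ t, L t → L (ϑ t) → ϑ t = t)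
    (G : (T → Bool) → T → ℝ) (σ : T → Bool)
    (hG : ∀ t, G (σ ∘ ϑ) (ϑ t) = G σ t) :
    ∑ t : T, G σ t
      = (∑ t : T, if L t then (if L (ϑ t) then (1/2 : ℝ) else 1) * G σ t else 0)
      + (∑ t : T, if L t then (if L (ϑ t) then (1/2 : ℝ) else 1) * G (σ ∘ ϑ) t else 0) := by
  have hG' : ∀ t, G (σ ∘ ϑ) t = G σ (ϑ t) := by
    intro t
    have := hG (ϑ t)
    rwa [hϑ t] at this
  have hre : (∑ t : T, if L t then (if L (ϑ t) then (1/2 : ℝ) else 1) * G (σ ∘ ϑ) t else 0)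
      = ∑ t : T, (if L (ϑ t) then (if L t then (1/2 : ℝ) else 1) * G σ t else 0) := by
    refine Fintype.sum_equiv (hϑ.toPerm ϑ) _ _ (fun t => ?_)
    have he : ((hϑ.toPerm ϑ) t : T) = ϑ t := rfl
    rw [he, hϑ t, hG' t]
  rw [hre, ← Finset.sum_add_distrib]
  refine Finset.sum_congr rfl (fun t _ => ?_)
  by_cases h1 : L t <;> by_cases h2 : L (ϑ t)
  · simp only [h1, h2, if_true]; ring
  · simp only [h1, h2, if_true, if_false]; ring
  · simp only [h1, h2, if_true, if_false]; ring
  · exact absurd (hcov t) (by tauto)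

theorem bond_decomp (ϑ sh : T → T) (L : T → Prop) [DecidablePred L]
    (hϑ : Function.Involutive ϑ)
    (hcomm : ∀ t, sh (ϑ (sh t)) = ϑ t)
    (hp1 : ∀ t, ϑ t = sh t → ¬(L t ∧ L (sh t)))
    (hp2 : ∀ t, ϑ t ≠ sh t → (L t ∧ L (sh t)) ∨ (L (ϑ (sh t)) ∧ L (ϑ t)))
    (σ : T → Bool) :
    ∑ t : T, spinA σ t * spinA σ (sh t)
      = (∑ t : T, if L t ∧ L (sh t) then
            (if L (ϑ (sh t)) ∧ L (ϑ t) then (1/2 : ℝ) else 1)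
              * (spinA σ t * spinA σ (sh t)) else 0)
      + (∑ t : T, if L t ∧ L (sh t) then
            (if L (ϑ (sh t)) ∧ L (ϑ t) then (1/2 : ℝ) else 1)
              * (spinA (σ ∘ ϑ) t * spinA (σ ∘ ϑ) (sh t)) else 0)
      + (∑ t : T, if ϑ t = sh t then
            spinA σ (if L t then t else sh t) * spinA (σ ∘ ϑ) (if L t then t else sh t)
          else 0) := by
  have hψ : Function.Involutive (fun t => ϑ (sh t)) := by
    intro t; simp only; rw [hcomm, hϑ]
  have hre : (∑ t : T, if L t ∧ L (sh t) then
        (if L (ϑ (sh t)) ∧ L (ϑ t) then (1/2 : ℝ) else 1)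
          * (spinA (σ ∘ ϑ) t * spinA (σ ∘ ϑ) (sh t)) else 0)
      = ∑ t : T, (if L (ϑ (sh t)) ∧ L (ϑ t) then
          (if L t ∧ L (sh t) then (1/2 : ℝ) else 1)
            * (spinA σ t * spinA σ (sh t)) else 0) := by
    refine Fintype.sum_equiv (hψ.toPerm _) _ _ (fun t => ?_)
    have he : ((hψ.toPerm _) t : T) = ϑ (sh t) := rfl
    rw [he]
    have e2 : sh (ϑ (sh t)) = ϑ t := hcomm t
    have e5 : ϑ (ϑ (sh t)) = sh t := hϑ (sh t)
    have e6 : ϑ (ϑ t) = t := hϑ t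
    rw [spinA_comp, spinA_comp, e2, e5, e6]
    by_cases hc : L t ∧ L (sh t) <;> by_cases hc' : L (ϑ (sh t)) ∧ L (ϑ t) <;>
      simp only [hc, hc', if_true, if_false] <;> ring
  rw [hre, ← Finset.sum_add_distrib, ← Finset.sum_add_distrib]
  refine Finset.sum_congr rfl (fun t _ => ?_)
  by_cases hfe : ϑ t = sh t
  · -- crossing bond
    have hEL : ¬(L t ∧ L (sh t)) := hp1 t hfe
    have hEL' : ¬(L (ϑ (sh t)) ∧ L (ϑ t)) := by
      rw [← hfe, hϑ t, hfe]
      tauto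
    rw [if_neg hEL, if_neg hEL', if_pos hfe]
    by_cases hl : L t
    · rw [if_pos hl, spinA_comp]
      have : ϑ t = sh t := hfe
      rw [this]
      ring_nf
    · rw [if_neg hl, spinA_comp]
      have : ϑ (sh t) = t := by rw [← hfe, hϑ t]
      rw [this]
      ring_nf
  · rcases hp2 t hfe with h | h
    · by_cases h' : L (ϑ (sh t)) ∧ L (ϑ t)
      · rw [if_pos h, if_pos h', if_pos h', if_pos h, if_neg hfe]; ring
      · rw [if_pos h, if_neg h', if_neg h', if_neg hfe]; ring
    · by_cases h'' : L t ∧ L (sh t)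
      · rw [if_pos h'', if_pos h, if_pos h, if_pos h'', if_neg hfe]; ring
      · rw [if_neg h'', if_pos h, if_neg h'', if_neg hfe]; ring

end Decomp

section Abstract2

section Abstract
variable {T : Type*} [Fintype T] [DecidableEq T]

/-- F-pattern of a configuration: data on the fixed points of `ϑ`. -/
def patF (ϑ : T → T) (a : T → Bool) : T → Bool := fun t => if ϑ t = t then a t else false

/-- Symmetric configurations with a given pattern. -/
def SymP (ϑ : T → T) (c : T → Bool) : Finset (T → Bool) :=
  univ.filter (fun a => (∀ t, a (ϑ t) = a t) ∧ patF ϑ a = c)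

def Pats (ϑ : T → T) : Finset (T → Bool) := univ.filter (fun c => patF ϑ c = c)

theorem fact_lemma (ϑ : T → T) (L : T → Prop) [DecidablePred L]
    (hϑ : Function.Involutive ϑ)
    (hcov : ∀ t, L t ∨ L (ϑ t)) (hfix : ∀ t, L t → L (ϑ t) → ϑ t = t)
    (u v : (T → Bool) → ℝ)
    (hu : ∀ σ σ', (∀ t, L t → σ t = σ' t) → u σ = u σ')
    (hv : ∀ σ σ', (∀ t, L t → σ t = σ' t) → v σ = v σ') :
    ∑ σ : T → Bool, u σ * v (σ ∘ ϑ)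
      = ∑ c ∈ Pats ϑ, (∑ a ∈ SymP ϑ c, u a) * (∑ b ∈ SymP ϑ c, v b) := by
  classical
  have hLfix : ∀ t, ϑ t = t → L t := by
    intro t h; rcases hcov t with h'|h'; · exact h'
    · rwa [h] at h'
  -- the right-hand side as a sum over a biUnion of products
  have hrhs : ∑ c ∈ Pats ϑ, (∑ a ∈ SymP ϑ c, u a) * (∑ b ∈ SymP ϑ c, v b)
      = ∑ p ∈ (Pats ϑ).biUnion (fun c => SymP ϑ c ×ˢ SymP ϑ c), u p.1 * v p.2 := by
    rw [Finset.sum_biUnion]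
    · refine Finset.sum_congr rfl (fun c _ => ?_)
      rw [Finset.sum_mul_sum, Finset.sum_product]
    · intro c hc c' hc' hne
      refine Finset.disjoint_left.2 (fun p hp hp' => hne ?_)
      simp only [Finset.mem_product, SymP, Finset.mem_filter] at hp hp'
      rw [← hp.1.2.2, hp'.1.2.2]
  rw [hrhs]
  refine Finset.sum_nbij'
    (fun σ => (fun t => if L t then σ t else σ (ϑ t), fun t => if L t then σ (ϑ t) else σ t))
    (fun p => fun t => if L t then p.1 t else p.2 t) ?_ ?_ ?_ ?_ ?_
  · -- membership
    intro σ _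
    have hsym1 : ∀ t, (fun t => if L t then σ t else σ (ϑ t)) (ϑ t)
        = (fun t => if L t then σ t else σ (ϑ t)) t := by
      intro t
      by_cases h1 : L t <;> by_cases h2 : L (ϑ t)
      · simp [h1, h2, hfix t h1 h2]
      · simp [h1, h2, hϑ t]
      · simp [h1, h2, hϑ t]
      · exact absurd (hcov t) (by tauto)
    have hsym2 : ∀ t, (fun t => if L t then σ (ϑ t) else σ t) (ϑ t)
        = (fun t => if L t then σ (ϑ t) else σ t) t := by
      intro t
      by_cases h1 : L t <;> by_cases h2 : L (ϑ t)
      · simp [h1, h2, hfix t h1 h2]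
      · simp [h1, h2, hϑ t]
      · simp [h1, h2, hϑ t]
      · exact absurd (hcov t) (by tauto)
    have hpat : patF ϑ (fun t => if L t then σ (ϑ t) else σ t)
        = patF ϑ (fun t => if L t then σ t else σ (ϑ t)) := by
      funext t
      simp only [patF]
      by_cases h : ϑ t = t
      · simp only [h, if_pos, hLfix t h, if_true]
      · simp only [h, if_neg, if_false]
    refine Finset.mem_biUnion.2 ⟨patF ϑ (fun t => if L t then σ t else σ (ϑ t)), ?_, ?_⟩
    · simp only [Pats, Finset.mem_filter, Finset.mem_univ, true_and]
      funext t
      simp only [patF]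
      by_cases h : ϑ t = t <;> simp [h]
    · refine Finset.mem_product.2 ⟨?_, ?_⟩
      · exact Finset.mem_filter.2 ⟨Finset.mem_univ _, hsym1, rfl⟩
      · exact Finset.mem_filter.2 ⟨Finset.mem_univ _, hsym2, hpat⟩
  · intro p _; exact Finset.mem_univ _
  · -- left inverse
    intro σ _
    funext t
    by_cases h : L t <;> simp [h]
  · -- right inverse
    intro p hp
    simp only [Finset.mem_biUnion, Finset.mem_product, SymP, Finset.mem_filter,
      Finset.mem_univ, true_and] at hp
    obtain ⟨c, hc, ⟨ha, hpa⟩, ⟨hb, hpb⟩⟩ := hp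
    have hpat : ∀ t, ϑ t = t → p.1 t = p.2 t := by
      intro t h
      have := congrFun (hpa.trans hpb.symm) t
      simpa only [patF, h, if_pos] using this
    have h1 : (fun t => if L t then (fun s => if L s then p.1 s else p.2 s) t
        else (fun s => if L s then p.1 s else p.2 s) (ϑ t)) = p.1 := by
      funext t
      by_cases h : L t
      · simp [h]
      · have hLϑ : L (ϑ t) := (hcov t).resolve_left h
        simp only [h, if_neg, if_false, hLϑ, if_pos, if_true]
        exact ha t
    have h2 : (fun t => if L t then (fun s => if L s then p.1 s else p.2 s) (ϑ t)
        else (fun s => if L s then p.1 s else p.2 s) t) = p.2 := by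
      funext t
      by_cases h : L t
      · by_cases h2 : L (ϑ t)
        · have hft := hfix t h h2
          simp only [h, if_pos, if_true, h2, hft]
          exact hpat t hft
        · simp only [h, if_pos, if_true, h2, if_neg, if_false]
          exact hb t
      · simp [h]
    exact Prod.ext h1 h2
  · -- values agree
    intro σ _
    have h1 : u σ = u (fun t => if L t then σ t else σ (ϑ t)) := by
      apply hu; intro t ht; simp [ht]
    have h2 : v (σ ∘ ϑ) = v (fun t => if L t then σ (ϑ t) else σ t) := by
      apply hv; intro t ht; simp [ht, Function.comp]
    rw [h1, h2]

section Abstract2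
variable {T : Type*} [Fintype T] [DecidableEq T]

theorem absCS (ϑ : T → T) (L : T → Prop) [DecidablePred L]
    (hϑ : Function.Involutive ϑ)
    (hcov : ∀ t, L t ∨ L (ϑ t)) (hfix : ∀ t, L t → L (ϑ t) → ϑ t = t)
    {ι : Type*} [Fintype ι] (A : ι → (T → Bool) → ℝ)
    (hA : ∀ (k : ι) σ σ', (∀ t, L t → σ t = σ' t) → A k σ = A k σ')
    (E : (T → Bool) → ℝ) (hE : ∀ σ, E σ = ∑ k : ι, A k σ * A k (σ ∘ ϑ))
    (f g : (T → Bool) → ℝ)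
    (hf : ∀ σ σ', (∀ t, L t → σ t = σ' t) → f σ = f σ')
    (hg : ∀ σ σ', (∀ t, L t → σ t = σ' t) → g σ = g σ') :
    (∑ σ : T → Bool, f σ * g (σ ∘ ϑ) * E σ) ^ 2
      ≤ (∑ σ : T → Bool, f σ * f (σ ∘ ϑ) * E σ)
        * (∑ σ : T → Bool, g σ * g (σ ∘ ϑ) * E σ) := by
  classical
  have key : ∀ u v : (T → Bool) → ℝ,
      (∀ σ σ', (∀ t, L t → σ t = σ' t) → u σ = u σ') →
      (∀ σ σ', (∀ t, L t → σ t = σ' t) → v σ = v σ') →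
      ∑ σ : T → Bool, u σ * v (σ ∘ ϑ) * E σ
        = ∑ p ∈ (univ : Finset ι) ×ˢ Pats ϑ,
            (∑ a ∈ SymP ϑ p.2, u a * A p.1 a) * (∑ b ∈ SymP ϑ p.2, v b * A p.1 b) := by
    intro u v hu hv
    have h1 : ∀ σ : T → Bool, u σ * v (σ ∘ ϑ) * E σ
        = ∑ k : ι, (u σ * A k σ) * (v (σ ∘ ϑ) * A k (σ ∘ ϑ)) := by
      intro σ; rw [hE σ, Finset.mul_sum]
      exact Finset.sum_congr rfl fun k _ => by ring
    rw [Finset.sum_congr rfl fun σ _ => h1 σ, Finset.sum_comm, Finset.sum_product]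
    refine Finset.sum_congr rfl fun k _ => ?_
    exact fact_lemma ϑ L hϑ hcov hfix (fun τ => u τ * A k τ) (fun τ => v τ * A k τ)
      (fun σ σ' h => by rw [hu σ σ' h, hA k σ σ' h])
      (fun σ σ' h => by rw [hv σ σ' h, hA k σ σ' h])
  rw [key f g hf hg, key f f hf hf, key g g hg hg]
  have hcs := Finset.sum_mul_sq_le_sq_mul_sq ((univ : Finset ι) ×ˢ Pats ϑ)
      (fun p => ∑ a ∈ SymP ϑ p.2, f a * A p.1 a)
      (fun p => ∑ a ∈ SymP ϑ p.2, g a * A p.1 a)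
  simpa [pow_two] using hcs

end Abstract2

section Master
variable {T : Type*} [Fintype T] [DecidableEq T]

noncomputable def QQ (ϑ sh pe : T → T) (L : T → Prop) [DecidablePred L]
    (hfd : T → ℝ) (β Jb : ℝ) (σ : T → Bool) : ℝ :=
  β * Jb * (∑ t : T, if L t ∧ L (sh t) then
        (if L (ϑ (sh t)) ∧ L (ϑ t) then (1/2 : ℝ) else 1)
          * (spinA σ t * spinA σ (sh t)) else 0)
  + β * Jb * (∑ t : T, if L t then (if L (ϑ t) then (1/2 : ℝ) else 1)
          * (spinA σ t * spinA σ (pe t)) else 0)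
  + β * (∑ t : T, if L t then (if L (ϑ t) then (1/2 : ℝ) else 1)
          * (hfd t * spinA σ t) else 0)

noncomputable def AA (ϑ sh pe : T → T) (L : T → Prop) [DecidablePred L]
    (hfd : T → ℝ) (β Jb : ℝ) (S : Finset T) (σ : T → Bool) : ℝ :=
  if S ⊆ univ.filter (fun t => ϑ t = sh t) then
    Real.sqrt (Real.sinh (β * Jb) ^ S.card
        * Real.cosh (β * Jb) ^ ((univ.filter (fun t => ϑ t = sh t)) \ S).card)
      * Real.exp (QQ ϑ sh pe L hfd β Jb σ)
      * ∏ t ∈ S, spinA σ (if L t then t else sh t)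
  else 0

lemma energy_id (ϑ sh pe : T → T) (L : T → Prop) [DecidablePred L]
    (hfd : T → ℝ) (β Jb : ℝ)
    (hϑ : Function.Involutive ϑ)
    (hcov : ∀ t, L t ∨ L (ϑ t)) (hfix : ∀ t, L t → L (ϑ t) → ϑ t = t)
    (hcomm : ∀ t, sh (ϑ (sh t)) = ϑ t)
    (hpe : ∀ t, pe (ϑ t) = ϑ (pe t))
    (hp1 : ∀ t, ϑ t = sh t → ¬(L t ∧ L (sh t)))
    (hp2 : ∀ t, ϑ t ≠ sh t → (L t ∧ L (sh t)) ∨ (L (ϑ (sh t)) ∧ L (ϑ t)))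
    (hfdi : ∀ t, hfd (ϑ t) = hfd t) (σ : T → Bool) :
    β * Jb * ∑ t : T, spinA σ t * spinA σ (sh t)
      + β * Jb * ∑ t : T, spinA σ t * spinA σ (pe t)
      + β * ∑ t : T, hfd t * spinA σ t
    = QQ ϑ sh pe L hfd β Jb σ + QQ ϑ sh pe L hfd β Jb (σ ∘ ϑ)
      + β * Jb * ∑ t ∈ univ.filter (fun t => ϑ t = sh t),
          spinA σ (if L t then t else sh t) * spinA (σ ∘ ϑ) (if L t then t else sh t) := by
  have h1 := bond_decomp ϑ sh L hϑ hcomm hp1 hp2 σ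
  have h2 := site_decomp ϑ L hϑ hcov hfix (fun σ t => spinA σ t * spinA σ (pe t)) σ (by
    intro t; simp only [spinA_comp]; rw [hϑ t, hpe t, hϑ (pe t)])
  have h3 := site_decomp ϑ L hϑ hcov hfix (fun σ t => hfd t * spinA σ t) σ (by
    intro t; simp only [spinA_comp]; rw [hϑ t, hfdi t])
  rw [h1, h2, h3, Finset.sum_filter]
  unfold QQ
  ring

lemma QQ_meas (ϑ sh pe : T → T) (L : T → Prop) [DecidablePred L]
    (hfd : T → ℝ) (β Jb : ℝ) (hLpe : ∀ t, L t → L (pe t)) (σ σ' : T → Bool)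
    (hagree : ∀ t, L t → σ t = σ' t) :
    QQ ϑ sh pe L hfd β Jb σ = QQ ϑ sh pe L hfd β Jb σ' := by
  have hs : ∀ t, L t → spinA σ t = spinA σ' t := by
    intro t ht; unfold spinA; rw [hagree t ht]
  unfold QQ
  have e1 : (∑ t : T, if L t ∧ L (sh t) then
        (if L (ϑ (sh t)) ∧ L (ϑ t) then (1/2 : ℝ) else 1)
          * (spinA σ t * spinA σ (sh t)) else 0)
      = ∑ t : T, if L t ∧ L (sh t) then
        (if L (ϑ (sh t)) ∧ L (ϑ t) then (1/2 : ℝ) else 1)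
          * (spinA σ' t * spinA σ' (sh t)) else 0 := by
    refine Finset.sum_congr rfl fun t _ => ?_
    by_cases hc : L t ∧ L (sh t)
    · rw [if_pos hc, if_pos hc, hs t hc.1, hs (sh t) hc.2]
    · rw [if_neg hc, if_neg hc]
  have e2 : (∑ t : T, if L t then (if L (ϑ t) then (1/2 : ℝ) else 1)
          * (spinA σ t * spinA σ (pe t)) else 0)
      = ∑ t : T, if L t then (if L (ϑ t) then (1/2 : ℝ) else 1)
          * (spinA σ' t * spinA σ' (pe t)) else 0 := by
    refine Finset.sum_congr rfl fun t _ => ?_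
    by_cases hc : L t
    · rw [if_pos hc, if_pos hc, hs t hc, hs (pe t) (hLpe t hc)]
    · rw [if_neg hc, if_neg hc]
  have e3 : (∑ t : T, if L t then (if L (ϑ t) then (1/2 : ℝ) else 1)
          * (hfd t * spinA σ t) else 0)
      = ∑ t : T, if L t then (if L (ϑ t) then (1/2 : ℝ) else 1)
          * (hfd t * spinA σ' t) else 0 := by
    refine Finset.sum_congr rfl fun t _ => ?_
    by_cases hc : L t
    · rw [if_pos hc, if_pos hc, hs t hc]
    · rw [if_neg hc, if_neg hc]
  rw [e1, e2, e3]

lemma AA_meas (ϑ sh pe : T → T) (L : T → Prop) [DecidablePred L]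
    (hfd : T → ℝ) (β Jb : ℝ)
    (hcov : ∀ t, L t ∨ L (ϑ t)) (hLpe : ∀ t, L t → L (pe t))
    (S : Finset T) (σ σ' : T → Bool)
    (hagree : ∀ t, L t → σ t = σ' t) :
    AA ϑ sh pe L hfd β Jb S σ = AA ϑ sh pe L hfd β Jb S σ' := by
  unfold AA
  by_cases hS : S ⊆ univ.filter (fun t => ϑ t = sh t)
  · rw [if_pos hS, if_pos hS, QQ_meas ϑ sh pe L hfd β Jb hLpe σ σ' hagree]
    have hprod : (∏ t ∈ S, spinA σ (if L t then t else sh t))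
        = ∏ t ∈ S, spinA σ' (if L t then t else sh t) := by
      refine Finset.prod_congr rfl fun t ht => ?_
      have hFe : ϑ t = sh t := (Finset.mem_filter.1 (hS ht)).2
      by_cases hl : L t
      · rw [if_pos hl]; unfold spinA; rw [hagree t hl]
      · rw [if_neg hl]
        have hLsh : L (sh t) := by
          rcases hcov t with h | h
          · exact absurd h hl
          · rwa [hFe] at h
        unfold spinA; rw [hagree (sh t) hLsh]
    rw [hprod]
  · rw [if_neg hS, if_neg hS]

lemma expandE (ϑ sh pe : T → T) (L : T → Prop) [DecidablePred L]
    (hfd : T → ℝ) (β Jb : ℝ) (hb : 0 ≤ β * Jb) (σ : T → Bool) :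
    Real.exp (QQ ϑ sh pe L hfd β Jb σ + QQ ϑ sh pe L hfd β Jb (σ ∘ ϑ)
      + β * Jb * ∑ t ∈ univ.filter (fun t => ϑ t = sh t),
          spinA σ (if L t then t else sh t) * spinA (σ ∘ ϑ) (if L t then t else sh t))
    = ∑ S : Finset T, AA ϑ sh pe L hfd β Jb S σ * AA ϑ sh pe L hfd β Jb S (σ ∘ ϑ) := by
  classical
  have hsinh : 0 ≤ Real.sinh (β * Jb) := Real.sinh_nonneg_iff.2 hb
  have hcosh : 0 ≤ Real.cosh (β * Jb) := (Real.cosh_pos _).le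
  rw [Real.exp_add, Real.exp_add, Finset.mul_sum, Real.exp_sum]
  have hfac : ∀ t ∈ univ.filter (fun t => ϑ t = sh t),
      Real.exp (β * Jb * (spinA σ (if L t then t else sh t)
          * spinA (σ ∘ ϑ) (if L t then t else sh t)))
      = Real.sinh (β * Jb) * (spinA σ (if L t then t else sh t)
          * spinA (σ ∘ ϑ) (if L t then t else sh t)) + Real.cosh (β * Jb) := by
    intro t _
    have hε : spinA σ (if L t then t else sh t) * spinA (σ ∘ ϑ) (if L t then t else sh t) = 1
        ∨ spinA σ (if L t then t else sh t) * spinA (σ ∘ ϑ) (if L t then t else sh t) = -1 := by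
      unfold spinA
      cases hx : σ (if L t then t else sh t) <;>
        cases hy : (σ ∘ ϑ) (if L t then t else sh t) <;> simp [hx, hy]
    rcases hε with h | h <;> rw [h]
    · rw [mul_one, mul_one, Real.sinh_add_cosh]
    · rw [mul_neg_one, mul_neg_one, ← Real.cosh_sub_sinh]; ring
  rw [Finset.prod_congr rfl hfac, Finset.prod_add, Finset.mul_sum]
  have hvan : ∀ S : Finset T, S ∉ (univ.filter (fun t => ϑ t = sh t)).powerset →
      AA ϑ sh pe L hfd β Jb S σ * AA ϑ sh pe L hfd β Jb S (σ ∘ ϑ) = 0 := by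
    intro S hS
    have hns : ¬ S ⊆ univ.filter (fun t => ϑ t = sh t) :=
      fun hsub => hS (Finset.mem_powerset.2 hsub)
    unfold AA
    rw [if_neg hns, zero_mul]
  rw [← Finset.sum_subset (Finset.subset_univ _) (fun S _ hS => hvan S hS)]
  refine Finset.sum_congr rfl fun S hS => ?_
  have hsub : S ⊆ univ.filter (fun t => ϑ t = sh t) := Finset.mem_powerset.1 hS
  unfold AA
  rw [if_pos hsub, if_pos hsub]
  have h1 : (∏ t ∈ S, Real.sinh (β * Jb) * (spinA σ (if L t then t else sh t)
        * spinA (σ ∘ ϑ) (if L t then t else sh t)))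
      = Real.sinh (β * Jb) ^ S.card
        * ((∏ t ∈ S, spinA σ (if L t then t else sh t))
          * ∏ t ∈ S, spinA (σ ∘ ϑ) (if L t then t else sh t)) := by
    rw [Finset.prod_mul_distrib, Finset.prod_const, Finset.prod_mul_distrib]
  have h2 : (∏ t ∈ (univ.filter (fun t => ϑ t = sh t)) \ S, Real.cosh (β * Jb))
      = Real.cosh (β * Jb) ^ ((univ.filter (fun t => ϑ t = sh t)) \ S).card :=
    Finset.prod_const _
  have h3 : Real.sqrt (Real.sinh (β * Jb) ^ S.card
        * Real.cosh (β * Jb) ^ ((univ.filter (fun t => ϑ t = sh t)) \ S).card)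
      * Real.sqrt (Real.sinh (β * Jb) ^ S.card
        * Real.cosh (β * Jb) ^ ((univ.filter (fun t => ϑ t = sh t)) \ S).card)
      = Real.sinh (β * Jb) ^ S.card
        * Real.cosh (β * Jb) ^ ((univ.filter (fun t => ϑ t = sh t)) \ S).card :=
    Real.mul_self_sqrt (mul_nonneg (pow_nonneg hsinh _) (pow_nonneg hcosh _))
  rw [h1, h2]
  linear_combination (-(Real.exp (QQ ϑ sh pe L hfd β Jb σ)
    * Real.exp (QQ ϑ sh pe L hfd β Jb (σ ∘ ϑ))
    * (∏ t ∈ S, spinA σ (if L t then t else sh t))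
    * (∏ t ∈ S, spinA (σ ∘ ϑ) (if L t then t else sh t)))) * h3

theorem master (ϑ sh pe : T → T) (L : T → Prop) [DecidablePred L]
    (hfd : T → ℝ) (β Jb : ℝ) (hb : 0 ≤ β * Jb)
    (hϑ : Function.Involutive ϑ)
    (hcov : ∀ t, L t ∨ L (ϑ t)) (hfix : ∀ t, L t → L (ϑ t) → ϑ t = t)
    (hcomm : ∀ t, sh (ϑ (sh t)) = ϑ t)
    (hpe : ∀ t, pe (ϑ t) = ϑ (pe t))
    (hLpe : ∀ t, L t → L (pe t))
    (hp1 : ∀ t, ϑ t = sh t → ¬(L t ∧ L (sh t)))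
    (hp2 : ∀ t, ϑ t ≠ sh t → (L t ∧ L (sh t)) ∨ (L (ϑ (sh t)) ∧ L (ϑ t)))
    (hfdi : ∀ t, hfd (ϑ t) = hfd t)
    (f g : (T → Bool) → ℝ)
    (hf : ∀ σ σ', (∀ t, L t → σ t = σ' t) → f σ = f σ')
    (hg : ∀ σ σ', (∀ t, L t → σ t = σ' t) → g σ = g σ') :
    (∑ σ : T → Bool, f σ * g (σ ∘ ϑ)
        * Real.exp (β * Jb * ∑ t : T, spinA σ t * spinA σ (sh t)
          + β * Jb * ∑ t : T, spinA σ t * spinA σ (pe t)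
          + β * ∑ t : T, hfd t * spinA σ t)) ^ 2
      ≤ (∑ σ : T → Bool, f σ * f (σ ∘ ϑ)
        * Real.exp (β * Jb * ∑ t : T, spinA σ t * spinA σ (sh t)
          + β * Jb * ∑ t : T, spinA σ t * spinA σ (pe t)
          + β * ∑ t : T, hfd t * spinA σ t))
      * (∑ σ : T → Bool, g σ * g (σ ∘ ϑ)
        * Real.exp (β * Jb * ∑ t : T, spinA σ t * spinA σ (sh t)
          + β * Jb * ∑ t : T, spinA σ t * spinA σ (pe t)
          + β * ∑ t : T, hfd t * spinA σ t)) := by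
  classical
  have hE : ∀ σ : T → Bool,
      Real.exp (β * Jb * ∑ t : T, spinA σ t * spinA σ (sh t)
          + β * Jb * ∑ t : T, spinA σ t * spinA σ (pe t)
          + β * ∑ t : T, hfd t * spinA σ t)
      = ∑ S : Finset T, AA ϑ sh pe L hfd β Jb S σ * AA ϑ sh pe L hfd β Jb S (σ ∘ ϑ) := by
    intro σ
    rw [energy_id ϑ sh pe L hfd β Jb hϑ hcov hfix hcomm hpe hp1 hp2 hfdi σ]
    exact expandE ϑ sh pe L hfd β Jb hb σ
  exact absCS ϑ L hϑ hcov hfix (AA ϑ sh pe L hfd β Jb)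
    (fun S σ σ' h => AA_meas ϑ sh pe L hfd β Jb hcov hLpe S σ σ' h)
    _ hE f g hf hg

end Master


lemma spin_eq {a b : ℕ} (σ : ZMod a × ZMod b → Bool) (t : ZMod a × ZMod b) :
    spin σ t = spinA σ t := rfl

set_option maxHeartbeats 2000000 in
theorem csr0 (L1 L2 N : ℕ) (hL1 : 0 < L1) (hL2 : 0 < L2)
    (hN : 2 ≤ N) (hNeven : Even N) [NeZero (N * L1)] [NeZero (N * L2)]
    (J h β : ℝ) (hJ : 0 < J) (hh : 0 < h) (hβ : 0 ≤ β) (n : ℤ)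
    (f g : (ZMod (N * L1) × ZMod (N * L2) → Bool) → ℝ)
    (hf : ∀ σ σ', (∀ t ∈ leftHalf L1 L2 N 0 n, σ t = σ' t) → f σ = f σ')
    (hg : ∀ σ σ', (∀ t ∈ leftHalf L1 L2 N 0 n, σ t = σ' t) → g σ = g σ') :
    (∑ σ : ZMod (N * L1) × ZMod (N * L2) → Bool,
        f σ * g (σ ∘ reflMap L1 L2 N 0 n) * Real.exp (-β * ham J (cellField L1 L2 h) σ)) ^ 2
      ≤ (∑ σ : ZMod (N * L1) × ZMod (N * L2) → Bool,
          f σ * f (σ ∘ reflMap L1 L2 N 0 n) * Real.exp (-β * ham J (cellField L1 L2 h) σ))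
        * (∑ σ : ZMod (N * L1) × ZMod (N * L2) → Bool,
          g σ * g (σ ∘ reflMap L1 L2 N 0 n) * Real.exp (-β * ham J (cellField L1 L2 h) σ)) := by
  classical
  have hM : 2 ≤ N * L1 := le_trans hN (Nat.le_mul_of_pos_right N hL1)
  set c : ℤ := 2 * n * L1 + L1 - 1 with hc
  have hϑdef : ∀ t : ZMod (N * L1) × ZMod (N * L2),
      reflMap L1 L2 N 0 n t = (thm (N * L1) c t.1, t.2) := by
    intro t
    simp [reflMap, thm, hc]
  have hLdef : ∀ t : ZMod (N * L1) × ZMod (N * L2),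
      t ∈ leftHalf L1 L2 N 0 n ↔ lh (N * L1) c t.1 := by
    intro t
    show (2 * (t.1.val : ℤ) - (2 * n * L1 + L1 - 1)) % (2 * ((N : ℤ) * L1)) ≤ (N : ℤ) * L1
      ↔ lh (N * L1) c t.1
    unfold lh yv
    rw [hc]
    push_cast
    rfl
  have hϑ : Function.Involutive (reflMap L1 L2 N 0 n) := by
    intro t
    simp only [hϑdef]
    exact Prod.ext (thm_invol t.1) rfl
  have hcov : ∀ t, (t ∈ leftHalf L1 L2 N 0 n) ∨ (reflMap L1 L2 N 0 n t ∈ leftHalf L1 L2 N 0 n) := by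
    intro t
    rcases lh_cov (c := c) hM t.1 with hl | hl
    · exact Or.inl ((hLdef t).2 hl)
    · right
      rw [hϑdef t]
      exact (hLdef _).2 hl
  have hfix : ∀ t, t ∈ leftHalf L1 L2 N 0 n → reflMap L1 L2 N 0 n t ∈ leftHalf L1 L2 N 0 n →
      reflMap L1 L2 N 0 n t = t := by
    intro t h1 h2
    rw [hϑdef t] at h2 ⊢
    exact Prod.ext (thm_fix hM t.1 ((hLdef t).1 h1) ((hLdef _).1 h2)) rfl
  have hcomm : ∀ t : ZMod (N * L1) × ZMod (N * L2),
      (reflMap L1 L2 N 0 n (t + ((1 : ZMod (N * L1)), (0 : ZMod (N * L2))))) + (1, 0)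
        = reflMap L1 L2 N 0 n t := by
    intro t
    simp only [hϑdef]
    refine Prod.ext ?_ ?_
    · show thm (N * L1) c (t.1 + 1) + 1 = thm (N * L1) c t.1
      unfold thm; ring
    · show t.2 + 0 + 0 = t.2
      simp
  have hpe : ∀ t : ZMod (N * L1) × ZMod (N * L2),
      (reflMap L1 L2 N 0 n t) + ((0 : ZMod (N * L1)), (1 : ZMod (N * L2)))
        = reflMap L1 L2 N 0 n (t + (0, 1)) := by
    intro t
    simp only [hϑdef]
    refine Prod.ext ?_ ?_
    · show thm (N * L1) c t.1 + 0 = thm (N * L1) c (t.1 + 0)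
      simp
    · rfl
  have hLpe : ∀ t : ZMod (N * L1) × ZMod (N * L2), t ∈ leftHalf L1 L2 N 0 n →
      t + ((0 : ZMod (N * L1)), (1 : ZMod (N * L2))) ∈ leftHalf L1 L2 N 0 n := by
    intro t ht
    have h' := (hLdef t).1 ht
    apply (hLdef _).2
    have he : (t + ((0 : ZMod (N * L1)), (1 : ZMod (N * L2)))).1 = t.1 := by simp
    rw [he]
    exact h'
  have hp1 : ∀ t : ZMod (N * L1) × ZMod (N * L2),
      reflMap L1 L2 N 0 n t = t + ((1 : ZMod (N * L1)), (0 : ZMod (N * L2))) →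
      ¬((t ∈ leftHalf L1 L2 N 0 n) ∧ (t + (1, 0) ∈ leftHalf L1 L2 N 0 n)) := by
    intro t heq
    rw [hϑdef t] at heq
    have h1 : thm (N * L1) c t.1 = t.1 + 1 := by
      have := congrArg Prod.fst heq
      simpa using this
    rintro ⟨ha, hb⟩
    refine lh_p1 hM t.1 h1 ⟨(hLdef t).1 ha, ?_⟩
    have := (hLdef _).1 hb
    simpa using this
  have hp2 : ∀ t : ZMod (N * L1) × ZMod (N * L2),
      reflMap L1 L2 N 0 n t ≠ t + ((1 : ZMod (N * L1)), (0 : ZMod (N * L2))) →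
      ((t ∈ leftHalf L1 L2 N 0 n) ∧ (t + (1, 0) ∈ leftHalf L1 L2 N 0 n))
        ∨ ((reflMap L1 L2 N 0 n (t + (1, 0)) ∈ leftHalf L1 L2 N 0 n)
            ∧ (reflMap L1 L2 N 0 n t ∈ leftHalf L1 L2 N 0 n)) := by
    intro t hne
    have h1 : thm (N * L1) c t.1 ≠ t.1 + 1 := by
      intro hx
      apply hne
      rw [hϑdef t, hx]
      exact Prod.ext (by simp) (by simp)
    rcases lh_p2 hM t.1 h1 with ⟨ha, hb⟩ | ⟨ha, hb⟩
    · refine Or.inl ⟨(hLdef t).2 ha, (hLdef _).2 ?_⟩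
      simpa using hb
    · refine Or.inr ⟨?_, ?_⟩
      · rw [hϑdef (t + (1, 0))]
        refine (hLdef _).2 ?_
        have he : (t + ((1 : ZMod (N * L1)), (0 : ZMod (N * L2)))).1 = t.1 + 1 := rfl
        show lh (N * L1) c (thm (N * L1) c ((t + ((1 : ZMod (N * L1)), (0 : ZMod (N * L2)))).1))
        rw [he]
        exact ha
      · rw [hϑdef t]
        exact (hLdef _).2 hb
  have hfdi : ∀ t : ZMod (N * L1) × ZMod (N * L2),
      cellField L1 L2 h (reflMap L1 L2 N 0 n t) = cellField L1 L2 h t := by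
    intro t
    rw [hϑdef t]
    have hp := field_parity hL1 hN hNeven n t.1
    rw [← hc] at hp
    have hiff : Even ((thm (N * L1) c t.1).val / L1 + t.2.val / L2)
        ↔ Even (t.1.val / L1 + t.2.val / L2) := by
      rw [Nat.even_add, Nat.even_add]
      rw [Nat.even_add] at hp
      tauto
    show (if Even ((thm (N * L1) c t.1).val / L1 + t.2.val / L2) then h else -h)
      = (if Even (t.1.val / L1 + t.2.val / L2) then h else -h)
    exact if_congr hiff rfl rfl
  have hham : ∀ σ : ZMod (N * L1) × ZMod (N * L2) → Bool,
      -β * ham J (cellField L1 L2 h) σ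
      = β * J * ∑ t, spinA σ t * spinA σ (t + ((1 : ZMod (N * L1)), (0 : ZMod (N * L2))))
        + β * J * ∑ t, spinA σ t * spinA σ (t + (0, 1))
        + β * ∑ t, cellField L1 L2 h t * spinA σ t := by
    intro σ
    unfold ham
    simp only [spin_eq]
    rw [Finset.sum_add_distrib]
    ring
  simp only [hham]
  exact master (reflMap L1 L2 N 0 n)
    (fun t => t + ((1 : ZMod (N * L1)), (0 : ZMod (N * L2))))
    (fun t => t + ((0 : ZMod (N * L1)), (1 : ZMod (N * L2))))
    (fun t => t ∈ leftHalf L1 L2 N 0 n) (cellField L1 L2 h) β J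
    (mul_nonneg hβ hJ.le) hϑ hcov hfix hcomm hpe hLpe hp1 hp2 hfdi f g hf hg

set_option maxHeartbeats 2000000 in
theorem csr1 (L1 L2 N : ℕ) (hL1 : 0 < L1) (hL2 : 0 < L2)
    (hN : 2 ≤ N) (hNeven : Even N) [NeZero (N * L1)] [NeZero (N * L2)]
    (J h β : ℝ) (hJ : 0 < J) (hh : 0 < h) (hβ : 0 ≤ β) (n : ℤ)
    (f g : (ZMod (N * L1) × ZMod (N * L2) → Bool) → ℝ)
    (hf : ∀ σ σ', (∀ t ∈ leftHalf L1 L2 N 1 n, σ t = σ' t) → f σ = f σ')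
    (hg : ∀ σ σ', (∀ t ∈ leftHalf L1 L2 N 1 n, σ t = σ' t) → g σ = g σ') :
    (∑ σ : ZMod (N * L1) × ZMod (N * L2) → Bool,
        f σ * g (σ ∘ reflMap L1 L2 N 1 n) * Real.exp (-β * ham J (cellField L1 L2 h) σ)) ^ 2
      ≤ (∑ σ : ZMod (N * L1) × ZMod (N * L2) → Bool,
          f σ * f (σ ∘ reflMap L1 L2 N 1 n) * Real.exp (-β * ham J (cellField L1 L2 h) σ))
        * (∑ σ : ZMod (N * L1) × ZMod (N * L2) → Bool,
          g σ * g (σ ∘ reflMap L1 L2 N 1 n) * Real.exp (-β * ham J (cellField L1 L2 h) σ)) := by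
  classical
  have hM : 2 ≤ N * L2 := le_trans hN (Nat.le_mul_of_pos_right N hL2)
  set c : ℤ := 2 * n * L2 + L2 - 1 with hc
  have hϑdef : ∀ t : ZMod (N * L1) × ZMod (N * L2),
      reflMap L1 L2 N 1 n t = (t.1, thm (N * L2) c t.2) := by
    intro t
    simp [reflMap, thm, hc]
  have hLdef : ∀ t : ZMod (N * L1) × ZMod (N * L2),
      t ∈ leftHalf L1 L2 N 1 n ↔ lh (N * L2) c t.2 := by
    intro t
    show (2 * (t.2.val : ℤ) - (2 * n * L2 + L2 - 1)) % (2 * ((N : ℤ) * L2)) ≤ (N : ℤ) * L2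
      ↔ lh (N * L2) c t.2
    unfold lh yv
    rw [hc]
    push_cast
    rfl
  have hϑ : Function.Involutive (reflMap L1 L2 N 1 n) := by
    intro t
    simp only [hϑdef]
    exact Prod.ext rfl (thm_invol t.2)
  have hcov : ∀ t, (t ∈ leftHalf L1 L2 N 1 n) ∨ (reflMap L1 L2 N 1 n t ∈ leftHalf L1 L2 N 1 n) := by
    intro t
    rcases lh_cov (c := c) hM t.2 with hl | hl
    · exact Or.inl ((hLdef t).2 hl)
    · right
      rw [hϑdef t]
      exact (hLdef _).2 hl
  have hfix : ∀ t, t ∈ leftHalf L1 L2 N 1 n → reflMap L1 L2 N 1 n t ∈ leftHalf L1 L2 N 1 n →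
      reflMap L1 L2 N 1 n t = t := by
    intro t h1 h2
    rw [hϑdef t] at h2 ⊢
    exact Prod.ext rfl (thm_fix hM t.2 ((hLdef t).1 h1) ((hLdef _).1 h2))
  have hcomm : ∀ t : ZMod (N * L1) × ZMod (N * L2),
      (reflMap L1 L2 N 1 n (t + ((0 : ZMod (N * L1)), (1 : ZMod (N * L2))))) + (0, 1)
        = reflMap L1 L2 N 1 n t := by
    intro t
    simp only [hϑdef]
    refine Prod.ext ?_ ?_
    · show t.1 + 0 + 0 = t.1
      simp
    · show thm (N * L2) c (t.2 + 1) + 1 = thm (N * L2) c t.2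
      unfold thm; ring
  have hpe : ∀ t : ZMod (N * L1) × ZMod (N * L2),
      (reflMap L1 L2 N 1 n t) + ((1 : ZMod (N * L1)), (0 : ZMod (N * L2)))
        = reflMap L1 L2 N 1 n (t + (1, 0)) := by
    intro t
    simp only [hϑdef]
    refine Prod.ext ?_ ?_
    · rfl
    · show thm (N * L2) c t.2 + 0 = thm (N * L2) c (t.2 + 0)
      simp
  have hLpe : ∀ t : ZMod (N * L1) × ZMod (N * L2), t ∈ leftHalf L1 L2 N 1 n →
      t + ((1 : ZMod (N * L1)), (0 : ZMod (N * L2))) ∈ leftHalf L1 L2 N 1 n := by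
    intro t ht
    have h' := (hLdef t).1 ht
    apply (hLdef _).2
    have he : (t + ((1 : ZMod (N * L1)), (0 : ZMod (N * L2)))).2 = t.2 := by simp
    rw [he]
    exact h'
  have hp1 : ∀ t : ZMod (N * L1) × ZMod (N * L2),
      reflMap L1 L2 N 1 n t = t + ((0 : ZMod (N * L1)), (1 : ZMod (N * L2))) →
      ¬((t ∈ leftHalf L1 L2 N 1 n) ∧ (t + (0, 1) ∈ leftHalf L1 L2 N 1 n)) := by
    intro t heq
    rw [hϑdef t] at heq
    have h1 : thm (N * L2) c t.2 = t.2 + 1 := by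
      have := congrArg Prod.snd heq
      simpa using this
    rintro ⟨ha, hb⟩
    refine lh_p1 hM t.2 h1 ⟨(hLdef t).1 ha, ?_⟩
    have := (hLdef _).1 hb
    simpa using this
  have hp2 : ∀ t : ZMod (N * L1) × ZMod (N * L2),
      reflMap L1 L2 N 1 n t ≠ t + ((0 : ZMod (N * L1)), (1 : ZMod (N * L2))) →
      ((t ∈ leftHalf L1 L2 N 1 n) ∧ (t + (0, 1) ∈ leftHalf L1 L2 N 1 n))
        ∨ ((reflMap L1 L2 N 1 n (t + (0, 1)) ∈ leftHalf L1 L2 N 1 n)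
            ∧ (reflMap L1 L2 N 1 n t ∈ leftHalf L1 L2 N 1 n)) := by
    intro t hne
    have h1 : thm (N * L2) c t.2 ≠ t.2 + 1 := by
      intro hx
      apply hne
      rw [hϑdef t, hx]
      exact Prod.ext (by simp) (by simp)
    rcases lh_p2 hM t.2 h1 with ⟨ha, hb⟩ | ⟨ha, hb⟩
    · refine Or.inl ⟨(hLdef t).2 ha, (hLdef _).2 ?_⟩
      simpa using hb
    · refine Or.inr ⟨?_, ?_⟩
      · rw [hϑdef (t + (0, 1))]
        refine (hLdef _).2 ?_
        have he : (t + ((0 : ZMod (N * L1)), (1 : ZMod (N * L2)))).2 = t.2 + 1 := rfl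
        show lh (N * L2) c (thm (N * L2) c ((t + ((0 : ZMod (N * L1)), (1 : ZMod (N * L2)))).2))
        rw [he]
        exact ha
      · rw [hϑdef t]
        exact (hLdef _).2 hb
  have hfdi : ∀ t : ZMod (N * L1) × ZMod (N * L2),
      cellField L1 L2 h (reflMap L1 L2 N 1 n t) = cellField L1 L2 h t := by
    intro t
    rw [hϑdef t]
    have hp := field_parity hL2 hN hNeven n t.2
    rw [← hc] at hp
    have hiff : Even (t.1.val / L1 + (thm (N * L2) c t.2).val / L2)
        ↔ Even (t.1.val / L1 + t.2.val / L2) := by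
      rw [Nat.even_add, Nat.even_add]
      rw [Nat.even_add] at hp
      tauto
    show (if Even (t.1.val / L1 + (thm (N * L2) c t.2).val / L2) then h else -h)
      = (if Even (t.1.val / L1 + t.2.val / L2) then h else -h)
    exact if_congr hiff rfl rfl
  have hham : ∀ σ : ZMod (N * L1) × ZMod (N * L2) → Bool,
      -β * ham J (cellField L1 L2 h) σ
      = β * J * ∑ t, spinA σ t * spinA σ (t + ((0 : ZMod (N * L1)), (1 : ZMod (N * L2))))
        + β * J * ∑ t, spinA σ t * spinA σ (t + (1, 0))
        + β * ∑ t, cellField L1 L2 h t * spinA σ t := by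
    intro σ
    unfold ham
    simp only [spin_eq]
    rw [Finset.sum_add_distrib]
    ring
  simp only [hham]
  exact master (reflMap L1 L2 N 1 n)
    (fun t => t + ((0 : ZMod (N * L1)), (1 : ZMod (N * L2))))
    (fun t => t + ((1 : ZMod (N * L1)), (0 : ZMod (N * L2))))
    (fun t => t ∈ leftHalf L1 L2 N 1 n) (cellField L1 L2 h) β J
    (mul_nonneg hβ hJ.le) hϑ hcov hfix hcomm hpe hLpe hp1 hp2 hfdi f g hf hg

/-- Cauchy–Schwarz inequality from reflection positivity: for all
functions `f, g` on configuration space depending only on the restriction to the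
left half `𝕋ˡ`,
`[Σ_σ f(σ)·g(σ∘ϑ)·e^{−βH_N(σ)}]² ≤
  [Σ_σ f(σ)·f(σ∘ϑ)·e^{−βH_N(σ)}]·[Σ_σ g(σ)·g(σ∘ϑ)·e^{−βH_N(σ)}]`. -/
theorem cauchy_schwarz_reflection (L1 L2 N : ℕ) (hL1 : 0 < L1) (hL2 : 0 < L2)
    (hN : 2 ≤ N) (hNeven : Even N) [NeZero (N * L1)] [NeZero (N * L2)]
    (J h β : ℝ) (hJ : 0 < J) (hh : 0 < h) (hβ : 0 ≤ β) (i : Fin 2) (n : ℤ)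
    (f g : (ZMod (N * L1) × ZMod (N * L2) → Bool) → ℝ)
    (hf : ∀ σ σ', (∀ t ∈ leftHalf L1 L2 N i n, σ t = σ' t) → f σ = f σ')
    (hg : ∀ σ σ', (∀ t ∈ leftHalf L1 L2 N i n, σ t = σ' t) → g σ = g σ') :
    (∑ σ : ZMod (N * L1) × ZMod (N * L2) → Bool,
        f σ * g (σ ∘ reflMap L1 L2 N i n) * Real.exp (-β * ham J (cellField L1 L2 h) σ)) ^ 2
      ≤ (∑ σ : ZMod (N * L1) × ZMod (N * L2) → Bool,
          f σ * f (σ ∘ reflMap L1 L2 N i n) * Real.exp (-β * ham J (cellField L1 L2 h) σ))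
        * (∑ σ : ZMod (N * L1) × ZMod (N * L2) → Bool,
          g σ * g (σ ∘ reflMap L1 L2 N i n) * Real.exp (-β * ham J (cellField L1 L2 h) σ)) := by
  fin_cases i
  · exact csr0 L1 L2 N hL1 hL2 hN hNeven J h β hJ hh hβ n f g hf hg
  · exact csr1 L1 L2 N hL1 hL2 hN hNeven J h β hJ hh hβ n f g hf hg
end Abstract
end Abstract2
end

section
/- (Peierls bound on the fundamental torus.) Let L₁, L₂ be positive integers, J > 0, h > 0, and suppose h < 2J/L₁ + 2J/L₂. Then every non-constant configuration σ ∈ {−1,+1}^{𝕋^{[2×2]}} on the torus 𝕋^{[2×2]} = (ℤ/2L₁ℤ) × (ℤ/2L₂ℤ) satisfies H_{[2×2]}(σ) − H_{[2×2]}(σ⁺) ≥ 4·(2J − h·L₁L₂/(L₁+L₂)), where σ⁺ ≡ +1. -/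
open Finset

noncomputable def epsSgn (L : ℕ) {n : ℕ} (x : ZMod n) : ℝ :=
  if Even (x.val / L) then 1 else -1

lemma epsSgn_abs (L : ℕ) {n : ℕ} (x : ZMod n) : |epsSgn L x| = 1 := by
  unfold epsSgn; split <;> simp

noncomputable def pot (L : ℕ) {n : ℕ} (x : ZMod n) : ℝ :=
  min (x.val : ℝ) ((n : ℝ) - x.val) - L / 2

lemma pot_abs {L n : ℕ} [NeZero n] (hn : n = 2 * L) (x : ZMod n) :
    |pot L x| ≤ L / 2 := by
  have hv : x.val < n := ZMod.val_lt x
  have hv' : (0:ℝ) ≤ (x.val : ℝ) := by positivity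
  have hv2 : (x.val : ℝ) ≤ n := by exact_mod_cast hv.le
  have hnL : (n : ℝ) = 2 * L := by exact_mod_cast congrArg (Nat.cast (R := ℝ)) hn
  rw [abs_le]; unfold pot
  constructor
  · have : (0:ℝ) ≤ min (x.val : ℝ) ((n : ℝ) - x.val) := le_min hv' (by linarith)
    linarith
  · rcases le_total ((x.val:ℝ)) ((n:ℝ) - x.val) with hc | hc
    · rw [min_eq_left hc]; linarith
    · rw [min_eq_right hc]; linarith

lemma pot_step {L n : ℕ} [NeZero n] (hn : n = 2 * L) (hL : 0 < L) (x : ZMod n) :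
    pot L (x + 1) - pot L x = epsSgn L x := by
  have hn1 : 1 < n := by omega
  haveI : Fact (1 < n) := ⟨hn1⟩
  have hv : x.val < n := ZMod.val_lt x
  have hadd : (x + 1).val = (x.val + 1) % n := by
    rw [ZMod.val_add, ZMod.val_one]
  by_cases hc : x.val + 1 < n
  · have h1 : (x + 1).val = x.val + 1 := by rw [hadd, Nat.mod_eq_of_lt hc]
    unfold pot epsSgn
    rw [h1]
    by_cases hvL : x.val < L
    · have hd : x.val / L = 0 := Nat.div_eq_of_lt hvL
      rw [if_pos (by simp [hd])]
      have hle : (x.val : ℝ) + 1 ≤ L := by exact_mod_cast hvL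
      have hnr : (n : ℝ) = 2 * L := by exact_mod_cast hn
      have e1 : min ((x.val + 1 : ℕ) : ℝ) ((n:ℝ) - (x.val + 1 : ℕ)) = (x.val : ℝ) + 1 := by
        push_cast
        rw [min_eq_left]
        linarith
      have e2 : min ((x.val : ℕ) : ℝ) ((n:ℝ) - x.val) = (x.val : ℝ) := by
        rw [min_eq_left]
        linarith
      rw [e1, e2]; ring
    · push_neg at hvL
      have hd : x.val / L = 1 := Nat.div_eq_of_lt_le (by omega) (by omega)
      rw [if_neg (by simp [hd])]
      have hLv : (L : ℝ) ≤ (x.val : ℝ) := by exact_mod_cast hvL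
      have hnr : (n : ℝ) = 2 * L := by exact_mod_cast hn
      have e1 : min ((x.val + 1 : ℕ) : ℝ) ((n:ℝ) - (x.val + 1 : ℕ)) = (n:ℝ) - x.val - 1 := by
        push_cast; rw [min_eq_right]; · ring
        · linarith
      have e2 : min ((x.val : ℕ) : ℝ) ((n:ℝ) - x.val) = (n : ℝ) - x.val := by
        rw [min_eq_right]; linarith
      rw [e1, e2]; ring
  · have hveq : x.val = n - 1 := by omega
    have hvn : x.val + 1 = n := by omega
    have h1 : (x + 1).val = 0 := by rw [hadd, hvn, Nat.mod_self]
    have hd : x.val / L = 1 := Nat.div_eq_of_lt_le (by omega) (by omega)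
    unfold pot epsSgn
    rw [if_neg (by simp [hd]), h1, hveq]
    have hnr : (n : ℝ) = 2 * L := by exact_mod_cast hn
    have hc1 : ((n - 1 : ℕ) : ℝ) = (n : ℝ) - 1 := by
      have : 1 ≤ n := by omega
      push_cast [this]; ring
    rw [hc1]
    have hn2 : (2:ℝ) ≤ (n:ℝ) := by exact_mod_cast hn1
    have e1 : min ((0:ℕ) : ℝ) ((n:ℝ) - (0:ℕ)) = 0 := by
      simp only [Nat.cast_zero, sub_zero]
      rw [min_eq_left (by positivity)]
    have e2 : min ((n:ℝ) - 1) ((n:ℝ) - ((n:ℝ) - 1)) = 1 := by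
      rw [show (n:ℝ) - ((n:ℝ) - 1) = 1 by ring, min_eq_right (by linarith)]
    rw [e1, e2]; ring

lemma row_bound (L : ℕ) [NeZero (2 * L)] (hL : 0 < L) (w : ZMod (2 * L) → ℝ) :
    |∑ x : ZMod (2 * L), epsSgn L x * w x|
      ≤ (L : ℝ) / 2 * ∑ x : ZMod (2 * L), |w x - w (x + 1)| := by
  have key : ∑ x : ZMod (2 * L), epsSgn L x * w x
      = ∑ x : ZMod (2 * L), pot L (x + 1) * (w x - w (x + 1)) := by
    have h1 : ∀ x : ZMod (2 * L), epsSgn L x * w x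
        = pot L (x + 1) * w x - pot L x * w x := by
      intro x; rw [← pot_step rfl hL x]; ring
    rw [Finset.sum_congr rfl fun x _ => h1 x, Finset.sum_sub_distrib]
    have h2 : ∑ x : ZMod (2 * L), pot L (x + 1) * w (x + 1)
        = ∑ x : ZMod (2 * L), pot L x * w x :=
      Fintype.sum_equiv (Equiv.addRight (1 : ZMod (2 * L)))
        (fun x => pot L (x + 1) * w (x + 1)) (fun x => pot L x * w x) (fun x => rfl)
    rw [← h2, ← Finset.sum_sub_distrib]
    exact Finset.sum_congr rfl fun x _ => by ring
  rw [key]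
  calc |∑ x : ZMod (2 * L), pot L (x + 1) * (w x - w (x + 1))|
      ≤ ∑ x : ZMod (2 * L), |pot L (x + 1) * (w x - w (x + 1))| :=
        Finset.abs_sum_le_sum_abs _ _
    _ ≤ ∑ x : ZMod (2 * L), (L : ℝ) / 2 * |w x - w (x + 1)| := by
        apply Finset.sum_le_sum
        intro x _
        rw [abs_mul]
        exact mul_le_mul_of_nonneg_right (pot_abs rfl _) (abs_nonneg _)
    _ = (L : ℝ) / 2 * ∑ x : ZMod (2 * L), |w x - w (x + 1)| := by
        rw [Finset.mul_sum]

lemma even_card_changes {G : Type*} [AddGroup G] [Fintype G] [DecidableEq G]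
    (f : G → Bool) (c : G) :
    Even (Finset.univ.filter (fun x => f x ≠ f (x + c))).card := by
  classical
  have hz : ∀ a : ZMod 2, a + a = 0 := by decide
  have h1 : ((Finset.univ.filter (fun x => f x ≠ f (x + c))).card : ZMod 2)
      = ∑ x : G, ((if f x then (1 : ZMod 2) else 0) + (if f (x + c) then 1 else 0)) := by
    rw [← Finset.sum_boole]
    apply Finset.sum_congr rfl
    intro x _
    by_cases h : f x <;> by_cases h' : f (x + c) <;> simp [h, h'] <;> decide
  have h2 : ∑ x : G, ((if f x then (1 : ZMod 2) else 0) + (if f (x + c) then 1 else 0)) = 0 := by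
    rw [Finset.sum_add_distrib]
    have h3 : ∑ x : G, (if f (x + c) then (1 : ZMod 2) else 0)
        = ∑ x : G, (if f x then (1 : ZMod 2) else 0) :=
      Fintype.sum_equiv (Equiv.addRight c)
        (fun x => if f (x + c) then (1 : ZMod 2) else 0)
        (fun x => if f x then (1 : ZMod 2) else 0) (fun x => rfl)
    rw [h3, hz]
  rw [h2] at h1
  have := (ZMod.natCast_eq_zero_iff _ 2).mp h1
  obtain ⟨k, hk⟩ := this
  exact ⟨k, by omega⟩

lemma const_of_step {n : ℕ} [NeZero n] (f : ZMod n → Bool)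
    (hf : ∀ x, f x = f (x + 1)) (x : ZMod n) : f x = f 0 := by
  have key : ∀ k : ℕ, f ((k : ℕ) : ZMod n) = f 0 := by
    intro k
    induction k with
    | zero => simp
    | succ m ih => push_cast; rw [← hf]; exact_mod_cast ih
  have := key x.val
  rwa [ZMod.natCast_zmod_val] at this

lemma four_le_aux {a b : ℕ} [NeZero a] [NeZero b] (ha : 2 ≤ a)
    (σ : ZMod a × ZMod b → Bool)
    (h1 : ∀ t, σ t = σ (t + (1, 0)))
    (hσ : ∃ t u, σ t ≠ σ u) :
    4 ≤ (Finset.univ.filter (fun t : ZMod a × ZMod b => σ t ≠ σ (t + (0, 1)))).card := by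
  classical
  haveI : Fact (1 < a) := ⟨by omega⟩
  have hcol : ∀ x y, σ (x, y) = σ (0, y) := by
    intro x y
    have hf : ∀ x : ZMod a, σ (x, y) = σ (x + 1, y) := by
      intro x
      have := h1 (x, y)
      simpa [Prod.ext_iff] using this
    exact const_of_step (fun x => σ (x, y)) hf x
  set g : ZMod b → Bool := fun y => σ (0, y) with hg
  set C : Finset (ZMod b) := Finset.univ.filter (fun y => g y ≠ g (y + 1)) with hC
  have hCne : C.Nonempty := by
    by_contra hemp
    rw [Finset.not_nonempty_iff_eq_empty, hC, Finset.filter_eq_empty_iff] at hemp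
    have hconst : ∀ y, g y = g 0 := by
      intro y
      exact const_of_step g (fun y => not_ne_iff.mp (hemp (Finset.mem_univ y))) y
    obtain ⟨t, u, htu⟩ := hσ
    apply htu
    calc σ t = g t.2 := by rw [show t = (t.1, t.2) from rfl, hcol]
      _ = g 0 := hconst _
      _ = g u.2 := (hconst _).symm
      _ = σ u := by rw [show u = (u.1, u.2) from rfl]; exact (hcol u.1 u.2).symm
  have hCeven : Even C.card := even_card_changes g 1
  have hC2 : 1 < C.card := by
    rcases hCeven with ⟨k, hk⟩
    have := Finset.card_pos.mpr hCne
    omega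
  obtain ⟨y1, hy1, y2, hy2, hy12⟩ := Finset.one_lt_card.mp hC2
  have h01 : (0 : ZMod a) ≠ 1 := by
    intro hcon
    have := congrArg ZMod.val hcon
    rw [ZMod.val_zero, ZMod.val_one] at this
    exact absurd this (by omega)
  set S : Finset (ZMod a × ZMod b) := {(0, y1), (1, y1), (0, y2), (1, y2)} with hS
  have hsub : S ⊆ Finset.univ.filter (fun t : ZMod a × ZMod b => σ t ≠ σ (t + (0, 1))) := by
    intro t ht
    rw [hS] at ht
    simp only [Finset.mem_insert, Finset.mem_singleton] at ht
    have key : ∀ i : ZMod a, ∀ y : ZMod b, y ∈ C →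
        ((i, y) : ZMod a × ZMod b) ∈
          Finset.univ.filter (fun t : ZMod a × ZMod b => σ t ≠ σ (t + (0, 1))) := by
      intro i y hy
      rw [Finset.mem_filter]
      refine ⟨Finset.mem_univ _, ?_⟩
      rw [hC, Finset.mem_filter] at hy
      have : ((i, y) : ZMod a × ZMod b) + (0, 1) = (i, y + 1) := by
        simp [Prod.ext_iff]
      rw [this, hcol i y, hcol i (y + 1)]
      exact hy.2
    rcases ht with h | h | h | h <;> rw [h] <;> [exact key 0 y1 hy1; exact key 1 y1 hy1;
      exact key 0 y2 hy2; exact key 1 y2 hy2]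
  have hcard : S.card = 4 := by
    rw [hS]
    rw [Finset.card_insert_of_notMem (by simp [Prod.ext_iff, h01, hy12]),
      Finset.card_insert_of_notMem (by simp [Prod.ext_iff, h01.symm, hy12]),
      Finset.card_insert_of_notMem (by simp [Prod.ext_iff, h01, hy12]),
      Finset.card_singleton]
  calc 4 = S.card := hcard.symm
    _ ≤ _ := Finset.card_le_card hsub

lemma sum_changes_ge_four {a b : ℕ} [NeZero a] [NeZero b] (ha : 2 ≤ a) (hb : 2 ≤ b)
    (σ : ZMod a × ZMod b → Bool) (hσ : ∃ t u, σ t ≠ σ u) :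
    4 ≤ (Finset.univ.filter (fun t : ZMod a × ZMod b => σ t ≠ σ (t + (1, 0)))).card
      + (Finset.univ.filter (fun t : ZMod a × ZMod b => σ t ≠ σ (t + (0, 1)))).card := by
  classical
  set B1 := (Finset.univ.filter (fun t : ZMod a × ZMod b => σ t ≠ σ (t + (1, 0)))).card with hB1d
  set B2 := (Finset.univ.filter (fun t : ZMod a × ZMod b => σ t ≠ σ (t + (0, 1)))).card with hB2d
  by_cases hB1 : B1 = 0
  · have hinv : ∀ t, σ t = σ (t + (1, 0)) := by
      intro t
      have := Finset.card_eq_zero.mp hB1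
      rw [Finset.filter_eq_empty_iff] at this
      exact not_ne_iff.mp (this (Finset.mem_univ t))
    have h4 := four_le_aux ha σ hinv hσ
    omega
  · by_cases hB2 : B2 = 0
    · have hinv : ∀ t, σ t = σ (t + (0, 1)) := by
        intro t
        have := Finset.card_eq_zero.mp hB2
        rw [Finset.filter_eq_empty_iff] at this
        exact not_ne_iff.mp (this (Finset.mem_univ t))
      set τ : ZMod b × ZMod a → Bool := fun t => σ (t.2, t.1) with hτ
      have hτinv : ∀ t, τ t = τ (t + (1, 0)) := by
        intro t
        show σ (t.2, t.1) = σ ((t + (1, 0)).2, (t + (1, 0)).1)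
        have h2 : ((t + (1, 0)).2, (t + (1, 0)).1) = ((t.2, t.1) : ZMod a × ZMod b) + (0, 1) := by
          simp [Prod.ext_iff]
        rw [h2]
        exact hinv (t.2, t.1)
      have hτσ : ∃ t u, τ t ≠ τ u := by
        obtain ⟨t, u, htu⟩ := hσ
        exact ⟨(t.2, t.1), (u.2, u.1), htu⟩
      have h4 := four_le_aux hb τ hτinv hτσ
      have hcards : (Finset.univ.filter
          (fun t : ZMod b × ZMod a => τ t ≠ τ (t + (0, 1)))).card = B1 := by
        rw [hB1d]
        apply Finset.card_bij (fun t _ => (t.2, t.1))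
        · intro t ht
          rw [Finset.mem_filter] at ht ⊢
          refine ⟨Finset.mem_univ _, ?_⟩
          have h2 : τ (t + (0, 1)) = σ ((t.2, t.1) + (1, 0)) := by
            show σ ((t + (0, 1)).2, (t + (0, 1)).1) = σ ((t.2, t.1) + (1, 0))
            congr 1
          rw [← h2]
          exact ht.2
        · intro t _ u _ h
          simp only [Prod.mk.injEq] at h
          exact Prod.ext h.2 h.1
        · intro t ht
          refine ⟨(t.2, t.1), ?_, rfl⟩
          rw [Finset.mem_filter] at ht ⊢
          refine ⟨Finset.mem_univ _, ?_⟩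
          have h2 : τ ((t.2, t.1) + (0, 1)) = σ (t + (1, 0)) := by
            show σ (((t.2, t.1) + ((0 : ZMod b), (1 : ZMod a))).2,
              ((t.2, t.1) + ((0 : ZMod b), (1 : ZMod a))).1) = σ (t + (1, 0))
            congr 1
          show ¬ τ (t.2, t.1) = τ ((t.2, t.1) + (0, 1))
          rw [h2]
          exact ht.2
      omega
    · have he1 : Even B1 := even_card_changes σ (1, 0)
      have he2 : Even B2 := even_card_changes σ (0, 1)
      rcases he1 with ⟨k, hk⟩
      rcases he2 with ⟨m, hm⟩
      omega


lemma cellField_eq (L1 L2 : ℕ) (h : ℝ) {a b : ℕ} (t : ZMod a × ZMod b) :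
    cellField L1 L2 h t = h * (epsSgn L1 t.1 * epsSgn L2 t.2) := by
  unfold cellField epsSgn
  by_cases h1 : Even (t.1.val / L1) <;> by_cases h2 : Even (t.2.val / L2) <;>
    simp [h1, h2, Nat.even_add] <;> ring


/-- Peierls bound on the fundamental torus: if `h < 2J/L₁ + 2J/L₂`,
every non-constant configuration `σ` on `𝕋^{[2×2]} = (ℤ/2L₁ℤ) × (ℤ/2L₂ℤ)` satisfies
`H_{[2×2]}(σ) − H_{[2×2]}(σ⁺) ≥ 4·(2J − h·L₁L₂/(L₁+L₂))`, where `σ⁺ ≡ +1`. -/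
theorem peierls_bound_fundamental_torus (L1 L2 : ℕ) (hL1 : 0 < L1) (hL2 : 0 < L2)
    [NeZero (2 * L1)] [NeZero (2 * L2)] (J h : ℝ) (hJ : 0 < J) (hh : 0 < h)
    (hcond : h < 2 * J / (L1 : ℝ) + 2 * J / (L2 : ℝ))
    (σ : ZMod (2 * L1) × ZMod (2 * L2) → Bool) (hσ : ∃ t u, σ t ≠ σ u) :
    ham J (cellField L1 L2 h) σ
        - ham J (cellField L1 L2 h) (fun _ : ZMod (2 * L1) × ZMod (2 * L2) => true)
      ≥ 4 * (2 * J - h * (L1 : ℝ) * (L2 : ℝ) / ((L1 : ℝ) + (L2 : ℝ))) := by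
  classical
  set χ : ZMod (2 * L1) × ZMod (2 * L2) → ℝ := fun t => if σ t then 0 else 1 with hχ
  set B1 : ℕ := (Finset.univ.filter
    (fun t : ZMod (2 * L1) × ZMod (2 * L2) => σ t ≠ σ (t + (1, 0)))).card with hB1
  set B2 : ℕ := (Finset.univ.filter
    (fun t : ZMod (2 * L1) × ZMod (2 * L2) => σ t ≠ σ (t + (0, 1)))).card with hB2
  set Sf : ℝ := ∑ t : ZMod (2 * L1) × ZMod (2 * L2),
    (epsSgn L1 t.1 * epsSgn L2 t.2) * χ t with hSf
  -- Step 1: energy expansion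
  have hbond : ∀ e : ZMod (2 * L1) × ZMod (2 * L2),
      ∑ t : ZMod (2 * L1) × ZMod (2 * L2), (1 - spin σ t * spin σ (t + e))
        = 2 * ((Finset.univ.filter
            (fun t : ZMod (2 * L1) × ZMod (2 * L2) => σ t ≠ σ (t + e))).card : ℝ) := by
    intro e
    have hpt : ∀ t : ZMod (2 * L1) × ZMod (2 * L2),
        1 - spin σ t * spin σ (t + e)
          = 2 * (if σ t ≠ σ (t + e) then (1 : ℝ) else 0) := by
      intro t
      by_cases h1 : σ t <;> by_cases h2 : σ (t + e) <;> simp [spin, h1, h2] <;> norm_num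
    rw [Finset.sum_congr rfl fun t _ => hpt t, ← Finset.mul_sum, Finset.sum_boole]
  have hfield : ∑ t : ZMod (2 * L1) × ZMod (2 * L2),
      cellField L1 L2 h t * (1 - spin σ t) = 2 * h * Sf := by
    rw [hSf, Finset.mul_sum]
    refine Finset.sum_congr rfl fun t _ => ?_
    rw [cellField_eq]
    by_cases h1 : σ t <;> simp [spin, hχ, h1] <;> ring
  have expand : ham J (cellField L1 L2 h) σ
      - ham J (cellField L1 L2 h) (fun _ : ZMod (2 * L1) × ZMod (2 * L2) => true)
      = 2 * J * B1 + 2 * J * B2 + 2 * h * Sf := by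
    have e1 : ∑ t : ZMod (2 * L1) × ZMod (2 * L2),
        (spin (fun _ => true) t * spin (fun _ => true) (t + (1, 0))
          + spin (fun _ => true) t * spin (fun _ => true) (t + (0, 1)))
        = ∑ _t : ZMod (2 * L1) × ZMod (2 * L2), (2 : ℝ) :=
      Finset.sum_congr rfl fun t _ => by norm_num [spin]
    have e2 : ∑ t : ZMod (2 * L1) × ZMod (2 * L2),
        cellField L1 L2 h t * spin (fun _ => true) t
        = ∑ t : ZMod (2 * L1) × ZMod (2 * L2), cellField L1 L2 h t :=
      Finset.sum_congr rfl fun t _ => by simp [spin]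
    have e3 : ∑ t : ZMod (2 * L1) × ZMod (2 * L2),
        (spin σ t * spin σ (t + (1, 0)) + spin σ t * spin σ (t + (0, 1)))
        = ∑ t : ZMod (2 * L1) × ZMod (2 * L2), spin σ t * spin σ (t + (1, 0))
          + ∑ t : ZMod (2 * L1) × ZMod (2 * L2), spin σ t * spin σ (t + (0, 1)) :=
      Finset.sum_add_distrib
    have e4 := hbond (1, 0)
    have e5 := hbond (0, 1)
    rw [Finset.sum_sub_distrib] at e4 e5
    have e6 : ∑ t : ZMod (2 * L1) × ZMod (2 * L2),
        cellField L1 L2 h t * (1 - spin σ t)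
        = ∑ t : ZMod (2 * L1) × ZMod (2 * L2), cellField L1 L2 h t
          - ∑ t : ZMod (2 * L1) × ZMod (2 * L2), cellField L1 L2 h t * spin σ t := by
      rw [← Finset.sum_sub_distrib]
      exact Finset.sum_congr rfl fun t _ => by ring
    rw [e6] at hfield
    simp only [ham]
    rw [e1, e2, e3]
    rw [Finset.sum_const] at e4 e5 ⊢
    rw [← hB1] at e4
    rw [← hB2] at e5
    simp only [nsmul_eq_mul, mul_one] at e4 e5 ⊢
    linear_combination J * e4 + J * e5 + hfield
  -- Step 2: bounds on the field sum
  have hD1 : ∑ t : ZMod (2 * L1) × ZMod (2 * L2), |χ t - χ (t + (1, 0))| = (B1 : ℝ) := by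
    rw [hB1, ← Finset.sum_boole]
    refine Finset.sum_congr rfl fun t _ => ?_
    by_cases h1 : σ t <;> by_cases h2 : σ (t + (1, 0)) <;> simp [hχ, h1, h2] <;> norm_num
  have hD2 : ∑ t : ZMod (2 * L1) × ZMod (2 * L2), |χ t - χ (t + (0, 1))| = (B2 : ℝ) := by
    rw [hB2, ← Finset.sum_boole]
    refine Finset.sum_congr rfl fun t _ => ?_
    by_cases h1 : σ t <;> by_cases h2 : σ (t + (0, 1)) <;> simp [hχ, h1, h2] <;> norm_num
  have habs1 : |Sf| ≤ (L1 : ℝ) / 2 * B1 := by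
    have hrw : Sf = ∑ y : ZMod (2 * L2), ∑ x : ZMod (2 * L1),
        epsSgn L1 x * (epsSgn L2 y * χ (x, y)) := by
      rw [hSf, Fintype.sum_prod_type_right]
      exact Finset.sum_congr rfl fun y _ => Finset.sum_congr rfl fun x _ => by ring
    calc |Sf| = |∑ y : ZMod (2 * L2), ∑ x : ZMod (2 * L1),
        epsSgn L1 x * (epsSgn L2 y * χ (x, y))| := by rw [hrw]
      _ ≤ ∑ y : ZMod (2 * L2), |∑ x : ZMod (2 * L1),
          epsSgn L1 x * (epsSgn L2 y * χ (x, y))| := Finset.abs_sum_le_sum_abs _ _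
      _ ≤ ∑ y : ZMod (2 * L2), (L1 : ℝ) / 2 * ∑ x : ZMod (2 * L1),
          |epsSgn L2 y * χ (x, y) - epsSgn L2 y * χ (x + 1, y)| :=
          Finset.sum_le_sum fun y _ => row_bound L1 hL1 (fun x => epsSgn L2 y * χ (x, y))
      _ = (L1 : ℝ) / 2 * ∑ t : ZMod (2 * L1) × ZMod (2 * L2), |χ t - χ (t + (1, 0))| := by
          rw [← Finset.mul_sum, Fintype.sum_prod_type_right]
          congr 1
          refine Finset.sum_congr rfl fun y _ => Finset.sum_congr rfl fun x _ => ?_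
          have hxy : ((x, y) : ZMod (2 * L1) × ZMod (2 * L2)) + (1, 0) = (x + 1, y) := by
            simp [Prod.ext_iff]
          rw [hxy, ← mul_sub, abs_mul, epsSgn_abs, one_mul]
      _ = (L1 : ℝ) / 2 * B1 := by rw [hD1]
  have habs2 : |Sf| ≤ (L2 : ℝ) / 2 * B2 := by
    have hrw : Sf = ∑ x : ZMod (2 * L1), ∑ y : ZMod (2 * L2),
        epsSgn L2 y * (epsSgn L1 x * χ (x, y)) := by
      rw [hSf, Fintype.sum_prod_type]
      exact Finset.sum_congr rfl fun x _ => Finset.sum_congr rfl fun y _ => by ring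
    calc |Sf| = |∑ x : ZMod (2 * L1), ∑ y : ZMod (2 * L2),
        epsSgn L2 y * (epsSgn L1 x * χ (x, y))| := by rw [hrw]
      _ ≤ ∑ x : ZMod (2 * L1), |∑ y : ZMod (2 * L2),
          epsSgn L2 y * (epsSgn L1 x * χ (x, y))| := Finset.abs_sum_le_sum_abs _ _
      _ ≤ ∑ x : ZMod (2 * L1), (L2 : ℝ) / 2 * ∑ y : ZMod (2 * L2),
          |epsSgn L1 x * χ (x, y) - epsSgn L1 x * χ (x, y + 1)| :=
          Finset.sum_le_sum fun x _ => row_bound L2 hL2 (fun y => epsSgn L1 x * χ (x, y))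
      _ = (L2 : ℝ) / 2 * ∑ t : ZMod (2 * L1) × ZMod (2 * L2), |χ t - χ (t + (0, 1))| := by
          rw [← Finset.mul_sum, Fintype.sum_prod_type]
          congr 1
          refine Finset.sum_congr rfl fun x _ => Finset.sum_congr rfl fun y _ => ?_
          have hxy : ((x, y) : ZMod (2 * L1) × ZMod (2 * L2)) + (0, 1) = (x, y + 1) := by
            simp [Prod.ext_iff]
          rw [hxy, ← mul_sub, abs_mul, epsSgn_abs, one_mul]
      _ = (L2 : ℝ) / 2 * B2 := by rw [hD2]
  -- Step 3: combine
  have hD4 : 4 ≤ B1 + B2 := sum_changes_ge_four (by omega) (by omega) σ hσ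
  have hSf1 : -((L1 : ℝ) / 2 * B1) ≤ Sf := by linarith [neg_abs_le Sf]
  have hSf2 : -((L2 : ℝ) / 2 * B2) ≤ Sf := by linarith [neg_abs_le Sf]
  rw [expand]
  set s : ℝ := (L1 : ℝ) + (L2 : ℝ) with hs
  have hL1r : (0 : ℝ) < L1 := by exact_mod_cast hL1
  have hL2r : (0 : ℝ) < L2 := by exact_mod_cast hL2
  have hsp : 0 < s := by rw [hs]; linarith
  set c2 : ℝ := h * (L1 : ℝ) * (L2 : ℝ) / s with hc2
  have hfac : 0 < 2 * J - c2 := by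
    have key : (2 * J / (L1 : ℝ) + 2 * J / (L2 : ℝ)) * ((L1 : ℝ) * L2 / s) = 2 * J := by
      rw [hs]; field_simp; ring
    have h2 : h * ((L1 : ℝ) * L2 / s) < 2 * J := by
      rw [← key]
      exact mul_lt_mul_of_pos_right hcond (by rw [hs]; positivity)
    have h3 : h * ((L1 : ℝ) * L2 / s) = c2 := by rw [hc2]; ring
    linarith [h2, h3.symm.le, h3.le]
  have hSfc : -((L1 : ℝ) * L2 / (2 * s)) * ((B1 : ℝ) + B2) ≤ Sf := by
    have e : -((L1 : ℝ) * L2 / (2 * s)) * ((B1 : ℝ) + B2)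
        = ((L2 : ℝ) / s) * (-((L1 : ℝ) / 2 * B1)) + ((L1 : ℝ) / s) * (-((L2 : ℝ) / 2 * B2)) := by
      field_simp
      ring
    rw [e]
    have h1 := mul_le_mul_of_nonneg_left hSf1 (le_of_lt (div_pos hL2r hsp))
    have h2 := mul_le_mul_of_nonneg_left hSf2 (le_of_lt (div_pos hL1r hsp))
    have e2 : ((L2 : ℝ) / s) * Sf + ((L1 : ℝ) / s) * Sf = Sf := by
      rw [hs]; field_simp; ring
    calc ((L2 : ℝ) / s) * (-((L1 : ℝ) / 2 * B1)) + ((L1 : ℝ) / s) * (-((L2 : ℝ) / 2 * B2))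
        ≤ ((L2 : ℝ) / s) * Sf + ((L1 : ℝ) / s) * Sf := add_le_add h1 h2
      _ = Sf := e2
  have hB4r : (4 : ℝ) ≤ (B1 : ℝ) + B2 := by exact_mod_cast hD4
  have hm := mul_le_mul_of_nonneg_left hSfc (by linarith : (0 : ℝ) ≤ 2 * h)
  have heq : 2 * h * (-((L1 : ℝ) * L2 / (2 * s)) * ((B1 : ℝ) + B2))
      = -c2 * ((B1 : ℝ) + B2) := by
    rw [hc2]; field_simp
  have hprod : 0 ≤ (2 * J - c2) * (((B1 : ℝ) + B2) - 4) :=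
    mul_nonneg hfac.le (by linarith)
  nlinarith [hm, heq, hprod]
end

section
/- Let L₁, L₂ be positive integers, J > 0, h > 0 with h < 2J/L₁ + 2J/L₂, let N ≥ 2 be even and β ≥ 0. Then every configuration σ ∈ {−1,+1}^{𝕋_N} that is non-constant and satisfies σ(t + (2L₁,0)) = σ(t) and σ(t + (0,2L₂)) = σ(t) for all t obeys e^{−βH_N(σ)} / Z_N(β) ≤ exp(−β·N²·(2J − h·L₁L₂/(L₁+L₂))). -/
open Finset

lemma zmod_nc_step {n : ℕ} [NeZero n] (f : ZMod n → Bool)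
    (h : ∀ x, f (x + 1) = f x) : ∀ x y, f x = f y := by
  have key : ∀ k : ℕ, ∀ x : ZMod n, f (x + (k : ZMod n)) = f x := by
    intro k
    induction k with
    | zero => simp
    | succ k ih =>
      intro x
      have : f (x + ((k + 1 : ℕ) : ZMod n)) = f (x + (k : ZMod n) + 1) := by
        congr 1; push_cast; ring
      rw [this, h, ih]
  intro x y
  have hy : y = x + (((y - x).val : ℕ) : ZMod n) := by
    rw [ZMod.natCast_val, ZMod.cast_id]; ring
  rw [hy, key]

lemma two_flips {n : ℕ} [NeZero n] (f : ZMod n → Bool)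
    (hnc : ∃ x y, f x ≠ f y) :
    ∃ x y : ZMod n, x ≠ y ∧ f x ≠ f (x + 1) ∧ f y ≠ f (y + 1) := by
  have hn : 0 < n := Nat.pos_of_ne_zero (NeZero.ne n)
  have h1 : ∃ x, f x ≠ f (x + 1) := by
    by_contra hcon
    push_neg at hcon
    obtain ⟨x, y, hxy⟩ := hnc
    exact hxy (zmod_nc_step f (fun z => (hcon z).symm) x y)
  obtain ⟨x₀, hx₀⟩ := h1
  by_contra hcon
  push_neg at hcon
  have huniq : ∀ z : ZMod n, f z ≠ f (z + 1) → z = x₀ := by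
    intro z hz
    by_contra hne
    exact hx₀ (hcon z x₀ hne hz)
  have key : ∀ k : ℕ, k < n → f (x₀ + 1 + (k : ZMod n)) = f (x₀ + 1) := by
    intro k
    induction k with
    | zero => intro _; simp
    | succ k ih =>
      intro hk
      have ihk := ih (Nat.lt_of_succ_lt hk)
      have hstep : f (x₀ + 1 + (k : ZMod n)) = f (x₀ + 1 + (k : ZMod n) + 1) := by
        by_contra hflip
        have heq := huniq _ hflip
        have h0 : ((k + 1 : ℕ) : ZMod n) = 0 := by push_cast; linear_combination heq
        have hdvd : n ∣ k + 1 := (ZMod.natCast_eq_zero_iff _ _).mp h0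
        have := Nat.le_of_dvd (Nat.succ_pos k) hdvd
        omega
      have hpt : f (x₀ + 1 + ((k + 1 : ℕ) : ZMod n)) = f (x₀ + 1 + (k : ZMod n) + 1) := by
        congr 1; push_cast; ring
      rw [hpt, ← hstep, ihk]
  have hm : ((n - 1 : ℕ) : ZMod n) = -1 := by
    have h0 : ((n - 1 : ℕ) : ZMod n) + 1 = 0 := by
      rw [show (1 : ZMod n) = ((1 : ℕ) : ZMod n) by push_cast; ring, ← Nat.cast_add,
        show n - 1 + 1 = n by omega]
      exact ZMod.natCast_self n
    linear_combination h0
  have hlast := key (n - 1) (by omega)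
  rw [hm, show x₀ + 1 + (-1 : ZMod n) = x₀ by ring] at hlast
  exact hx₀ hlast


lemma flip_count {N L : ℕ} (hL : 0 < L) (hN2 : 2 ≤ N) (hNe : Even N) [NeZero (N * L)]
    (f : ZMod (N * L) → Bool)
    (hper : ∀ x, f (x + ((2 * L : ℕ) : ZMod (N * L))) = f x)
    (hnc : ∃ x y, f x ≠ f y) :
    N ≤ (univ.filter (fun x : ZMod (N * L) => f x ≠ f (x + 1))).card := by
  obtain ⟨m, hm⟩ := hNe
  haveI : NeZero (2 * L) := ⟨by omega⟩
  haveI : Fact (1 < 2 * L) := ⟨by omega⟩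
  have hmpos : 0 < m := by omega
  have hperk : ∀ (k : ℕ) (x : ZMod (N * L)), f (x + ((k * (2 * L) : ℕ) : ZMod (N * L))) = f x := by
    intro k
    induction k with
    | zero => simp
    | succ k ih =>
      intro x
      have hpt : f (x + (((k + 1) * (2 * L) : ℕ) : ZMod (N * L)))
          = f (x + ((k * (2 * L) : ℕ) : ZMod (N * L)) + ((2 * L : ℕ) : ZMod (N * L))) := by
        congr 1; push_cast; ring
      rw [hpt, hper, ih]
  have hmod : ∀ u : ℕ, f ((u : ZMod (N * L))) = f (((u % (2 * L) : ℕ) : ZMod (N * L))) := by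
    intro u
    have hu : u = u % (2 * L) + (u / (2 * L)) * (2 * L) := by
      rw [Nat.mul_comm (u / (2 * L))]
      exact (Nat.mod_add_div u (2 * L)).symm
    conv_lhs => rw [hu]
    rw [Nat.cast_add, hperk]
  have hrep : ∀ x : ZMod (N * L), f x = f (((((x.val : ZMod (2 * L))).val : ℕ) : ZMod (N * L))) := by
    intro x
    have h1 : ((x.val : ZMod (2 * L))).val = x.val % (2 * L) := ZMod.val_natCast _ _
    rw [h1, ← hmod]
    congr 1
    rw [ZMod.natCast_val, ZMod.cast_id]
  set f' : ZMod (2 * L) → Bool := fun z => f ((z.val : ℕ) : ZMod (N * L)) with hf'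
  have hstep' : ∀ z : ZMod (2 * L), f' (z + 1) = f (((z.val : ℕ) : ZMod (N * L)) + 1) := by
    intro z
    have h1 : (z + 1).val = (z.val + 1) % (2 * L) := by
      rw [ZMod.val_add, ZMod.val_one]
    show f (((z + 1).val : ℕ) : ZMod (N * L)) = _
    rw [h1, ← hmod]
    push_cast
    ring_nf
  have hnc' : ∃ z w : ZMod (2 * L), f' z ≠ f' w := by
    obtain ⟨x, y, hxy⟩ := hnc
    refine ⟨(x.val : ZMod (2 * L)), (y.val : ZMod (2 * L)), ?_⟩
    show f _ ≠ f _
    rw [← hrep x, ← hrep y]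
    exact hxy
  obtain ⟨z₀, z₁, hzne, hz₀, hz₁⟩ := two_flips f' hnc'
  set zz : Fin 2 → ZMod (2 * L) := fun i => if i = 0 then z₀ else z₁ with hzz
  have hzflip : ∀ i : Fin 2, f' (zz i) ≠ f' (zz i + 1) := by
    intro i
    rcases eq_or_ne i 0 with h | h <;> simp [hzz, h, hz₀, hz₁]
  have hval : ∀ p : Fin m × Fin 2, (zz p.2).val + p.1.1 * (2 * L) < N * L := by
    intro p
    have h1 : (zz p.2).val < 2 * L := ZMod.val_lt _
    have h2 : (p.1.1 + 1) * (2 * L) ≤ m * (2 * L) := Nat.mul_le_mul_right _ p.1.isLt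
    calc (zz p.2).val + p.1.1 * (2 * L) < (p.1.1 + 1) * (2 * L) := by ring_nf; omega
    _ ≤ m * (2 * L) := h2
    _ = N * L := by rw [hm]; ring
  have hmem : ∀ p : Fin m × Fin 2,
      (((zz p.2).val + p.1.1 * (2 * L) : ℕ) : ZMod (N * L)) ∈
        univ.filter (fun x : ZMod (N * L) => f x ≠ f (x + 1)) := by
    intro p
    refine Finset.mem_filter.mpr ⟨Finset.mem_univ _, ?_⟩
    have e1 : f (((zz p.2).val + p.1.1 * (2 * L) : ℕ) : ZMod (N * L)) = f' (zz p.2) := by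
      rw [Nat.cast_add, hperk]
    have e2 : f ((((zz p.2).val + p.1.1 * (2 * L) : ℕ) : ZMod (N * L)) + 1) = f' (zz p.2 + 1) := by
      rw [hstep']
      have h3 : (((zz p.2).val + p.1.1 * (2 * L) : ℕ) : ZMod (N * L)) + 1
          = (((zz p.2).val : ℕ) : ZMod (N * L)) + 1 + ((p.1.1 * (2 * L) : ℕ) : ZMod (N * L)) := by
        push_cast; ring
      rw [h3, hperk]
    rw [e1, e2]
    exact hzflip p.2
  have hinj : Set.InjOn (fun p : Fin m × Fin 2 => (((zz p.2).val + p.1.1 * (2 * L) : ℕ) : ZMod (N * L)))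
      ↑(univ : Finset (Fin m × Fin 2)) := by
    intro p _ q _ hpq
    simp only at hpq
    have hnat : (zz p.2).val + p.1.1 * (2 * L) = (zz q.2).val + q.1.1 * (2 * L) := by
      rw [← ZMod.val_cast_of_lt (hval p), ← ZMod.val_cast_of_lt (hval q), hpq]
    have hup : ((zz p.2).val + p.1.1 * (2 * L)) % (2 * L) = (zz p.2).val := by
      rw [Nat.add_mul_mod_self_right, Nat.mod_eq_of_lt (ZMod.val_lt _)]
    have huq : ((zz q.2).val + q.1.1 * (2 * L)) % (2 * L) = (zz q.2).val := by
      rw [Nat.add_mul_mod_self_right, Nat.mod_eq_of_lt (ZMod.val_lt _)]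
    have hvv : (zz p.2).val = (zz q.2).val := by rw [← hup, ← huq, hnat]
    have hzeq : zz p.2 = zz q.2 := ZMod.val_injective _ hvv
    have fin2 : ∀ i : Fin 2, i = 0 ∨ i = 1 := by decide
    have e0 : zz 0 = z₀ := by simp [hzz]
    have e1 : zz 1 = z₁ := by simp [hzz]
    have h2 : p.2 = q.2 := by
      rcases fin2 p.2 with h | h <;> rcases fin2 q.2 with h' | h' <;> rw [h, h'] at hzeq ⊢ <;>
        simp only [e0, e1] at hzeq <;>
        first
          | rfl
          | exact absurd hzeq hzne
          | exact absurd hzeq.symm hzne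
    have h1 : p.1 = q.1 := by
      have hmul : p.1.1 * (2 * L) = q.1.1 * (2 * L) := by omega
      exact Fin.ext (Nat.eq_of_mul_eq_mul_right (by omega) hmul)
    exact Prod.ext h1 h2
  have key := Finset.card_le_card_of_injOn _ (fun p _ => hmem p) hinj
  simp only [Finset.card_univ, Fintype.card_prod, Fintype.card_fin] at key
  omega

lemma parity_flip {N L : ℕ} (hL : 0 < L) (hN2 : 2 ≤ N) (hNe : Even N) [NeZero (N * L)]
    (x : ZMod (N * L)) :
    Even ((x + ((L : ℕ) : ZMod (N * L))).val / L) ↔ ¬ Even (x.val / L) := by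
  have hNL : L < N * L := by
    calc L = 1 * L := (one_mul L).symm
    _ < N * L := (Nat.mul_lt_mul_right hL).mpr (by omega)
  have hvL : ((L : ℕ) : ZMod (N * L)).val = L := ZMod.val_cast_of_lt hNL
  have hx : x.val < N * L := ZMod.val_lt x
  rw [ZMod.val_add, hvL]
  by_cases hc : x.val + L < N * L
  · rw [Nat.mod_eq_of_lt hc, Nat.add_div_right _ hL, Nat.even_add_one]
  · have h1 : (x.val + L) % (N * L) = x.val + L - N * L := by
      rw [Nat.mod_eq_sub_mod (by omega)]
      exact Nat.mod_eq_of_lt (by omega)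
    rw [h1]
    have h2 : (x.val + L - N * L) / L = 0 := Nat.div_eq_of_lt (by omega)
    have hsub : (N - 1) * L = N * L - L := by
      rw [Nat.sub_mul, one_mul]
    have h3 : x.val / L = N - 1 := by
      have hub : x.val / L < N := Nat.div_lt_of_lt_mul (by rw [Nat.mul_comm L N]; exact hx)
      have hlb : N - 1 ≤ x.val / L := (Nat.le_div_iff_mul_le hL).mpr (by omega)
      omega
    rw [h2, h3]
    have h4 : ¬ Even (N - 1) := by
      rw [Nat.even_sub (by omega : 1 ≤ N)]
      simp [hNe, Nat.not_even_one]
    simp [h4]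

lemma card_even_eq_card_odd {N L : ℕ} (hL : 0 < L) (hN2 : 2 ≤ N) (hNe : Even N)
    [NeZero (N * L)] (c : ℕ) :
    (univ.filter (fun x : ZMod (N * L) => Even (x.val / L + c))).card
      = (univ.filter (fun x : ZMod (N * L) => ¬ Even (x.val / L + c))).card := by
  have flip : ∀ x : ZMod (N * L),
      Even ((x + ((L : ℕ) : ZMod (N * L))).val / L + c) ↔ ¬ Even (x.val / L + c) := by
    intro x
    have h := parity_flip hL hN2 hNe x
    rw [Nat.even_add, Nat.even_add, h]
    tauto
  have hinj : ∀ (s : Finset (ZMod (N * L))),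
      Set.InjOn (fun x : ZMod (N * L) => x + ((L : ℕ) : ZMod (N * L))) ↑s := by
    intro s x _ y _ hxy
    simpa using add_right_cancel hxy
  apply le_antisymm
  · apply Finset.card_le_card_of_injOn (fun x => x + ((L : ℕ) : ZMod (N * L)))
    · intro x hx
      simp only [Finset.mem_coe, Finset.mem_filter, Finset.mem_univ, true_and] at hx ⊢
      intro hcon
      exact (flip x).mp hcon hx
    · exact hinj _
  · apply Finset.card_le_card_of_injOn (fun x => x + ((L : ℕ) : ZMod (N * L)))
    · intro x hx
      simp only [Finset.mem_coe, Finset.mem_filter, Finset.mem_univ, true_and] at hx ⊢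
      exact (flip x).mpr hx
    · exact hinj _

lemma card_prod_fiber_snd {α β : Type*} [Fintype α] [Fintype β] [DecidableEq α] [DecidableEq β]
    (P : α × β → Prop) [DecidablePred P] :
    (univ.filter P).card = ∑ y : β, (univ.filter (fun x : α => P (x, y))).card := by
  rw [Finset.card_eq_sum_card_fiberwise (f := Prod.snd) (t := univ) (fun x _ => mem_univ _)]
  refine Finset.sum_congr rfl fun y _ => ?_
  apply Finset.card_bij (fun t _ => t.1)
  · intro t ht
    simp only [Finset.mem_filter, Finset.mem_univ, true_and] at ht ⊢
    obtain ⟨h1, h2⟩ := ht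
    rwa [show ((t.1 : α), y) = t from Prod.ext rfl h2.symm]
  · intro t ht t' ht' h1
    simp only [Finset.mem_filter] at ht ht'
    exact Prod.ext h1 (ht.2.trans ht'.2.symm)
  · intro x hx
    simp only [Finset.mem_filter, Finset.mem_univ, true_and] at hx
    exact ⟨(x, y), Finset.mem_filter.mpr ⟨Finset.mem_filter.mpr ⟨Finset.mem_univ _, hx⟩, rfl⟩, rfl⟩

def BhD {a b : ℕ} [NeZero a] [NeZero b] (σ : ZMod a × ZMod b → Bool) : ℕ :=
  (Finset.univ.filter (fun t : ZMod a × ZMod b => σ t ≠ σ (t + (1, 0)))).card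

def BvD {a b : ℕ} [NeZero a] [NeZero b] (σ : ZMod a × ZMod b → Bool) : ℕ :=
  (Finset.univ.filter (fun t : ZMod a × ZMod b => σ t ≠ σ (t + (0, 1)))).card

def OmD {a b : ℕ} [NeZero a] [NeZero b] (L1 L2 : ℕ) (σ : ZMod a × ZMod b → Bool) : ℕ :=
  (Finset.univ.filter (fun t : ZMod a × ZMod b =>
    σ t = false ∧ ¬ Even (t.1.val / L1 + t.2.val / L2))).card

def EmD {a b : ℕ} [NeZero a] [NeZero b] (L1 L2 : ℕ) (σ : ZMod a × ZMod b → Bool) : ℕ :=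
  (Finset.univ.filter (fun t : ZMod a × ZMod b =>
    σ t = false ∧ Even (t.1.val / L1 + t.2.val / L2))).card

lemma prod_add_fst {N L1 L2 : ℕ} [NeZero (N * L1)] [NeZero (N * L2)]
    (x : ZMod (N * L1)) (y : ZMod (N * L2)) (c : ZMod (N * L1)) :
    ((x, y) : ZMod (N * L1) × ZMod (N * L2)) + (c, 0) = (x + c, y) := by
  simp [Prod.ext_iff]

lemma prod_add_snd {N L1 L2 : ℕ} [NeZero (N * L1)] [NeZero (N * L2)]
    (x : ZMod (N * L1)) (y : ZMod (N * L2)) (c : ZMod (N * L2)) :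
    ((x, y) : ZMod (N * L1) × ZMod (N * L2)) + (0, c) = (x, y + c) := by
  simp [Prod.ext_iff]

lemma rowD_decomp {N L1 L2 : ℕ} [NeZero (N * L1)] [NeZero (N * L2)]
    (σ : ZMod (N * L1) × ZMod (N * L2) → Bool) :
    BhD σ = ∑ y : ZMod (N * L2),
      (univ.filter (fun x : ZMod (N * L1) => σ (x, y) ≠ σ (x + 1, y))).card := by
  rw [BhD, card_prod_fiber_snd]
  refine Finset.sum_congr rfl fun y _ => ?_
  refine congrArg Finset.card (Finset.filter_congr fun x _ => ?_)
  rw [prod_add_fst]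

lemma rowD_ge {N L1 L2 : ℕ} [NeZero (N * L1)] [NeZero (N * L2)]
    (hL1 : 0 < L1) (hN2 : 2 ≤ N) (hNe : Even N)
    (σ : ZMod (N * L1) × ZMod (N * L2) → Bool)
    (hper1 : ∀ t, σ (t + (((2 * L1 : ℕ) : ZMod (N * L1)), 0)) = σ t)
    (y : ZMod (N * L2)) (hncrow : ∃ x x', σ (x, y) ≠ σ (x', y)) :
    N ≤ (univ.filter (fun x : ZMod (N * L1) => σ (x, y) ≠ σ (x + 1, y))).card := by
  have hper : ∀ x : ZMod (N * L1),
      σ (x + ((2 * L1 : ℕ) : ZMod (N * L1)), y) = σ (x, y) := by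
    intro x
    have := hper1 (x, y)
    rwa [prod_add_fst] at this
  obtain ⟨x, x', hx⟩ := hncrow
  exact flip_count hL1 hN2 hNe (fun x => σ (x, y)) hper ⟨x, x', hx⟩

lemma horiz_iso {N L1 L2 : ℕ} [NeZero (N * L1)] [NeZero (N * L2)]
    (hL1 : 0 < L1) (hL2 : 0 < L2) (hN2 : 2 ≤ N) (hNe : Even N)
    (σ : ZMod (N * L1) × ZMod (N * L2) → Bool)
    (hper1 : ∀ t, σ (t + (((2 * L1 : ℕ) : ZMod (N * L1)), 0)) = σ t) :
    2 * ((OmD L1 L2 σ : ℤ) - (EmD L1 L2 σ : ℤ)) ≤ (L1 : ℤ) * (BhD σ : ℤ) := by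
  classical
  set rowD : ZMod (N * L2) → ℕ := fun y =>
    (univ.filter (fun x : ZMod (N * L1) => σ (x, y) ≠ σ (x + 1, y))).card with hrowD
  set oR : ZMod (N * L2) → ℕ := fun y =>
    (univ.filter (fun x : ZMod (N * L1) =>
      σ (x, y) = false ∧ ¬ Even (x.val / L1 + y.val / L2))).card with hoRdef
  set eR : ZMod (N * L2) → ℕ := fun y =>
    (univ.filter (fun x : ZMod (N * L1) =>
      σ (x, y) = false ∧ Even (x.val / L1 + y.val / L2))).card with heRdef
  have hBh : BhD σ = ∑ y, rowD y := rowD_decomp σ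
  have hOm : OmD L1 L2 σ = ∑ y, oR y := card_prod_fiber_snd _
  have hEm : EmD L1 L2 σ = ∑ y, eR y := card_prod_fiber_snd _
  have hrow : ∀ y : ZMod (N * L2), 2 * ((oR y : ℤ) - (eR y : ℤ)) ≤ (L1 : ℤ) * (rowD y : ℤ) := by
    intro y
    by_cases hconst : ∀ x x' : ZMod (N * L1), σ (x, y) = σ (x', y)
    · have hoe : oR y = eR y := by
        by_cases hv : σ (0, y) = false
        · have hall : ∀ x, σ (x, y) = false := fun x => (hconst x 0).trans hv
          have h1 : oR y = (univ.filter
              (fun x : ZMod (N * L1) => ¬ Even (x.val / L1 + y.val / L2))).card := by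
            rw [hoRdef]
            refine congrArg Finset.card (Finset.filter_congr fun x _ => ?_)
            simp [hall x]
          have h2 : eR y = (univ.filter
              (fun x : ZMod (N * L1) => Even (x.val / L1 + y.val / L2))).card := by
            rw [heRdef]
            refine congrArg Finset.card (Finset.filter_congr fun x _ => ?_)
            simp [hall x]
          rw [h1, h2, ← card_even_eq_card_odd hL1 hN2 hNe (y.val / L2)]
        · have hall : ∀ x, σ (x, y) = true := by
            intro x
            have := hconst x 0
            rw [this]
            exact Bool.not_eq_false _ |>.mp hv
          have h1 : oR y = 0 := by
            rw [hoRdef, Finset.card_eq_zero]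
            refine Finset.filter_false_of_mem fun x _ => ?_
            simp [hall x]
          have h2 : eR y = 0 := by
            rw [heRdef, Finset.card_eq_zero]
            refine Finset.filter_false_of_mem fun x _ => ?_
            simp [hall x]
          rw [h1, h2]
      rw [hoe]
      have : (0 : ℤ) ≤ (L1 : ℤ) * (rowD y : ℤ) := by positivity
      omega
    · push_neg at hconst
      obtain ⟨x, x', hx⟩ := hconst
      have hd : N ≤ rowD y := rowD_ge hL1 hN2 hNe σ hper1 y ⟨x, x', hx⟩
      have hsplit : (univ.filter (fun x : ZMod (N * L1) => Even (x.val / L1 + y.val / L2))).card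
          + (univ.filter (fun x : ZMod (N * L1) => ¬ Even (x.val / L1 + y.val / L2))).card
          = N * L1 := by
        rw [Finset.card_filter_add_card_filter_not, Finset.card_univ, ZMod.card]
      have hoo : oR y ≤ (univ.filter
          (fun x : ZMod (N * L1) => ¬ Even (x.val / L1 + y.val / L2))).card := by
        apply Finset.card_le_card
        intro x hx
        simp only [Finset.mem_filter, Finset.mem_univ, true_and] at hx ⊢
        exact hx.2
      have heo := card_even_eq_card_odd (L := L1) hL1 hN2 hNe (y.val / L2)
      have hnat : 2 * oR y ≤ N * L1 := by omega
      have h1 : (2 : ℤ) * (oR y : ℤ) ≤ (N : ℤ) * (L1 : ℤ) := by exact_mod_cast hnat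
      have h2 : (L1 : ℤ) * (N : ℤ) ≤ (L1 : ℤ) * (rowD y : ℤ) := by
        apply mul_le_mul_of_nonneg_left _ (by positivity)
        exact_mod_cast hd
      have h3 : (0 : ℤ) ≤ (eR y : ℤ) := by positivity
      linarith
  have e3 : (BhD σ : ℤ) = ∑ y, (rowD y : ℤ) := by rw [hBh]; push_cast; rfl
  have e1 : (OmD L1 L2 σ : ℤ) = ∑ y, (oR y : ℤ) := by rw [hOm]; push_cast; rfl
  have e2 : (EmD L1 L2 σ : ℤ) = ∑ y, (eR y : ℤ) := by rw [hEm]; push_cast; rfl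
  rw [e1, e2, e3, ← Finset.sum_sub_distrib, Finset.mul_sum, Finset.mul_sum]
  exact Finset.sum_le_sum fun y _ => hrow y

lemma horiz_half {N L1 L2 : ℕ} [NeZero (N * L1)] [NeZero (N * L2)]
    (hL1 : 0 < L1) (hL2 : 0 < L2) (hN2 : 2 ≤ N) (hNe : Even N)
    (σ : ZMod (N * L1) × ZMod (N * L2) → Bool)
    (hper1 : ∀ t, σ (t + (((2 * L1 : ℕ) : ZMod (N * L1)), 0)) = σ t)
    (hper2 : ∀ t, σ (t + (0, ((2 * L2 : ℕ) : ZMod (N * L2)))) = σ t)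
    (m : ℕ) (hm : N = m + m)
    (y₀ : ZMod (N * L2)) (hrow : ∃ x x', σ (x, y₀) ≠ σ (x', y₀)) :
    m * N ≤ BhD σ := by
  classical
  have hper2k : ∀ (k : ℕ) (t : ZMod (N * L1) × ZMod (N * L2)),
      σ (t + (0, ((k * (2 * L2) : ℕ) : ZMod (N * L2)))) = σ t := by
    intro k
    induction k with
    | zero => simp
    | succ k ih =>
      intro t
      have hpt : σ (t + (0, (((k + 1) * (2 * L2) : ℕ) : ZMod (N * L2))))
          = σ (t + (0, ((k * (2 * L2) : ℕ) : ZMod (N * L2)))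
              + (0, ((2 * L2 : ℕ) : ZMod (N * L2)))) := by
        congr 1
        rw [add_assoc]
        congr 1
        simp only [Prod.mk_add_mk, add_zero]
        congr 1
        push_cast
        ring
      rw [hpt, hper2, ih]
  have hrows : ∀ k : Fin m,
      ∃ x x', σ (x, y₀ + ((k.1 * (2 * L2) : ℕ) : ZMod (N * L2)))
        ≠ σ (x', y₀ + ((k.1 * (2 * L2) : ℕ) : ZMod (N * L2))) := by
    intro k
    obtain ⟨x, x', hx⟩ := hrow
    have e : ∀ u : ZMod (N * L1),
        σ (u, y₀ + ((k.1 * (2 * L2) : ℕ) : ZMod (N * L2))) = σ (u, y₀) := by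
      intro u
      have := hper2k k.1 (u, y₀)
      rwa [prod_add_snd] at this
    exact ⟨x, x', by rw [e, e]; exact hx⟩
  set S : Finset (ZMod (N * L2)) :=
    (univ : Finset (Fin m)).image (fun k => y₀ + ((k.1 * (2 * L2) : ℕ) : ZMod (N * L2))) with hS
  have hmpos : 0 < m := by omega
  have hlt : ∀ j : Fin m, j.1 * (2 * L2) < N * L2 := by
    intro j
    have h1 : j.1 * (2 * L2) < m * (2 * L2) :=
      (Nat.mul_lt_mul_right (by omega)).mpr j.isLt
    have h2 : m * (2 * L2) = N * L2 := by rw [hm]; ring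
    omega
  have hcardS : S.card = m := by
    rw [hS, Finset.card_image_of_injOn, Finset.card_univ, Fintype.card_fin]
    intro k _ k' _ hkk
    simp only [] at hkk
    have h1 := add_left_cancel hkk
    have h2 := congrArg ZMod.val h1
    rw [ZMod.val_cast_of_lt (hlt k), ZMod.val_cast_of_lt (hlt k')] at h2
    exact Fin.ext (Nat.eq_of_mul_eq_mul_right (by omega) h2)
  rw [rowD_decomp σ]
  calc m * N = ∑ _y ∈ S, N := by rw [Finset.sum_const, hcardS, smul_eq_mul]
  _ ≤ ∑ y ∈ S, (univ.filter (fun x : ZMod (N * L1) => σ (x, y) ≠ σ (x + 1, y))).card := by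
      apply Finset.sum_le_sum
      intro y hy
      rw [hS] at hy
      obtain ⟨k, _, rfl⟩ := Finset.mem_image.mp hy
      exact rowD_ge hL1 hN2 hNe σ hper1 _ (hrows k)
  _ ≤ ∑ y : ZMod (N * L2), (univ.filter
        (fun x : ZMod (N * L1) => σ (x, y) ≠ σ (x + 1, y))).card :=
      Finset.sum_le_sum_of_subset (Finset.subset_univ S)

lemma horiz_allcol {N L1 L2 : ℕ} [NeZero (N * L1)] [NeZero (N * L2)]
    (hL1 : 0 < L1) (hL2 : 0 < L2) (hN2 : 2 ≤ N) (hNe : Even N)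
    (σ : ZMod (N * L1) × ZMod (N * L2) → Bool)
    (hper1 : ∀ t, σ (t + (((2 * L1 : ℕ) : ZMod (N * L1)), 0)) = σ t)
    (hallcol : ∀ (x : ZMod (N * L1)) (y y' : ZMod (N * L2)), σ (x, y) = σ (x, y'))
    (hnc : ∃ t u, σ t ≠ σ u) :
    N * N ≤ BhD σ := by
  have hrowsnc : ∀ y : ZMod (N * L2), ∃ x x', σ (x, y) ≠ σ (x', y) := by
    obtain ⟨t, u, htu⟩ := hnc
    intro y
    refine ⟨t.1, u.1, ?_⟩
    have h1 : σ (t.1, y) = σ t := by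
      rw [hallcol t.1 y t.2]
    have h2 : σ (u.1, y) = σ u := by
      rw [hallcol u.1 y u.2]
    rw [h1, h2]
    exact htu
  rw [rowD_decomp σ]
  calc N * N ≤ (N * L2) * N := by
        apply Nat.mul_le_mul_right
        exact Nat.le_mul_of_pos_right N hL2
  _ = ∑ _y : ZMod (N * L2), N := by
        rw [Finset.sum_const, Finset.card_univ, ZMod.card, smul_eq_mul]
  _ ≤ ∑ y : ZMod (N * L2), (univ.filter
        (fun x : ZMod (N * L1) => σ (x, y) ≠ σ (x + 1, y))).card :=
      Finset.sum_le_sum fun y _ => rowD_ge hL1 hN2 hNe σ hper1 y (hrowsnc y)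

lemma BhD_swap {N L1 L2 : ℕ} [NeZero (N * L1)] [NeZero (N * L2)]
    (σ : ZMod (N * L1) × ZMod (N * L2) → Bool) :
    BhD (fun u : ZMod (N * L2) × ZMod (N * L1) => σ (u.2, u.1)) = BvD σ := by
  rw [BhD, BvD]
  apply Finset.card_bij (fun u _ => ((u.2, u.1) : ZMod (N * L1) × ZMod (N * L2)))
  · rintro ⟨u1, u2⟩ hu
    simp only [Finset.mem_filter, Finset.mem_univ, true_and] at hu ⊢
    rw [prod_add_snd]
    rw [prod_add_fst] at hu
    exact hu
  · intro u _ u' _ h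
    simp only [Prod.mk.injEq] at h
    exact Prod.ext h.2 h.1
  · rintro ⟨t1, t2⟩ ht
    simp only [Finset.mem_filter, Finset.mem_univ, true_and] at ht
    refine ⟨(t2, t1), Finset.mem_filter.mpr ⟨Finset.mem_univ _, ?_⟩, rfl⟩
    rw [prod_add_fst]
    rwa [prod_add_snd] at ht

lemma OmD_swap {N L1 L2 : ℕ} [NeZero (N * L1)] [NeZero (N * L2)]
    (σ : ZMod (N * L1) × ZMod (N * L2) → Bool) :
    OmD L2 L1 (fun u : ZMod (N * L2) × ZMod (N * L1) => σ (u.2, u.1)) = OmD L1 L2 σ := by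
  rw [OmD, OmD]
  apply Finset.card_bij (fun u _ => ((u.2, u.1) : ZMod (N * L1) × ZMod (N * L2)))
  · intro u hu
    simp only [Finset.mem_filter, Finset.mem_univ, true_and] at hu ⊢
    rwa [Nat.add_comm]
  · intro u _ u' _ h
    simp only [Prod.mk.injEq] at h
    exact Prod.ext h.2 h.1
  · intro t ht
    simp only [Finset.mem_filter, Finset.mem_univ, true_and] at ht
    refine ⟨(t.2, t.1), Finset.mem_filter.mpr ⟨Finset.mem_univ _, ?_⟩, rfl⟩
    rwa [Nat.add_comm]

lemma EmD_swap {N L1 L2 : ℕ} [NeZero (N * L1)] [NeZero (N * L2)]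
    (σ : ZMod (N * L1) × ZMod (N * L2) → Bool) :
    EmD L2 L1 (fun u : ZMod (N * L2) × ZMod (N * L1) => σ (u.2, u.1)) = EmD L1 L2 σ := by
  rw [EmD, EmD]
  apply Finset.card_bij (fun u _ => ((u.2, u.1) : ZMod (N * L1) × ZMod (N * L2)))
  · intro u hu
    simp only [Finset.mem_filter, Finset.mem_univ, true_and] at hu ⊢
    rwa [Nat.add_comm]
  · intro u _ u' _ h
    simp only [Prod.mk.injEq] at h
    exact Prod.ext h.2 h.1
  · intro t ht
    simp only [Finset.mem_filter, Finset.mem_univ, true_and] at ht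
    refine ⟨(t.2, t.1), Finset.mem_filter.mpr ⟨Finset.mem_univ _, ?_⟩, rfl⟩
    rwa [Nat.add_comm]

lemma swap_per1 {N L1 L2 : ℕ} [NeZero (N * L1)] [NeZero (N * L2)]
    (σ : ZMod (N * L1) × ZMod (N * L2) → Bool)
    (hper2 : ∀ t, σ (t + (0, ((2 * L2 : ℕ) : ZMod (N * L2)))) = σ t) :
    ∀ u : ZMod (N * L2) × ZMod (N * L1),
      (fun u : ZMod (N * L2) × ZMod (N * L1) => σ (u.2, u.1))
        (u + (((2 * L2 : ℕ) : ZMod (N * L2)), 0))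
      = σ (u.2, u.1) := by
  intro u
  simp only [Prod.fst_add, Prod.snd_add, add_zero]
  have := hper2 (u.2, u.1)
  rwa [prod_add_snd] at this

lemma swap_per2 {N L1 L2 : ℕ} [NeZero (N * L1)] [NeZero (N * L2)]
    (σ : ZMod (N * L1) × ZMod (N * L2) → Bool)
    (hper1 : ∀ t, σ (t + (((2 * L1 : ℕ) : ZMod (N * L1)), 0)) = σ t) :
    ∀ u : ZMod (N * L2) × ZMod (N * L1),
      (fun u : ZMod (N * L2) × ZMod (N * L1) => σ (u.2, u.1))
        (u + (0, ((2 * L1 : ℕ) : ZMod (N * L1))))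
      = σ (u.2, u.1) := by
  intro u
  simp only [Prod.fst_add, Prod.snd_add, add_zero]
  have := hper1 (u.2, u.1)
  rwa [prod_add_fst] at this

lemma B_lower {N L1 L2 : ℕ} [NeZero (N * L1)] [NeZero (N * L2)]
    (hL1 : 0 < L1) (hL2 : 0 < L2) (hN2 : 2 ≤ N) (hNe : Even N)
    (σ : ZMod (N * L1) × ZMod (N * L2) → Bool)
    (hper1 : ∀ t, σ (t + (((2 * L1 : ℕ) : ZMod (N * L1)), 0)) = σ t)
    (hper2 : ∀ t, σ (t + (0, ((2 * L2 : ℕ) : ZMod (N * L2)))) = σ t)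
    (hnc : ∃ t u, σ t ≠ σ u) :
    N * N ≤ BhD σ + BvD σ := by
  obtain ⟨m, hm⟩ := hNe
  set τ : ZMod (N * L2) × ZMod (N * L1) → Bool := fun u => σ (u.2, u.1) with hτ
  have hτper1 := swap_per1 σ hper2
  have hτper2 := swap_per2 σ hper1
  have hτnc : ∃ t u, τ t ≠ τ u := by
    obtain ⟨t, u, htu⟩ := hnc
    exact ⟨(t.2, t.1), (u.2, u.1), htu⟩
  by_cases hallcol : ∀ (x : ZMod (N * L1)) (y y' : ZMod (N * L2)), σ (x, y) = σ (x, y')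
  · have h := horiz_allcol hL1 hL2 hN2 ⟨m, hm⟩ σ hper1 hallcol hnc
    omega
  · push_neg at hallcol
    by_cases hallrow : ∀ (y : ZMod (N * L2)) (x x' : ZMod (N * L1)), σ (x, y) = σ (x', y)
    · -- σᵀ's columns are constant
      have hτallcol : ∀ (x : ZMod (N * L2)) (y y' : ZMod (N * L1)), τ (x, y) = τ (x, y') := by
        intro x y y'
        exact hallrow x y y'
      have h := horiz_allcol hL2 hL1 hN2 ⟨m, hm⟩ τ hτper1 hτallcol hτnc
      rw [BhD_swap] at h
      omega
    · push_neg at hallrow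
      obtain ⟨y₀, x, x', hx⟩ := hallrow
      have h1 := horiz_half hL1 hL2 hN2 ⟨m, hm⟩ σ hper1 hper2 m hm y₀ ⟨x, x', hx⟩
      obtain ⟨x₀, y, y', hy⟩ := hallcol
      have hτrow : ∃ p p', τ (p, x₀) ≠ τ (p', x₀) := ⟨y, y', hy⟩
      have h2 := horiz_half hL2 hL1 hN2 ⟨m, hm⟩ τ hτper1 hτper2 m hm x₀ hτrow
      rw [BhD_swap] at h2
      have : m * N + m * N = N * N := by rw [hm]; ring
      omega

lemma vert_iso {N L1 L2 : ℕ} [NeZero (N * L1)] [NeZero (N * L2)]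
    (hL1 : 0 < L1) (hL2 : 0 < L2) (hN2 : 2 ≤ N) (hNe : Even N)
    (σ : ZMod (N * L1) × ZMod (N * L2) → Bool)
    (hper2 : ∀ t, σ (t + (0, ((2 * L2 : ℕ) : ZMod (N * L2)))) = σ t) :
    2 * ((OmD L1 L2 σ : ℤ) - (EmD L1 L2 σ : ℤ)) ≤ (L2 : ℤ) * (BvD σ : ℤ) := by
  have h := horiz_iso hL2 hL1 hN2 hNe (fun u : ZMod (N * L2) × ZMod (N * L1) => σ (u.2, u.1))
    (swap_per1 σ hper2)
  rwa [BhD_swap, OmD_swap, EmD_swap] at h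

set_option maxHeartbeats 1000000 in
/-- if `h < 2J/L₁ + 2J/L₂`, every non-constant `(2L₁,0)`- and
`(0,2L₂)`-periodic configuration `σ` on `𝕋_N` satisfies
`e^{−βH_N(σ)} / Z_N(β) ≤ exp(−β·N²·(2J − h·L₁L₂/(L₁+L₂)))`. -/
theorem periodic_config_bound (L1 L2 N : ℕ) (hL1 : 0 < L1) (hL2 : 0 < L2)
    (hN : 2 ≤ N) (hNeven : Even N) [NeZero (N * L1)] [NeZero (N * L2)]
    (J h β : ℝ) (hJ : 0 < J) (hh : 0 < h) (hβ : 0 ≤ β)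
    (hcond : h < 2 * J / (L1 : ℝ) + 2 * J / (L2 : ℝ))
    (σ : ZMod (N * L1) × ZMod (N * L2) → Bool)
    (hnc : ∃ t u, σ t ≠ σ u)
    (hper1 : ∀ t, σ (t + (((2 * L1 : ℕ) : ZMod (N * L1)), 0)) = σ t)
    (hper2 : ∀ t, σ (t + (0, ((2 * L2 : ℕ) : ZMod (N * L2)))) = σ t) :
    Real.exp (-β * ham J (cellField L1 L2 h) σ) / Zfun (a := N * L1) (b := N * L2) β J (cellField L1 L2 h)
      ≤ Real.exp (-β * (N : ℝ) ^ 2 *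
          (2 * J - h * (L1 : ℝ) * (L2 : ℝ) / ((L1 : ℝ) + (L2 : ℝ)))) := by
  classical
  set hf : ZMod (N * L1) × ZMod (N * L2) → ℝ := cellField L1 L2 h with hhf
  set TT : ℕ := Fintype.card (ZMod (N * L1) × ZMod (N * L2)) with hTT
  -- pointwise spin identities
  have hspin2 : ∀ t u, spin σ t * spin σ u
      = 1 - 2 * (if σ t ≠ σ u then (1 : ℝ) else 0) := by
    intro t u
    cases h1 : σ t <;> cases h2 : σ u <;> simp [spin, h1, h2] <;> norm_num
  have hpt3 : ∀ t, hf t * spin σ t = hf t - 2 * (if σ t = false then hf t else 0) := by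
    intro t
    cases h1 : σ t <;> simp [spin, h1] <;> ring
  -- sum identities
  have hS1 : ∑ t, spin σ t * spin σ (t + (1, 0))
      = (TT : ℝ) - 2 * (BhD σ : ℝ) := by
    rw [Finset.sum_congr rfl fun t _ => hspin2 t (t + (1, 0))]
    rw [Finset.sum_sub_distrib, ← Finset.mul_sum, Finset.sum_boole, Finset.sum_const,
      Finset.card_univ, BhD]
    simp [hTT]
  have hS2 : ∑ t, spin σ t * spin σ (t + (0, 1))
      = (TT : ℝ) - 2 * (BvD σ : ℝ) := by
    rw [Finset.sum_congr rfl fun t _ => hspin2 t (t + (0, 1))]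
    rw [Finset.sum_sub_distrib, ← Finset.mul_sum, Finset.sum_boole, Finset.sum_const,
      Finset.card_univ, BvD]
    simp [hTT]
  have hS3 : ∑ t, hf t * spin σ t
      = (∑ t, hf t) - 2 * ∑ t ∈ univ.filter (fun t => σ t = false), hf t := by
    rw [Finset.sum_congr rfl fun t _ => hpt3 t]
    rw [Finset.sum_sub_distrib, ← Finset.mul_sum, ← Finset.sum_filter]
  have hS4 : ∑ t ∈ univ.filter (fun t => σ t = false), hf t
      = h * (EmD L1 L2 σ : ℝ) - h * (OmD L1 L2 σ : ℝ) := by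
    have : ∀ t ∈ univ.filter (fun t => σ t = false),
        hf t = if Even (t.1.val / L1 + t.2.val / L2) then h else -h := by
      intro t _; rfl
    rw [Finset.sum_congr rfl this, Finset.sum_ite, Finset.sum_const, Finset.sum_const,
      Finset.filter_filter, Finset.filter_filter]
    simp only [EmD, OmD, nsmul_eq_mul]
    ring
  -- Hamiltonian of σ and of the all-plus configuration
  have hHam : ham J hf σ
      = -J * ((2 * TT : ℝ) - 2 * (BhD σ : ℝ) - 2 * (BvD σ : ℝ))
        - ((∑ t, hf t) - 2 * (h * (EmD L1 L2 σ : ℝ) - h * (OmD L1 L2 σ : ℝ))) := by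
    rw [ham, Finset.sum_add_distrib, hS1, hS2, hS3, hS4]
    ring
  have hTop : ham J hf (fun _ => true) = -J * (2 * TT : ℝ) - ∑ t, hf t := by
    rw [ham]
    have h1 : ∀ t : ZMod (N * L1) × ZMod (N * L2),
        spin (fun _ => true) t * spin (fun _ => true) (t + (1, 0))
          + spin (fun _ => true) t * spin (fun _ => true) (t + (0, 1)) = 2 := by
      intro t; simp [spin]; norm_num
    have h2 : ∀ t : ZMod (N * L1) × ZMod (N * L2),
        hf t * spin (fun _ => true) t = hf t := by
      intro t; simp [spin]
    rw [Finset.sum_congr rfl fun t _ => h1 t, Finset.sum_congr rfl fun t _ => h2 t,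
      Finset.sum_const, Finset.card_univ, ← hTT, nsmul_eq_mul]
    ring
  set G : ℝ := 2 * J * ((BhD σ : ℝ) + (BvD σ : ℝ))
      + 2 * (h * (EmD L1 L2 σ : ℝ) - h * (OmD L1 L2 σ : ℝ)) with hG
  have hσtop : ham J hf σ = ham J hf (fun _ => true) + G := by
    rw [hHam, hTop, hG]; ring
  -- combinatorial bounds
  have hB := B_lower hL1 hL2 hN hNeven σ hper1 hper2 hnc
  have hI1 := horiz_iso hL1 hL2 hN hNeven σ hper1
  have hI2 := vert_iso hL1 hL2 hN hNeven σ hper2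
  -- real versions
  have hL1r : (0 : ℝ) < L1 := by exact_mod_cast hL1
  have hL2r : (0 : ℝ) < L2 := by exact_mod_cast hL2
  have hP : (0 : ℝ) < (L1 : ℝ) + L2 := by positivity
  have hQ : (0 : ℝ) < (L1 : ℝ) * L2 := by positivity
  have hBr : (N : ℝ) ^ 2 ≤ (BhD σ : ℝ) + (BvD σ : ℝ) := by
    rw [pow_two]
    exact_mod_cast hB
  have hI1r : 2 * ((OmD L1 L2 σ : ℝ) - (EmD L1 L2 σ : ℝ)) ≤ (L1 : ℝ) * (BhD σ : ℝ) := by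
    exact_mod_cast hI1
  have hI2r : 2 * ((OmD L1 L2 σ : ℝ) - (EmD L1 L2 σ : ℝ)) ≤ (L2 : ℝ) * (BvD σ : ℝ) := by
    exact_mod_cast hI2
  set D : ℝ := 2 * ((OmD L1 L2 σ : ℝ) - (EmD L1 L2 σ : ℝ)) with hD
  set Btot : ℝ := (BhD σ : ℝ) + (BvD σ : ℝ) with hBtot
  have hQB : ((L1 : ℝ) + L2) * D ≤ ((L1 : ℝ) * L2) * Btot := by
    have k1 := mul_le_mul_of_nonneg_left hI1r hL2r.le
    have k2 := mul_le_mul_of_nonneg_left hI2r hL1r.le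
    rw [hD, hBtot]
    nlinarith [k1, k2]
  have hcond' : h ≤ 2 * J * ((L1 : ℝ) + L2) / ((L1 : ℝ) * L2) := by
    have e : 2 * J / (L1 : ℝ) + 2 * J / (L2 : ℝ)
        = 2 * J * ((L1 : ℝ) + L2) / ((L1 : ℝ) * L2) := by
      field_simp
      ring
    rw [e] at hcond
    exact hcond.le
  set X : ℝ := (N : ℝ) ^ 2 * ((L1 : ℝ) * L2) / ((L1 : ℝ) + L2) with hX
  have hgapge : (N : ℝ) ^ 2 * (2 * J - h * (L1 : ℝ) * (L2 : ℝ) / ((L1 : ℝ) + (L2 : ℝ))) ≤ G := by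
    have hGD : G = 2 * J * Btot - h * D := by rw [hG, hBtot, hD]; ring
    have hgoal : (N : ℝ) ^ 2 * (2 * J - h * (L1 : ℝ) * (L2 : ℝ) / ((L1 : ℝ) + (L2 : ℝ)))
        = 2 * J * (N : ℝ) ^ 2 - h * X := by rw [hX]; ring
    rw [hGD, hgoal]
    by_cases hcase : D ≤ X
    · have p1 : 2 * J * (N : ℝ) ^ 2 ≤ 2 * J * Btot :=
        mul_le_mul_of_nonneg_left hBr (by positivity)
      have p2 : h * D ≤ h * X := mul_le_mul_of_nonneg_left hcase hh.le
      linarith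
    · push_neg at hcase
      set c : ℝ := 2 * J * ((L1 : ℝ) + L2) / ((L1 : ℝ) * L2) with hc
      have k0 : h * (D - X) ≤ c * (D - X) :=
        mul_le_mul_of_nonneg_right hcond' (by linarith)
      have ecX : c * X = 2 * J * (N : ℝ) ^ 2 := by
        rw [hc, hX]
        field_simp
      have k2 : c * D ≤ 2 * J * Btot := by
        have q2 := mul_le_mul_of_nonneg_left hQB
          (le_of_lt (by positivity : (0 : ℝ) < 2 * J / ((L1 : ℝ) * L2)))
        have e1 : (2 * J / ((L1 : ℝ) * L2)) * (((L1 : ℝ) * L2) * Btot) = 2 * J * Btot := by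
          field_simp
        have e2 : (2 * J / ((L1 : ℝ) * L2)) * (((L1 : ℝ) + L2) * D) = c * D := by
          rw [hc]; ring
        linarith
      linarith [k0, k2, ecX]
  -- partition function bound
  have hZ : Real.exp (-β * ham J hf (fun _ => true)) ≤ Zfun β J hf :=
    Finset.single_le_sum (f := fun s => Real.exp (-β * ham J hf s))
      (fun s _ => (Real.exp_pos _).le) (Finset.mem_univ (fun _ => true))
  have hZpos : 0 < Zfun (a := N * L1) (b := N * L2) β J hf :=
    lt_of_lt_of_le (Real.exp_pos _) hZ
  calc Real.exp (-β * ham J hf σ) / Zfun β J hf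
      ≤ Real.exp (-β * ham J hf σ) / Real.exp (-β * ham J hf (fun _ => true)) :=
        div_le_div_of_nonneg_left (Real.exp_pos _).le (Real.exp_pos _) hZ
  _ = Real.exp (-β * ham J hf σ - (-β * ham J hf (fun _ => true))) := (Real.exp_sub _ _).symm
  _ ≤ Real.exp (-β * (N : ℝ) ^ 2 *
        (2 * J - h * (L1 : ℝ) * (L2 : ℝ) / ((L1 : ℝ) + (L2 : ℝ)))) := by
      apply Real.exp_le_exp.mpr
      rw [hσtop]
      have h5 := mul_le_mul_of_nonneg_left hgapge hβ
      nlinarith [h5]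
end
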